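/- arXiv:1609.03060 — 6 statements merged into one kernel-verified Lean document; each statement's English description precedes it below -/
import Mathlib

section
/- Assume condition (C) holds and n/√(m_n) → 0 as n → ∞ (with m_n → ∞). Then (χ²_n − m_n)/√(2 m_n) converges to 0 in probability. -/
open MeasureTheory ProbabilityTheory Filter
open scoped BoundedContinuousFunction

noncomputable def empFreq {Ω : Type*} (X : ℕ → ℕ → Ω → ℕ) (n i : ℕ) (ω : Ω) : ℝ :=
  (n : ℝ)⁻¹ * ∑ k ∈ Finset.Icc 1 n, (if X n k ω = i then (1 : ℝ) else 0)

/-- The Pearson chi-square statistic. -/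
noncomputable def chiSq {Ω : Type*} (m : ℕ → ℕ) (p : ℕ → ℕ → ℝ) (X : ℕ → ℕ → Ω → ℕ)
    (n : ℕ) (ω : Ω) : ℝ :=
  (n : ℝ) * ∑ i ∈ Finset.Icc 1 (m n), (empFreq X n i ω - p n i) ^ 2 / p n i

set_option linter.unusedSectionVars false

section Aux

variable {Ω : Type*} [MeasurableSpace Ω] {μ : Measure Ω} [IsProbabilityMeasure μ]
  {m : ℕ → ℕ} {p : ℕ → ℕ → ℝ} {X : ℕ → ℕ → Ω → ℕ} {n : ℕ}

/-- Expectation of `g ∘ X n k`. -/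
lemma integral_comp_X
    (hp_pos : ∀ i ∈ Finset.Icc 1 (m n), 0 < p n i)
    (hX_meas : ∀ k, Measurable (X n k))
    (hX_range : ∀ k ω, X n k ω ∈ Finset.Icc 1 (m n))
    (hX_law : ∀ k, ∀ i ∈ Finset.Icc 1 (m n), μ (X n k ⁻¹' {i}) = ENNReal.ofReal (p n i))
    (g : ℕ → ℝ) (k : ℕ) :
    ∫ ω, g (X n k ω) ∂μ = ∑ i ∈ Finset.Icc 1 (m n), p n i * g i := by
  have hpt : ∀ ω, g (X n k ω) = ∑ i ∈ Finset.Icc 1 (m n),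
      Set.indicator (X n k ⁻¹' {i}) (fun _ => g i) ω := by
    intro ω
    have : ∀ i, Set.indicator (X n k ⁻¹' {i}) (fun _ => g i) ω
        = if X n k ω = i then g i else 0 := by
      intro i
      by_cases h : X n k ω = i <;> simp [Set.indicator_apply, Set.mem_preimage, h]
    simp_rw [this]
    rw [Finset.sum_ite_eq (Finset.Icc 1 (m n)) (X n k ω) (fun i => g i)]
    simp [hX_range k ω]
  calc ∫ ω, g (X n k ω) ∂μ
      = ∫ ω, ∑ i ∈ Finset.Icc 1 (m n),
        Set.indicator (X n k ⁻¹' {i}) (fun _ => g i) ω ∂μ := by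
        simp_rw [← hpt]
    _ = ∑ i ∈ Finset.Icc 1 (m n),
        ∫ ω, Set.indicator (X n k ⁻¹' {i}) (fun _ => g i) ω ∂μ := by
        refine integral_finset_sum _ fun i _ => ?_
        exact (integrable_const (g i)).indicator (hX_meas k (measurableSet_singleton i))
    _ = ∑ i ∈ Finset.Icc 1 (m n), p n i * g i := by
        refine Finset.sum_congr rfl fun i hi => ?_
        rw [integral_indicator_const (g i) (hX_meas k (measurableSet_singleton i)),
          measureReal_def, hX_law k i hi, ENNReal.toReal_ofReal (hp_pos i hi).le, smul_eq_mul]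

end Aux

section Aux2

variable {Ω : Type*} [MeasurableSpace Ω] {μ : Measure Ω} [IsProbabilityMeasure μ]
  {m : ℕ → ℕ} {p : ℕ → ℕ → ℝ} {X : ℕ → ℕ → Ω → ℕ} {n : ℕ}

/-- Pointwise decomposition of the pair term into indicators. -/
lemma pair_pt
    (hX_range : ∀ k ω, X n k ω ∈ Finset.Icc 1 (m n)) (k l : ℕ) (ω : Ω) :
    (if X n k ω = X n l ω then (p n (X n k ω))⁻¹ else 0)
      = ∑ i ∈ Finset.Icc 1 (m n),
        Set.indicator (X n k ⁻¹' {i} ∩ X n l ⁻¹' {i}) (fun _ => (p n i)⁻¹) ω := by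
  have hterm : ∀ i, Set.indicator (X n k ⁻¹' {i} ∩ X n l ⁻¹' {i}) (fun _ => (p n i)⁻¹) ω
      = if X n k ω = i ∧ X n l ω = i then (p n i)⁻¹ else 0 := by
    intro i
    by_cases h : X n k ω = i ∧ X n l ω = i <;>
      simp [Set.indicator_apply, Set.mem_inter_iff, Set.mem_preimage, h]
  simp_rw [hterm]
  by_cases h : X n k ω = X n l ω
  · rw [if_pos h]
    rw [Finset.sum_eq_single_of_mem (X n k ω) (hX_range k ω)]
    · simp [← h]
    · intro b _ hb
      rw [if_neg]
      rintro ⟨h1, -⟩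
      exact hb h1.symm
  · rw [if_neg h]
    refine (Finset.sum_eq_zero fun i _ => ?_).symm
    rw [if_neg]
    rintro ⟨h1, h2⟩
    exact h (h1.trans h2.symm)

/-- Expectation of the pair term for `k ≠ l`. -/
lemma integral_pairTerm
    (hp_pos : ∀ i ∈ Finset.Icc 1 (m n), 0 < p n i)
    (hp_sum : ∑ i ∈ Finset.Icc 1 (m n), p n i = 1)
    (hX_meas : ∀ k, Measurable (X n k))
    (hX_range : ∀ k ω, X n k ω ∈ Finset.Icc 1 (m n))
    (hX_law : ∀ k, ∀ i ∈ Finset.Icc 1 (m n), μ (X n k ⁻¹' {i}) = ENNReal.ofReal (p n i))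
    (hX_indep : iIndepFun (X n) μ)
    {k l : ℕ} (hkl : k ≠ l) :
    ∫ ω, (if X n k ω = X n l ω then (p n (X n k ω))⁻¹ else 0) ∂μ = 1 := by
  simp_rw [pair_pt hX_range k l]
  rw [integral_finset_sum _ fun i _ => (integrable_const ((p n i)⁻¹)).indicator
    ((hX_meas k (measurableSet_singleton i)).inter (hX_meas l (measurableSet_singleton i)))]
  rw [← hp_sum]
  refine Finset.sum_congr rfl fun i hi => ?_
  rw [integral_indicator_const ((p n i)⁻¹)
    ((hX_meas k (measurableSet_singleton i)).inter (hX_meas l (measurableSet_singleton i)))]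
  have hinter : μ (X n k ⁻¹' {i} ∩ X n l ⁻¹' {i})
      = ENNReal.ofReal (p n i) * ENNReal.ofReal (p n i) := by
    rw [(hX_indep.indepFun hkl).measure_inter_preimage_eq_mul _ _
      (measurableSet_singleton i) (measurableSet_singleton i),
      hX_law k i hi, hX_law l i hi]
  rw [measureReal_def, hinter, ← ENNReal.ofReal_mul (hp_pos i hi).le, ENNReal.toReal_ofReal
    (mul_nonneg (hp_pos i hi).le (hp_pos i hi).le), smul_eq_mul]
  field_simp

/-- Integrability of the pair term. -/
lemma integrable_pair
    (hX_meas : ∀ k, Measurable (X n k))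
    (hX_range : ∀ k ω, X n k ω ∈ Finset.Icc 1 (m n)) (k l : ℕ) :
    Integrable (fun ω => if X n k ω = X n l ω then (p n (X n k ω))⁻¹ else 0) μ := by
  have : (fun ω => if X n k ω = X n l ω then (p n (X n k ω))⁻¹ else 0)
      = fun ω => ∑ i ∈ Finset.Icc 1 (m n),
        Set.indicator (X n k ⁻¹' {i} ∩ X n l ⁻¹' {i}) (fun _ => (p n i)⁻¹) ω := by
    funext ω; exact pair_pt hX_range k l ω
  rw [this]
  exact integrable_finset_sum _ fun i _ => (integrable_const ((p n i)⁻¹)).indicator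
    ((hX_meas k (measurableSet_singleton i)).inter (hX_meas l (measurableSet_singleton i)))

end Aux2

section Aux3

variable {Ω : Type*} [MeasurableSpace Ω] {μ : Measure Ω} [IsProbabilityMeasure μ]
  {m : ℕ → ℕ} {p : ℕ → ℕ → ℝ} {X : ℕ → ℕ → Ω → ℕ} {n : ℕ}

lemma memLp_comp_X
    (hX_meas : ∀ k, Measurable (X n k))
    (hX_range : ∀ k ω, X n k ω ∈ Finset.Icc 1 (m n))
    (g : ℕ → ℝ) (k : ℕ) (q : ENNReal) :
    MemLp (fun ω => g (X n k ω)) q μ := by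
  refine MemLp.of_bound ((measurable_of_countable g).comp (hX_meas k)).aestronglyMeasurable
    (∑ i ∈ Finset.Icc 1 (m n), |g i|) (ae_of_all _ fun ω => ?_)
  rw [Real.norm_eq_abs]
  exact Finset.single_le_sum (f := fun i => |g i|) (fun i _ => abs_nonneg (g i)) (hX_range k ω)

lemma integral_Y
    (hp_pos : ∀ i ∈ Finset.Icc 1 (m n), 0 < p n i)
    (hX_meas : ∀ k, Measurable (X n k))
    (hX_range : ∀ k ω, X n k ω ∈ Finset.Icc 1 (m n))
    (hX_law : ∀ k, ∀ i ∈ Finset.Icc 1 (m n), μ (X n k ⁻¹' {i}) = ENNReal.ofReal (p n i))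
    (k : ℕ) :
    ∫ ω, (p n (X n k ω))⁻¹ ∂μ = (m n : ℝ) := by
  rw [integral_comp_X hp_pos hX_meas hX_range hX_law (fun i => (p n i)⁻¹) k]
  have : ∀ i ∈ Finset.Icc 1 (m n), p n i * (p n i)⁻¹ = 1 := fun i hi =>
    mul_inv_cancel₀ (hp_pos i hi).ne'
  rw [Finset.sum_congr rfl this, Finset.sum_const, Nat.card_Icc]
  simp

lemma variance_Y
    (hp_pos : ∀ i ∈ Finset.Icc 1 (m n), 0 < p n i)
    (hX_meas : ∀ k, Measurable (X n k))
    (hX_range : ∀ k ω, X n k ω ∈ Finset.Icc 1 (m n))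
    (hX_law : ∀ k, ∀ i ∈ Finset.Icc 1 (m n), μ (X n k ⁻¹' {i}) = ENNReal.ofReal (p n i))
    (k : ℕ) :
    variance (fun ω => (p n (X n k ω))⁻¹) μ
      = (∑ i ∈ Finset.Icc 1 (m n), (p n i)⁻¹) - (m n : ℝ) ^ 2 := by
  rw [variance_eq_sub (memLp_comp_X hX_meas hX_range (fun i => (p n i)⁻¹) k 2)]
  have h2 : (fun ω => (p n (X n k ω))⁻¹) ^ 2 = fun ω => ((p n (X n k ω))⁻¹) ^ 2 := by
    funext ω; simp [pow_two]
  rw [h2]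
  have := integral_comp_X (μ := μ) hp_pos hX_meas hX_range hX_law
    (fun i => ((p n i)⁻¹) ^ 2) k
  rw [this, integral_Y hp_pos hX_meas hX_range hX_law k]
  congr 1
  refine Finset.sum_congr rfl fun i hi => ?_
  have hne := (hp_pos i hi).ne'
  field_simp

end Aux3

section Aux4

variable {Ω : Type*} [MeasurableSpace Ω] {μ : Measure Ω} [IsProbabilityMeasure μ]
  {m : ℕ → ℕ} {p : ℕ → ℕ → ℝ} {X : ℕ → ℕ → Ω → ℕ} {n : ℕ}

lemma D_eq_smul_sum :
    (fun ω => (n : ℝ)⁻¹ * ∑ k ∈ Finset.Icc 1 n, (p n (X n k ω))⁻¹)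
      = (n : ℝ)⁻¹ • ∑ k ∈ Finset.Icc 1 n, (fun ω => (p n (X n k ω))⁻¹) := by
  funext ω
  simp [Finset.sum_apply]

lemma memLp_D (hX_meas : ∀ k, Measurable (X n k))
    (hX_range : ∀ k ω, X n k ω ∈ Finset.Icc 1 (m n)) (q : ENNReal) :
    MemLp (fun ω => (n : ℝ)⁻¹ * ∑ k ∈ Finset.Icc 1 n, (p n (X n k ω))⁻¹) q μ := by
  rw [D_eq_smul_sum]
  exact (memLp_finset_sum' _ fun k _ =>
    memLp_comp_X hX_meas hX_range (fun i => (p n i)⁻¹) k q).const_smul _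

lemma integral_D (hn : 1 ≤ n)
    (hp_pos : ∀ i ∈ Finset.Icc 1 (m n), 0 < p n i)
    (hX_meas : ∀ k, Measurable (X n k))
    (hX_range : ∀ k ω, X n k ω ∈ Finset.Icc 1 (m n))
    (hX_law : ∀ k, ∀ i ∈ Finset.Icc 1 (m n), μ (X n k ⁻¹' {i}) = ENNReal.ofReal (p n i)) :
    ∫ ω, (n : ℝ)⁻¹ * ∑ k ∈ Finset.Icc 1 n, (p n (X n k ω))⁻¹ ∂μ = (m n : ℝ) := by
  have hnR : (n : ℝ) ≠ 0 := by positivity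
  rw [integral_const_mul]
  rw [integral_finset_sum _ fun k _ =>
    (memLp_comp_X hX_meas hX_range (fun i => (p n i)⁻¹) k 1).integrable le_rfl]
  have : ∀ k ∈ Finset.Icc 1 n, ∫ ω, (p n (X n k ω))⁻¹ ∂μ = (m n : ℝ) := fun k _ =>
    integral_Y hp_pos hX_meas hX_range hX_law k
  rw [Finset.sum_congr rfl this, Finset.sum_const, Nat.card_Icc]
  simp
  field_simp

lemma variance_D (hn : 1 ≤ n)
    (hp_pos : ∀ i ∈ Finset.Icc 1 (m n), 0 < p n i)
    (hX_meas : ∀ k, Measurable (X n k))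
    (hX_range : ∀ k ω, X n k ω ∈ Finset.Icc 1 (m n))
    (hX_law : ∀ k, ∀ i ∈ Finset.Icc 1 (m n), μ (X n k ⁻¹' {i}) = ENNReal.ofReal (p n i))
    (hX_indep : iIndepFun (X n) μ) :
    variance (fun ω => (n : ℝ)⁻¹ * ∑ k ∈ Finset.Icc 1 n, (p n (X n k ω))⁻¹) μ
      = variance (fun ω => (p n (X n 1 ω))⁻¹) μ / n := by
  have hnR : (n : ℝ) ≠ 0 := by positivity
  rw [D_eq_smul_sum, variance_smul]
  have hcomp : iIndepFun
      (fun k => (fun j => (p n j)⁻¹) ∘ (X n k)) μ :=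
    hX_indep.comp _ fun k => measurable_of_countable _
  rw [IndepFun.variance_sum (fun k _ =>
      memLp_comp_X hX_meas hX_range (fun i => (p n i)⁻¹) k 2)
    (fun k _ l _ hkl => hcomp.indepFun hkl)]
  have : ∀ k ∈ Finset.Icc 1 n, variance (fun ω => (p n (X n k ω))⁻¹) μ
      = variance (fun ω => (p n (X n 1 ω))⁻¹) μ := fun k _ => by
    rw [variance_Y hp_pos hX_meas hX_range hX_law k,
      variance_Y hp_pos hX_meas hX_range hX_law 1]
  rw [Finset.sum_congr rfl this, Finset.sum_const, Nat.card_Icc]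
  simp only [Nat.add_sub_cancel, nsmul_eq_mul]
  field_simp

end Aux4

section Aux5

variable {Ω : Type*} [MeasurableSpace Ω] {μ : Measure Ω} [IsProbabilityMeasure μ]
  {m : ℕ → ℕ} {p : ℕ → ℕ → ℝ} {X : ℕ → ℕ → Ω → ℕ} {n : ℕ}

lemma key_inner
    (hp_pos : ∀ i ∈ Finset.Icc 1 (m n), 0 < p n i)
    {a b : ℕ} (ha : a ∈ Finset.Icc 1 (m n)) :
    ∑ i ∈ Finset.Icc 1 (m n),
      ((if a = i then (1:ℝ) else 0) * (if b = i then (1:ℝ) else 0)) / p n i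
      = if a = b then (p n a)⁻¹ else 0 := by
  rw [Finset.sum_eq_single_of_mem a ha]
  · by_cases h : a = b
    · simp [← h]
    · have : b ≠ a := fun hba => h hba.symm
      simp [h, this]
  · intro i _ hia
    have : a ≠ i := fun hai => hia hai.symm
    simp [this]

lemma sum_empFreq (hn : 1 ≤ n)
    (hX_range : ∀ k ω, X n k ω ∈ Finset.Icc 1 (m n)) (ω : Ω) :
    ∑ i ∈ Finset.Icc 1 (m n), empFreq X n i ω = 1 := by
  have hnR : (n : ℝ) ≠ 0 := by positivity
  simp only [empFreq]
  rw [← Finset.mul_sum, Finset.sum_comm]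
  have : ∀ k ∈ Finset.Icc 1 n,
      ∑ i ∈ Finset.Icc 1 (m n), (if X n k ω = i then (1:ℝ) else 0) = 1 := by
    intro k _
    rw [Finset.sum_ite_eq (Finset.Icc 1 (m n)) (X n k ω) (fun _ => (1:ℝ))]
    simp [hX_range k ω]
  rw [Finset.sum_congr rfl this, Finset.sum_const, Nat.card_Icc]
  simp
  field_simp

/-- The decomposition `χ²_n = D + O - n`. -/
lemma chiSq_decomp (hn : 1 ≤ n)
    (hp_pos : ∀ i ∈ Finset.Icc 1 (m n), 0 < p n i)
    (hp_sum : ∑ i ∈ Finset.Icc 1 (m n), p n i = 1)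
    (hX_range : ∀ k ω, X n k ω ∈ Finset.Icc 1 (m n)) (ω : Ω) :
    chiSq m p X n ω
      = (n : ℝ)⁻¹ * ∑ k ∈ Finset.Icc 1 n, (p n (X n k ω))⁻¹
        + (n : ℝ)⁻¹ * ∑ k ∈ Finset.Icc 1 n, ∑ l ∈ (Finset.Icc 1 n).erase k,
            (if X n k ω = X n l ω then (p n (X n k ω))⁻¹ else 0)
        - n := by
  have hnR : (n : ℝ) ≠ 0 := by positivity
  have step1 : ∀ i ∈ Finset.Icc 1 (m n),
      (empFreq X n i ω - p n i) ^ 2 / p n i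
        = empFreq X n i ω ^ 2 / p n i - 2 * empFreq X n i ω + p n i := by
    intro i hi
    have hpi := (hp_pos i hi).ne'
    field_simp
    ring
  have step2 : chiSq m p X n ω
      = (n : ℝ) * (∑ i ∈ Finset.Icc 1 (m n), empFreq X n i ω ^ 2 / p n i) - n := by
    rw [chiSq, Finset.sum_congr rfl step1]
    rw [Finset.sum_add_distrib, Finset.sum_sub_distrib, ← Finset.mul_sum,
      sum_empFreq hn hX_range ω, hp_sum]
    ring
  -- now expand the quadratic term
  have hsq : ∀ i, empFreq X n i ω ^ 2
      = (n : ℝ)⁻¹ * (n : ℝ)⁻¹ * ∑ k ∈ Finset.Icc 1 n, ∑ l ∈ Finset.Icc 1 n,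
          ((if X n k ω = i then (1:ℝ) else 0) * (if X n l ω = i then (1:ℝ) else 0)) := by
    intro i
    rw [empFreq, pow_two, ← Finset.sum_mul_sum]
    ring
  have step3 : ∑ i ∈ Finset.Icc 1 (m n), empFreq X n i ω ^ 2 / p n i
      = (n : ℝ)⁻¹ * (n : ℝ)⁻¹ * ∑ k ∈ Finset.Icc 1 n, ∑ l ∈ Finset.Icc 1 n,
          (if X n k ω = X n l ω then (p n (X n k ω))⁻¹ else 0) := by
    simp_rw [hsq, mul_div_assoc]
    rw [← Finset.mul_sum]
    congr 1
    simp_rw [Finset.sum_div]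
    rw [Finset.sum_comm]
    refine Finset.sum_congr rfl fun k _ => ?_
    rw [Finset.sum_comm]
    refine Finset.sum_congr rfl fun l _ => ?_
    exact key_inner hp_pos (hX_range k ω)
  have hdiag : ∀ k ∈ Finset.Icc 1 n,
      ∑ l ∈ Finset.Icc 1 n, (if X n k ω = X n l ω then (p n (X n k ω))⁻¹ else 0)
        = (p n (X n k ω))⁻¹ + ∑ l ∈ (Finset.Icc 1 n).erase k,
            (if X n k ω = X n l ω then (p n (X n k ω))⁻¹ else 0) := by
    intro k hk
    rw [← Finset.add_sum_erase _ _ hk, if_pos rfl]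
  rw [step2, step3, Finset.sum_congr rfl hdiag, Finset.sum_add_distrib]
  field_simp

end Aux5

section Aux6

variable {Ω : Type*} [MeasurableSpace Ω] {μ : Measure Ω} [IsProbabilityMeasure μ]
  {m : ℕ → ℕ} {p : ℕ → ℕ → ℝ} {X : ℕ → ℕ → Ω → ℕ} {n : ℕ}

lemma integrable_O
    (hX_meas : ∀ k, Measurable (X n k))
    (hX_range : ∀ k ω, X n k ω ∈ Finset.Icc 1 (m n)) :
    Integrable (fun ω => (n : ℝ)⁻¹ * ∑ k ∈ Finset.Icc 1 n, ∑ l ∈ (Finset.Icc 1 n).erase k,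
      (if X n k ω = X n l ω then (p n (X n k ω))⁻¹ else 0)) μ := by
  refine Integrable.const_mul ?_ _
  exact integrable_finset_sum _ fun k _ => integrable_finset_sum _ fun l _ =>
    integrable_pair hX_meas hX_range k l

lemma O_nonneg
    (hp_pos : ∀ i ∈ Finset.Icc 1 (m n), 0 < p n i)
    (hX_range : ∀ k ω, X n k ω ∈ Finset.Icc 1 (m n)) (ω : Ω) :
    0 ≤ (n : ℝ)⁻¹ * ∑ k ∈ Finset.Icc 1 n, ∑ l ∈ (Finset.Icc 1 n).erase k,
      (if X n k ω = X n l ω then (p n (X n k ω))⁻¹ else 0) := by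
  refine mul_nonneg (by positivity) (Finset.sum_nonneg fun k _ =>
    Finset.sum_nonneg fun l _ => ?_)
  split
  · exact (inv_nonneg).2 (hp_pos _ (hX_range k ω)).le
  · exact le_refl 0

lemma integral_O (hn : 1 ≤ n)
    (hp_pos : ∀ i ∈ Finset.Icc 1 (m n), 0 < p n i)
    (hp_sum : ∑ i ∈ Finset.Icc 1 (m n), p n i = 1)
    (hX_meas : ∀ k, Measurable (X n k))
    (hX_range : ∀ k ω, X n k ω ∈ Finset.Icc 1 (m n))
    (hX_law : ∀ k, ∀ i ∈ Finset.Icc 1 (m n), μ (X n k ⁻¹' {i}) = ENNReal.ofReal (p n i))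
    (hX_indep : iIndepFun (X n) μ) :
    ∫ ω, (n : ℝ)⁻¹ * ∑ k ∈ Finset.Icc 1 n, ∑ l ∈ (Finset.Icc 1 n).erase k,
      (if X n k ω = X n l ω then (p n (X n k ω))⁻¹ else 0) ∂μ = (n : ℝ) - 1 := by
  have hnR : (n : ℝ) ≠ 0 := by positivity
  rw [integral_const_mul, integral_finset_sum _ fun k _ => integrable_finset_sum _
    fun l _ => integrable_pair hX_meas hX_range k l]
  have : ∀ k ∈ Finset.Icc 1 n,
      ∫ ω, ∑ l ∈ (Finset.Icc 1 n).erase k,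
        (if X n k ω = X n l ω then (p n (X n k ω))⁻¹ else 0) ∂μ = (n : ℝ) - 1 := by
    intro k hk
    rw [integral_finset_sum _ fun l _ => integrable_pair hX_meas hX_range k l]
    have h1 : ∀ l ∈ (Finset.Icc 1 n).erase k,
        ∫ ω, (if X n k ω = X n l ω then (p n (X n k ω))⁻¹ else 0) ∂μ = 1 := by
      intro l hl
      exact integral_pairTerm hp_pos hp_sum hX_meas hX_range hX_law hX_indep
        (Finset.ne_of_mem_erase hl).symm
    rw [Finset.sum_congr rfl h1, Finset.sum_const, Finset.card_erase_of_mem hk,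
      Nat.card_Icc]
    simp only [Nat.add_sub_cancel, nsmul_eq_mul, mul_one]
    rw [Nat.cast_sub hn, Nat.cast_one]
  rw [Finset.sum_congr rfl this, Finset.sum_const, Nat.card_Icc]
  simp only [Nat.add_sub_cancel, nsmul_eq_mul]
  field_simp

lemma markov_bound {g : Ω → ℝ} (hg : ∀ ω, 0 ≤ g ω) (hint : Integrable g μ)
    {c : ℝ} (hc : 0 < c) :
    μ {ω | c ≤ g ω} ≤ ENNReal.ofReal ((∫ ω, g ω ∂μ) / c) := by
  have h := mul_meas_ge_le_integral_of_nonneg (ae_of_all _ hg) hint c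
  have hfin : μ {ω | c ≤ g ω} ≠ ⊤ := measure_ne_top _ _
  have h2 : (μ {ω | c ≤ g ω}).toReal ≤ (∫ ω, g ω ∂μ) / c := by
    rw [le_div_iff₀ hc]
    rw [measureReal_def] at h
    linarith [h]
  calc μ {ω | c ≤ g ω} = ENNReal.ofReal ((μ {ω | c ≤ g ω}).toReal) :=
        (ENNReal.ofReal_toReal hfin).symm
    _ ≤ ENNReal.ofReal ((∫ ω, g ω ∂μ) / c) := ENNReal.ofReal_le_ofReal h2

end Aux6


theorem chisq_degenerate_limit
    {Ω : Type*} [MeasurableSpace Ω] (μ : Measure Ω) [IsProbabilityMeasure μ]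
    (m : ℕ → ℕ) (p : ℕ → ℕ → ℝ) (X : ℕ → ℕ → Ω → ℕ)
    (hp_pos : ∀ n : ℕ, ∀ i ∈ Finset.Icc 1 (m n), 0 < p n i)
    (hp_sum : ∀ n : ℕ, ∑ i ∈ Finset.Icc 1 (m n), p n i = 1)
    (hX_meas : ∀ n k, Measurable (X n k))
    (hX_range : ∀ n k ω, X n k ω ∈ Finset.Icc 1 (m n))
    (hX_law : ∀ n k, ∀ i ∈ Finset.Icc 1 (m n), μ (X n k ⁻¹' {i}) = ENNReal.ofReal (p n i))
    (hX_indep : ∀ n : ℕ, iIndepFun (X n) μ)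
    (hm : Filter.Tendsto m Filter.atTop Filter.atTop)
    (hC : Filter.Tendsto (fun n : ℕ => ((m n : ℝ) * (n : ℝ))⁻¹ *
        ProbabilityTheory.variance (fun ω => (p n (X n 1 ω))⁻¹) μ) Filter.atTop (nhds 0))
    (hrate : Filter.Tendsto (fun n : ℕ => (n : ℝ) / Real.sqrt (m n)) Filter.atTop (nhds 0))
    :
    MeasureTheory.TendstoInMeasure μ
      (fun n ω => (chiSq m p X n ω - (m n : ℝ)) / Real.sqrt (2 * (m n : ℝ)))
      Filter.atTop (fun _ => (0 : ℝ)) := by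
  rw [tendstoInMeasure_iff_dist]
  intro ε hε
  have hε' : (ε : ℝ) ≠ 0 := hε.ne'
  have hbound : Tendsto (fun n => ENNReal.ofReal ((2 / ε ^ 2) *
        (((m n : ℝ) * (n : ℝ))⁻¹ * variance (fun ω => (p n (X n 1 ω))⁻¹) μ))
      + ENNReal.ofReal ((4 / (ε * Real.sqrt 2)) * ((n : ℝ) / Real.sqrt (m n))))
      atTop (nhds 0) := by
    have h1 := hC.const_mul (2 / ε ^ 2)
    have h2 := hrate.const_mul (4 / (ε * Real.sqrt 2))
    rw [mul_zero] at h1 h2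
    have := (ENNReal.tendsto_ofReal h1).add (ENNReal.tendsto_ofReal h2)
    simpa using this
  refine tendsto_of_tendsto_of_tendsto_of_le_of_le' tendsto_const_nhds hbound
    (Eventually.of_forall fun n => zero_le) ?_
  filter_upwards [hm.eventually_ge_atTop 1, eventually_ge_atTop 1] with n hmn hn
  -- notation
  have hnR : (0 : ℝ) < n := by exact_mod_cast hn
  have hmR : (0 : ℝ) < m n := by exact_mod_cast hmn
  have hs2 : (0 : ℝ) < Real.sqrt (2 * m n) := Real.sqrt_pos.2 (by positivity)
  set D : Ω → ℝ := fun ω => (n : ℝ)⁻¹ * ∑ k ∈ Finset.Icc 1 n, (p n (X n k ω))⁻¹ with hD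
  set O : Ω → ℝ := fun ω => (n : ℝ)⁻¹ * ∑ k ∈ Finset.Icc 1 n,
      ∑ l ∈ (Finset.Icc 1 n).erase k,
        (if X n k ω = X n l ω then (p n (X n k ω))⁻¹ else 0) with hO
  set c : ℝ := ε / 2 * Real.sqrt (2 * m n) with hc
  have hcpos : 0 < c := by positivity
  have hintD : ∫ ω, D ω ∂μ = (m n : ℝ) :=
    integral_D hn (hp_pos n) (hX_meas n) (hX_range n) (hX_law n)
  -- set inclusion
  have hsub : {x | ε ≤ dist ((chiSq m p X n x - (m n : ℝ)) / Real.sqrt (2 * (m n : ℝ))) 0}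
      ⊆ {ω | c ≤ |D ω - ∫ ω', D ω' ∂μ|} ∪ {ω | c ≤ O ω + n} := by
    intro ω hω
    simp only [Set.mem_setOf_eq, Real.dist_0_eq_abs] at hω
    rw [hintD]
    by_contra hcon
    simp only [Set.mem_union, Set.mem_setOf_eq, not_or, not_le] at hcon
    obtain ⟨h1, h2⟩ := hcon
    have hOnn : 0 ≤ O ω := O_nonneg (hp_pos n) (hX_range n) ω
    have hdec := chiSq_decomp hn (hp_pos n) (hp_sum n) (hX_range n) ω
    have habs : |chiSq m p X n ω - (m n : ℝ)| ≤ |D ω - (m n : ℝ)| + |O ω - n| := by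
      rw [hdec]
      have : D ω + O ω - (n:ℝ) - (m n : ℝ) = (D ω - m n) + (O ω - n) := by ring
      rw [show (D ω + O ω - (n:ℝ)) - (m n : ℝ) = (D ω - m n) + (O ω - n) by ring]
      exact abs_add_le _ _
    have hOn : |O ω - n| ≤ O ω + n := by
      have := abs_sub (O ω) (n : ℝ)
      calc |O ω - n| ≤ |O ω| + |(n:ℝ)| := abs_sub _ _
        _ = O ω + n := by rw [abs_of_nonneg hOnn, abs_of_nonneg hnR.le]
    have hlt : |chiSq m p X n ω - (m n : ℝ)| < ε * Real.sqrt (2 * m n) := by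
      calc |chiSq m p X n ω - (m n : ℝ)| ≤ |D ω - (m n : ℝ)| + |O ω - n| := habs
        _ ≤ |D ω - (m n : ℝ)| + (O ω + n) := by linarith
        _ < c + c := by linarith
        _ = ε * Real.sqrt (2 * m n) := by rw [hc]; ring
    have : ε ≤ |chiSq m p X n ω - (m n : ℝ)| / Real.sqrt (2 * m n) := by
      rwa [abs_div, abs_of_nonneg (Real.sqrt_nonneg _)] at hω
    rw [le_div_iff₀ hs2] at this
    linarith
  refine (measure_mono hsub).trans ((measure_union_le _ _).trans (add_le_add ?_ ?_))
  · -- Chebyshev part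
    have hcheb := meas_ge_le_variance_div_sq (μ := μ)
      (memLp_D (p := p) (hX_meas n) (hX_range n) 2) hcpos
    refine hcheb.trans (ENNReal.ofReal_le_ofReal (le_of_eq ?_))
    rw [variance_D hn (hp_pos n) (hX_meas n) (hX_range n) (hX_law n) (hX_indep n)]
    have hcsq : c ^ 2 = (ε / 2) ^ 2 * (2 * m n) := by
      rw [hc, mul_pow, Real.sq_sqrt (by positivity)]
    rw [hcsq]
    field_simp
  · -- Markov part
    have hintO : Integrable (fun ω => O ω + n) μ :=
      (integrable_O (hX_meas n) (hX_range n)).add (integrable_const _)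
    have hnonneg : ∀ ω, 0 ≤ O ω + n := fun ω => by
      have h0 : 0 ≤ O ω := O_nonneg (hp_pos n) (hX_range n) ω
      linarith
    refine (markov_bound hnonneg hintO hcpos).trans (ENNReal.ofReal_le_ofReal ?_)
    have hIO : ∫ ω, O ω + (n:ℝ) ∂μ = 2 * n - 1 := by
      rw [integral_add (integrable_O (hX_meas n) (hX_range n)) (integrable_const _),
        integral_O hn (hp_pos n) (hp_sum n) (hX_meas n) (hX_range n) (hX_law n) (hX_indep n),
        integral_const]
      simp
      ring
    rw [hIO, div_le_iff₀ hcpos]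
    have hs2' : Real.sqrt (2 * m n) = Real.sqrt 2 * Real.sqrt (m n) :=
      Real.sqrt_mul (by norm_num) _
    have hsm : (0:ℝ) < Real.sqrt (m n) := Real.sqrt_pos.2 hmR
    have hs2pos : (0:ℝ) < Real.sqrt 2 := by positivity
    have key : 4 / (ε * Real.sqrt 2) * ((n:ℝ) / Real.sqrt (m n)) * c = 2 * n := by
      rw [hc, hs2']
      field_simp
      ring
    rw [key]
    linarith
end

section
/- Suppose p_n(i) = m_n^{-1} for i = 1,…,m_n (the uniform distribution) and n/√(m_n) → 0 as n → ∞ with m_n → ∞. Then (χ²_n − m_n)/√(2 m_n) converges in distribution (equivalently, in probability) to 0. -/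
open MeasureTheory ProbabilityTheory Filter
open scoped BoundedContinuousFunction ENNReal Topology

-- auxiliary: chiSq formula in terms of coincidence counts
lemma chiSq_formula {Ω : Type*} (m : ℕ → ℕ) (p : ℕ → ℕ → ℝ) (X : ℕ → ℕ → Ω → ℕ)
    (n : ℕ) (ω : Ω)
    (hX_range : ∀ k, X n k ω ∈ Finset.Icc 1 (m n))
    (hp_unif : ∀ i ∈ Finset.Icc 1 (m n), p n i = (m n : ℝ)⁻¹)
    (hn : 1 ≤ n) (hmn : 1 ≤ m n) :
    chiSq m p X n ω = (m n : ℝ) / n *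
      (∑ k ∈ Finset.Icc 1 n, ∑ l ∈ Finset.Icc 1 n,
        (if X n k ω = X n l ω then (1 : ℝ) else 0)) - n := by
  have hn0 : (n : ℝ) ≠ 0 := by positivity
  have hm0 : (m n : ℝ) ≠ 0 := by positivity
  -- basic identities
  have hT : ∀ i ∈ Finset.Icc 1 (m n),
      (∑ k ∈ Finset.Icc 1 n, (if X n k ω = i then (1 : ℝ) else 0)) ^ 2
      = ∑ k ∈ Finset.Icc 1 n, ∑ l ∈ Finset.Icc 1 n,
          (if X n k ω = i then (1:ℝ) else 0) * (if X n l ω = i then (1:ℝ) else 0) := by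
    intro i _
    rw [sq, Finset.sum_mul_sum]
  have hsum_i : ∀ k l : ℕ,
      (∑ i ∈ Finset.Icc 1 (m n),
        (if X n k ω = i then (1:ℝ) else 0) * (if X n l ω = i then (1:ℝ) else 0))
      = (if X n k ω = X n l ω then (1:ℝ) else 0) := by
    intro k l
    have : ∀ i, (if X n k ω = i then (1:ℝ) else 0) * (if X n l ω = i then (1:ℝ) else 0)
        = if i = X n k ω then (if X n l ω = X n k ω then (1:ℝ) else 0) else 0 := by
      intro i
      by_cases h1 : X n k ω = i
      · subst h1; simp [eq_comm]
      · simp [h1, Ne.symm h1]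
    rw [Finset.sum_congr rfl fun i _ => this i, Finset.sum_ite_eq']
    simp [hX_range k, eq_comm]
  have hsum_one : ∀ k : ℕ, (∑ i ∈ Finset.Icc 1 (m n),
      (if X n k ω = i then (1:ℝ) else 0)) = 1 := by
    intro k
    rw [Finset.sum_ite_eq]
    simp [hX_range k]
  -- expand chiSq
  unfold chiSq empFreq
  have expand : ∀ i ∈ Finset.Icc 1 (m n),
      ((n : ℝ)⁻¹ * ∑ k ∈ Finset.Icc 1 n, (if X n k ω = i then (1 : ℝ) else 0) - p n i) ^ 2 / p n i
      = (m n : ℝ) * (n:ℝ)⁻¹^2 *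
          ((∑ k ∈ Finset.Icc 1 n, (if X n k ω = i then (1 : ℝ) else 0))^2)
        - 2 * (n:ℝ)⁻¹ * (∑ k ∈ Finset.Icc 1 n, (if X n k ω = i then (1 : ℝ) else 0))
        + (m n : ℝ)⁻¹ := by
    intro i hi
    rw [hp_unif i hi]
    field_simp
    ring
  rw [Finset.sum_congr rfl expand]
  rw [Finset.sum_add_distrib, Finset.sum_sub_distrib]
  rw [Finset.sum_const, Nat.card_Icc]
  have h1 : ∑ i ∈ Finset.Icc 1 (m n),
      (m n : ℝ) * (n:ℝ)⁻¹^2 * ((∑ k ∈ Finset.Icc 1 n, (if X n k ω = i then (1 : ℝ) else 0))^2)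
      = (m n : ℝ) * (n:ℝ)⁻¹^2 *
        (∑ k ∈ Finset.Icc 1 n, ∑ l ∈ Finset.Icc 1 n,
          (if X n k ω = X n l ω then (1 : ℝ) else 0)) := by
    rw [← Finset.mul_sum]
    congr 1
    rw [Finset.sum_congr rfl hT]
    rw [Finset.sum_comm]
    refine Finset.sum_congr rfl fun k _ => ?_
    rw [Finset.sum_comm]
    exact Finset.sum_congr rfl fun l _ => hsum_i k l
  have h2 : ∑ i ∈ Finset.Icc 1 (m n),
      2 * (n:ℝ)⁻¹ * (∑ k ∈ Finset.Icc 1 n, (if X n k ω = i then (1 : ℝ) else 0)) = 2 := by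
    rw [← Finset.mul_sum, Finset.sum_comm]
    rw [Finset.sum_congr rfl (fun k _ => hsum_one k), Finset.sum_const, Nat.card_Icc]
    simp
    field_simp
  rw [h1, h2, nsmul_eq_mul]
  have : ((m n + 1 - 1 : ℕ) : ℝ) = (m n : ℝ) := by
    norm_num
  rw [this]
  field_simp
  ring

theorem chisq_uniform_degenerate_limit
    {Ω : Type*} [MeasurableSpace Ω] (μ : Measure Ω) [IsProbabilityMeasure μ]
    (m : ℕ → ℕ) (p : ℕ → ℕ → ℝ) (X : ℕ → ℕ → Ω → ℕ)
    (hp_pos : ∀ n : ℕ, ∀ i ∈ Finset.Icc 1 (m n), 0 < p n i)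
    (hp_sum : ∀ n : ℕ, ∑ i ∈ Finset.Icc 1 (m n), p n i = 1)
    (hX_meas : ∀ n k, Measurable (X n k))
    (hX_range : ∀ n k ω, X n k ω ∈ Finset.Icc 1 (m n))
    (hX_law : ∀ n k, ∀ i ∈ Finset.Icc 1 (m n), μ (X n k ⁻¹' {i}) = ENNReal.ofReal (p n i))
    (hX_indep : ∀ n : ℕ, iIndepFun (X n) μ)
    (hp_unif : ∀ n : ℕ, ∀ i ∈ Finset.Icc 1 (m n), p n i = (m n : ℝ)⁻¹)
    (hm : Filter.Tendsto m Filter.atTop Filter.atTop)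
    (hrate : Filter.Tendsto (fun n : ℕ => (n : ℝ) / Real.sqrt (m n)) Filter.atTop (nhds 0))
    :
    MeasureTheory.TendstoInMeasure μ
      (fun n ω => (chiSq m p X n ω - (m n : ℝ)) / Real.sqrt (2 * (m n : ℝ)))
      Filter.atTop (fun _ => (0 : ℝ)) := by
  refine tendstoInMeasure_iff_dist.2 fun ε hε => ?_
  -- the bounding sequence
  have hb : Tendsto (fun n : ℕ => ENNReal.ofReal (((n:ℝ)/Real.sqrt (m n))^2)) atTop (𝓝 0) := by
    have h2 : Tendsto (fun n : ℕ => ((n:ℝ)/Real.sqrt (m n))^2) atTop (𝓝 0) := by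
      simpa using hrate.pow 2
    simpa using ENNReal.tendsto_ofReal h2
  -- rate for sqrt(2 m n)
  have hrate2 : Tendsto (fun n : ℕ => (n : ℝ) / Real.sqrt (2 * m n)) atTop (𝓝 0) := by
    have hkey : ∀ n : ℕ, (n : ℝ) / Real.sqrt (2 * m n)
        = (Real.sqrt 2)⁻¹ * ((n : ℝ) / Real.sqrt (m n)) := by
      intro n
      rw [Real.sqrt_mul (by norm_num : (0:ℝ) ≤ 2), div_mul_eq_div_div_swap, div_eq_inv_mul]
    simp only [hkey]
    simpa using hrate.const_mul (Real.sqrt 2)⁻¹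
  have hev : ∀ᶠ n in atTop,
      μ {ω | ε ≤ dist ((chiSq m p X n ω - (m n : ℝ)) / Real.sqrt (2 * (m n : ℝ))) 0}
        ≤ ENNReal.ofReal (((n:ℝ)/Real.sqrt (m n))^2) := by
    filter_upwards [hm.eventually_ge_atTop 1, eventually_ge_atTop 1,
      hrate2.eventually (gt_mem_nhds hε)] with n hmn hn hlt
    have hm0 : (0:ℝ) < (m n : ℝ) := by exact_mod_cast hmn
    have hm0' : (m n : ℝ) ≠ 0 := ne_of_gt hm0
    set Pn := (Finset.Icc 1 n ×ˢ Finset.Icc 1 n).filter (fun q => q.1 ≠ q.2) with hPn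
    -- Step A : inclusion into the union of coincidence events
    have hincl : {ω | ε ≤ dist ((chiSq m p X n ω - (m n : ℝ)) / Real.sqrt (2 * (m n : ℝ))) 0}
        ⊆ ⋃ q ∈ Pn, {ω | X n q.1 ω = X n q.2 ω} := by
      intro ω hω
      by_contra hU
      simp only [Set.mem_iUnion, Set.mem_setOf_eq, not_exists] at hU
      have hT : (∑ k ∈ Finset.Icc 1 n, ∑ l ∈ Finset.Icc 1 n,
          (if X n k ω = X n l ω then (1 : ℝ) else 0)) = n := by
        have : ∀ k ∈ Finset.Icc 1 n, (∑ l ∈ Finset.Icc 1 n,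
            (if X n k ω = X n l ω then (1 : ℝ) else 0)) = 1 := by
          intro k hk
          have : ∀ l ∈ Finset.Icc 1 n, (if X n k ω = X n l ω then (1 : ℝ) else 0)
              = (if l = k then (1:ℝ) else 0) := by
            intro l hl
            by_cases hlk : l = k
            · simp [hlk]
            · have : X n k ω ≠ X n l ω := by
                have := hU (k, l)
                simp only [hPn, Finset.mem_filter, Finset.mem_product] at this
                intro hEq
                exact this ⟨⟨hk, hl⟩, fun h => hlk (by simpa using h.symm)⟩ hEq
              simp [hlk, this]
          rw [Finset.sum_congr rfl this, Finset.sum_ite_eq']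
          simp [Finset.mem_Icc.1 hk]
        rw [Finset.sum_congr rfl this, Finset.sum_const, Nat.card_Icc]
        simp
      have hchi : chiSq m p X n ω = (m n : ℝ) - n := by
        rw [chiSq_formula m p X n ω (fun k => hX_range n k ω) (hp_unif n) hn hmn, hT]
        have hn0 : (n:ℝ) ≠ 0 := by positivity
        field_simp
      have : dist ((chiSq m p X n ω - (m n : ℝ)) / Real.sqrt (2 * (m n : ℝ))) 0
          = (n : ℝ) / Real.sqrt (2 * (m n : ℝ)) := by
        rw [hchi, Real.dist_eq, sub_zero]
        have hs : (0:ℝ) < Real.sqrt (2 * (m n : ℝ)) := Real.sqrt_pos.2 (by positivity)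
        rw [abs_div, abs_of_pos hs]
        congr 1
        rw [show (m n : ℝ) - (n:ℝ) - (m n : ℝ) = -(n:ℝ) by ring, abs_neg, abs_of_nonneg]
        positivity
      rw [Set.mem_setOf_eq, this] at hω
      exact absurd hω (not_le.2 hlt)
    -- Step C : each coincidence event has measure ≤ 1/m
    have hpair : ∀ q ∈ Pn, μ {ω | X n q.1 ω = X n q.2 ω} ≤ ENNReal.ofReal (m n : ℝ)⁻¹ := by
      rintro ⟨k, l⟩ hq
      simp only [hPn, Finset.mem_filter, Finset.mem_product] at hq
      have hkl : k ≠ l := hq.2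
      have hsub : {ω | X n k ω = X n l ω}
          ⊆ ⋃ i ∈ Finset.Icc 1 (m n), (X n k ⁻¹' {i} ∩ X n l ⁻¹' {i}) := by
        intro ω hω
        refine Set.mem_biUnion (hX_range n k ω) ?_
        exact ⟨rfl, by simpa using hω.symm⟩
      calc μ {ω | X n k ω = X n l ω}
          ≤ ∑ i ∈ Finset.Icc 1 (m n), μ (X n k ⁻¹' {i} ∩ X n l ⁻¹' {i}) :=
            le_trans (measure_mono hsub) (measure_biUnion_finset_le _ _)
        _ = ∑ i ∈ Finset.Icc 1 (m n), ENNReal.ofReal ((m n : ℝ)⁻¹ * (m n : ℝ)⁻¹) := by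
            refine Finset.sum_congr rfl fun i hi => ?_
            rw [((hX_indep n).indepFun hkl).measure_inter_preimage_eq_mul
              {i} {i} (measurableSet_singleton i) (measurableSet_singleton i),
              hX_law n k i hi, hX_law n l i hi, hp_unif n i hi,
              ← ENNReal.ofReal_mul (by positivity)]
        _ = ENNReal.ofReal (m n : ℝ)⁻¹ := by
            rw [Finset.sum_const, Nat.card_Icc, nsmul_eq_mul]
            rw [show ((m n + 1 - 1 : ℕ) : ℝ≥0∞) = ((m n : ℕ) : ℝ≥0∞) by norm_num]
            rw [← ENNReal.ofReal_natCast, ← ENNReal.ofReal_mul (by positivity)]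
            congr 1
            field_simp
    -- assemble
    calc μ {ω | ε ≤ dist ((chiSq m p X n ω - (m n : ℝ)) / Real.sqrt (2 * (m n : ℝ))) 0}
        ≤ μ (⋃ q ∈ Pn, {ω | X n q.1 ω = X n q.2 ω}) := measure_mono hincl
      _ ≤ ∑ q ∈ Pn, μ {ω | X n q.1 ω = X n q.2 ω} := measure_biUnion_finset_le _ _
      _ ≤ ∑ q ∈ Pn, ENNReal.ofReal (m n : ℝ)⁻¹ := Finset.sum_le_sum hpair
      _ = (Pn.card : ℝ≥0∞) * ENNReal.ofReal (m n : ℝ)⁻¹ := by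
            rw [Finset.sum_const, nsmul_eq_mul]
      _ ≤ ((n^2 : ℕ) : ℝ≥0∞) * ENNReal.ofReal (m n : ℝ)⁻¹ := by
            refine mul_le_mul_left (Nat.cast_le.2 ?_) _
            calc Pn.card ≤ ((Finset.Icc 1 n) ×ˢ (Finset.Icc 1 n)).card :=
                  Finset.card_filter_le _ _
              _ = n^2 := by rw [Finset.card_product, Nat.card_Icc]; simp; ring
      _ = ENNReal.ofReal (((n:ℝ)/Real.sqrt (m n))^2) := by
            rw [← ENNReal.ofReal_natCast, ← ENNReal.ofReal_mul (by positivity)]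
            congr 1
            rw [div_pow, Real.sq_sqrt (le_of_lt hm0)]
            push_cast
            ring
  refine tendsto_of_tendsto_of_tendsto_of_le_of_le' tendsto_const_nhds hb
    (Eventually.of_forall fun n => zero_le) hev
end

section
/- With U_n = Σ_{1≤k≠l≤n} I(X_{n,k}=X_{n,l})/p_n(X_{n,k}) and S_n = Σ_{k=1}^n p_n^{-1}(X_{n,k}), the covariance Cov(U_n, S_n) = 0. -/
open MeasureTheory ProbabilityTheory Filter
open scoped BoundedContinuousFunction

section Aux
variable {Ω : Type*} [MeasurableSpace Ω] {μ : Measure Ω}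

lemma aux_rep3 (X1 X2 X3 : Ω → ℕ) (I : Finset ℕ) (h1 : ∀ ω, X1 ω ∈ I)
    (h2 : ∀ ω, X2 ω ∈ I) (h3 : ∀ ω, X3 ω ∈ I) (F : ℕ → ℕ → ℕ → ℝ) :
    (fun ω => F (X1 ω) (X2 ω) (X3 ω)) =
      fun ω => ∑ i ∈ I, ∑ j ∈ I, ∑ r ∈ I,
        Set.indicator (X1 ⁻¹' {i} ∩ X2 ⁻¹' {j} ∩ X3 ⁻¹' {r}) (fun _ => F i j r) ω := by
  funext ω
  simp only [Set.indicator, Set.mem_inter_iff, Set.mem_preimage, Set.mem_singleton_iff]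
  rw [Finset.sum_eq_single_of_mem (X1 ω) (h1 ω)]
  · rw [Finset.sum_eq_single_of_mem (X2 ω) (h2 ω)]
    · rw [Finset.sum_eq_single_of_mem (X3 ω) (h3 ω)]
      · simp
      · intro b _ hb
        simp [Ne.symm hb]
    · intro b _ hb
      exact Finset.sum_eq_zero fun r _ => by simp [Ne.symm hb]
  · intro b _ hb
    exact Finset.sum_eq_zero fun j_ _ => Finset.sum_eq_zero fun r _ => by simp [Ne.symm hb]

lemma aux_integrable3 [IsFiniteMeasure μ] (X1 X2 X3 : Ω → ℕ)
    (hm1 : Measurable X1) (hm2 : Measurable X2) (hm3 : Measurable X3)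
    (I : Finset ℕ) (h1 : ∀ ω, X1 ω ∈ I) (h2 : ∀ ω, X2 ω ∈ I) (h3 : ∀ ω, X3 ω ∈ I)
    (F : ℕ → ℕ → ℕ → ℝ) :
    Integrable (fun ω => F (X1 ω) (X2 ω) (X3 ω)) μ := by
  rw [aux_rep3 X1 X2 X3 I h1 h2 h3 F]
  refine integrable_finset_sum _ fun i _ => integrable_finset_sum _ fun j _ =>
    integrable_finset_sum _ fun r _ => ?_
  exact (integrable_const _).indicator
    (((hm1 (measurableSet_singleton i)).inter (hm2 (measurableSet_singleton j))).inter
      (hm3 (measurableSet_singleton r)))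

lemma aux_integral3 [IsProbabilityMeasure μ] (X1 X2 X3 : Ω → ℕ)
    (hm1 : Measurable X1) (hm2 : Measurable X2) (hm3 : Measurable X3)
    (I : Finset ℕ) (h1 : ∀ ω, X1 ω ∈ I) (h2 : ∀ ω, X2 ω ∈ I) (h3 : ∀ ω, X3 ω ∈ I)
    (q : ℕ → ℝ) (hq : ∀ i ∈ I, 0 ≤ q i)
    (hlaw1 : ∀ i ∈ I, μ (X1 ⁻¹' {i}) = ENNReal.ofReal (q i))
    (hlaw2 : ∀ i ∈ I, μ (X2 ⁻¹' {i}) = ENNReal.ofReal (q i))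
    (hlaw3 : ∀ i ∈ I, μ (X3 ⁻¹' {i}) = ENNReal.ofReal (q i))
    (hind12 : IndepFun X1 X2 μ)
    (hind : IndepFun (fun ω => (X1 ω, X2 ω)) X3 μ)
    (F : ℕ → ℕ → ℕ → ℝ) :
    ∫ ω, F (X1 ω) (X2 ω) (X3 ω) ∂μ =
      ∑ i ∈ I, ∑ j ∈ I, ∑ r ∈ I, q i * q j * q r * F i j r := by
  rw [aux_rep3 X1 X2 X3 I h1 h2 h3 F]
  rw [integral_finset_sum _ (fun i _ => integrable_finset_sum _ fun j _ =>
    integrable_finset_sum _ fun r _ => (integrable_const _).indicator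
      (((hm1 (measurableSet_singleton i)).inter (hm2 (measurableSet_singleton j))).inter
        (hm3 (measurableSet_singleton r))))]
  refine Finset.sum_congr rfl fun i hi => ?_
  rw [integral_finset_sum _ (fun j _ => integrable_finset_sum _ fun r _ =>
    (integrable_const _).indicator
      (((hm1 (measurableSet_singleton i)).inter (hm2 (measurableSet_singleton j))).inter
        (hm3 (measurableSet_singleton r))))]
  refine Finset.sum_congr rfl fun j hj => ?_
  rw [integral_finset_sum _ (fun r _ => (integrable_const _).indicator
      (((hm1 (measurableSet_singleton i)).inter (hm2 (measurableSet_singleton j))).inter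
        (hm3 (measurableSet_singleton r))))]
  refine Finset.sum_congr rfl fun r hr => ?_
  rw [integral_indicator_const _
    (((hm1 (measurableSet_singleton i)).inter (hm2 (measurableSet_singleton j))).inter
      (hm3 (measurableSet_singleton r)))]
  have hmeas : μ (X1 ⁻¹' {i} ∩ X2 ⁻¹' {j} ∩ X3 ⁻¹' {r}) =
      ENNReal.ofReal (q i) * ENNReal.ofReal (q j) * ENNReal.ofReal (q r) := by
    have hpre : (fun ω => (X1 ω, X2 ω)) ⁻¹' ({i} ×ˢ {j}) = X1 ⁻¹' {i} ∩ X2 ⁻¹' {j} :=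
      Set.mk_preimage_prod X1 X2
    have h3' := hind.measure_inter_preimage_eq_mul ({i} ×ˢ {j}) {r}
      ((measurableSet_singleton i).prod (measurableSet_singleton j)) (measurableSet_singleton r)
    rw [hpre] at h3'
    rw [h3', hind12.measure_inter_preimage_eq_mul {i} {j} (measurableSet_singleton i)
      (measurableSet_singleton j), hlaw1 i hi, hlaw2 j hj, hlaw3 r hr]
  rw [measureReal_def, hmeas]
  rw [ENNReal.toReal_mul, ENNReal.toReal_mul, ENNReal.toReal_ofReal (hq i hi),
    ENNReal.toReal_ofReal (hq j hj), ENNReal.toReal_ofReal (hq r hr), smul_eq_mul]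

end Aux

section Master
variable {Ω : Type*} [MeasurableSpace Ω] {μ : Measure Ω}

lemma aux_master [IsProbabilityMeasure μ] (X1 X2 X3 : Ω → ℕ)
    (hm1 : Measurable X1) (hm2 : Measurable X2) (hm3 : Measurable X3)
    (I : Finset ℕ) (h1 : ∀ ω, X1 ω ∈ I) (h2 : ∀ ω, X2 ω ∈ I) (h3 : ∀ ω, X3 ω ∈ I)
    (q : ℕ → ℝ) (hq : ∀ i ∈ I, 0 ≤ q i)
    (hlaw1 : ∀ i ∈ I, μ (X1 ⁻¹' {i}) = ENNReal.ofReal (q i))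
    (hlaw2 : ∀ i ∈ I, μ (X2 ⁻¹' {i}) = ENNReal.ofReal (q i))
    (hlaw3 : ∀ i ∈ I, μ (X3 ⁻¹' {i}) = ENNReal.ofReal (q i))
    (hind12 : IndepFun X1 X2 μ)
    (hind : IndepFun (fun ω => (X1 ω, X2 ω)) X3 μ)
    (F2 : ℕ → ℕ → ℝ) (G : ℕ → ℝ) :
    ∫ ω, F2 (X1 ω) (X2 ω) * G (X3 ω) ∂μ =
      (∑ i ∈ I, ∑ j ∈ I, q i * q j * F2 i j) * (∑ r ∈ I, q r * G r) := by
  have h := aux_integral3 X1 X2 X3 hm1 hm2 hm3 I h1 h2 h3 q hq hlaw1 hlaw2 hlaw3 hind12 hind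
    (fun i j r => F2 i j * G r)
  calc ∫ ω, F2 (X1 ω) (X2 ω) * G (X3 ω) ∂μ
      = ∑ i ∈ I, ∑ j ∈ I, ∑ r ∈ I, q i * q j * q r * (F2 i j * G r) := h
    _ = (∑ i ∈ I, ∑ j ∈ I, q i * q j * F2 i j) * (∑ r ∈ I, q r * G r) := by
        rw [Finset.sum_mul]
        refine Finset.sum_congr rfl fun i _ => ?_
        rw [Finset.sum_mul]
        refine Finset.sum_congr rfl fun j _ => ?_
        rw [Finset.mul_sum]
        exact Finset.sum_congr rfl fun r _ => by ring

end Master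
noncomputable def Ustat {Ω : Type*} (p : ℕ → ℕ → ℝ) (X : ℕ → ℕ → Ω → ℕ) (n : ℕ) (ω : Ω) : ℝ :=
  ∑ k ∈ Finset.Icc 1 n, ∑ l ∈ Finset.Icc 1 n,
    if k ≠ l then (if X n k ω = X n l ω then (1 : ℝ) else 0) / p n (X n k ω) else 0

noncomputable def Sstat {Ω : Type*} (p : ℕ → ℕ → ℝ) (X : ℕ → ℕ → Ω → ℕ) (n : ℕ) (ω : Ω) : ℝ :=
  ∑ k ∈ Finset.Icc 1 n, (p n (X n k ω))⁻¹

theorem ustat_sstat_uncorrelated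
    {Ω : Type*} [MeasurableSpace Ω] (μ : Measure Ω) [IsProbabilityMeasure μ]
    (m : ℕ → ℕ) (p : ℕ → ℕ → ℝ) (X : ℕ → ℕ → Ω → ℕ)
    (hp_pos : ∀ n : ℕ, ∀ i ∈ Finset.Icc 1 (m n), 0 < p n i)
    (hp_sum : ∀ n : ℕ, ∑ i ∈ Finset.Icc 1 (m n), p n i = 1)
    (hX_meas : ∀ n k, Measurable (X n k))
    (hX_range : ∀ n k ω, X n k ω ∈ Finset.Icc 1 (m n))
    (hX_law : ∀ n k, ∀ i ∈ Finset.Icc 1 (m n), μ (X n k ⁻¹' {i}) = ENNReal.ofReal (p n i))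
    (hX_indep : ∀ n : ℕ, iIndepFun (X n) μ)
    :
    ∀ n : ℕ, ∫ ω, (Ustat p X n ω - ∫ ω', Ustat p X n ω' ∂μ) *
        (Sstat p X n ω - ∫ ω', Sstat p X n ω' ∂μ) ∂μ = 0 := by
  intro n
  classical
  -- notation
  have hqpos : ∀ i ∈ Finset.Icc 1 (m n), (0:ℝ) ≤ p n i := fun i hi => (hp_pos n i hi).le
  -- master integral lemma specialized
  have master_int : ∀ (k l j : ℕ), k ≠ l → k ≠ j → l ≠ j → ∀ (F2 : ℕ → ℕ → ℝ) (G : ℕ → ℝ),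
      ∫ ω, F2 (X n k ω) (X n l ω) * G (X n j ω) ∂μ =
        (∑ i ∈ Finset.Icc 1 (m n), ∑ i' ∈ Finset.Icc 1 (m n), p n i * p n i' * F2 i i') *
          (∑ r ∈ Finset.Icc 1 (m n), p n r * G r) := by
    intro k l j hkl hkj hlj F2 G
    exact aux_master (X n k) (X n l) (X n j) (hX_meas n k) (hX_meas n l) (hX_meas n j)
      (Finset.Icc 1 (m n)) (hX_range n k) (hX_range n l) (hX_range n j) (p n) hqpos
      (hX_law n k) (hX_law n l) (hX_law n j) ((hX_indep n).indepFun hkl)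
      ((hX_indep n).indepFun_prodMk (hX_meas n) k l j hkj hlj) F2 G
  have master_intg : ∀ (k l j : ℕ) (F : ℕ → ℕ → ℕ → ℝ),
      Integrable (fun ω => F (X n k ω) (X n l ω) (X n j ω)) μ := fun k l j F =>
    aux_integrable3 (X n k) (X n l) (X n j) (hX_meas n k) (hX_meas n l) (hX_meas n j)
      (Finset.Icc 1 (m n)) (hX_range n k) (hX_range n l) (hX_range n j) F
  -- scalar sum identities
  have hsg : ∑ i ∈ Finset.Icc 1 (m n), p n i * (p n i)⁻¹ = ((Finset.Icc 1 (m n)).card : ℝ) := by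
    rw [Finset.sum_congr rfl (fun i hi => mul_inv_cancel₀ (hp_pos n i hi).ne')]
    simp
  have w1 : ∑ i ∈ Finset.Icc 1 (m n), ∑ i' ∈ Finset.Icc 1 (m n),
      p n i * p n i' * (1:ℝ) = 1 := by
    have inner : ∀ i ∈ Finset.Icc 1 (m n), ∑ i' ∈ Finset.Icc 1 (m n), p n i * p n i' * (1:ℝ)
        = p n i := by
      intro i _
      simp only [mul_one, ← Finset.mul_sum, hp_sum n]
    rw [Finset.sum_congr rfl inner, hp_sum n]
  have wf : ∑ i ∈ Finset.Icc 1 (m n), ∑ i' ∈ Finset.Icc 1 (m n),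
      p n i * p n i' * ((if i = i' then (1:ℝ) else 0) / p n i) = 1 := by
    have inner : ∀ i ∈ Finset.Icc 1 (m n), ∑ i' ∈ Finset.Icc 1 (m n),
        p n i * p n i' * ((if i = i' then (1:ℝ) else 0) / p n i) = p n i := by
      intro i hi
      have step : ∀ i' ∈ Finset.Icc 1 (m n),
          p n i * p n i' * ((if i = i' then (1:ℝ) else 0) / p n i)
            = if i = i' then p n i' else 0 := by
        intro i' _
        by_cases h : i = i'
        · rw [if_pos h, if_pos h]
          field_simp
          rw [mul_comm (p n i) (p n i'), mul_div_assoc, div_self (hp_pos n i hi).ne', mul_one]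
        · rw [if_neg h, if_neg h]
          simp
      rw [Finset.sum_congr rfl step, Finset.sum_ite_eq, if_pos hi]
    rw [Finset.sum_congr rfl inner, hp_sum n]
  have wfk : ∑ i ∈ Finset.Icc 1 (m n), ∑ i' ∈ Finset.Icc 1 (m n),
      p n i * p n i' * ((if i = i' then (1:ℝ) else 0) / p n i * (p n i)⁻¹)
        = ((Finset.Icc 1 (m n)).card : ℝ) := by
    have inner : ∀ i ∈ Finset.Icc 1 (m n), ∑ i' ∈ Finset.Icc 1 (m n),
        p n i * p n i' * ((if i = i' then (1:ℝ) else 0) / p n i * (p n i)⁻¹) = 1 := by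
      intro i hi
      have step : ∀ i' ∈ Finset.Icc 1 (m n),
          p n i * p n i' * ((if i = i' then (1:ℝ) else 0) / p n i * (p n i)⁻¹)
            = if i = i' then p n i' / p n i else 0 := by
        intro i' _
        by_cases h : i = i'
        · rw [if_pos h, if_pos h]
          subst h
          have hne := (hp_pos n i hi).ne'
          field_simp
        · rw [if_neg h, if_neg h]
          simp
      rw [Finset.sum_congr rfl step, Finset.sum_ite_eq, if_pos hi,
        div_self (hp_pos n i hi).ne']
    rw [Finset.sum_congr rfl inner]
    simp
  have wfl : ∑ i ∈ Finset.Icc 1 (m n), ∑ i' ∈ Finset.Icc 1 (m n),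
      p n i * p n i' * ((if i = i' then (1:ℝ) else 0) / p n i * (p n i')⁻¹)
        = ((Finset.Icc 1 (m n)).card : ℝ) := by
    have inner : ∀ i ∈ Finset.Icc 1 (m n), ∑ i' ∈ Finset.Icc 1 (m n),
        p n i * p n i' * ((if i = i' then (1:ℝ) else 0) / p n i * (p n i')⁻¹) = 1 := by
      intro i hi
      have step : ∀ i' ∈ Finset.Icc 1 (m n),
          p n i * p n i' * ((if i = i' then (1:ℝ) else 0) / p n i * (p n i')⁻¹)
            = if i = i' then p n i' / p n i' else 0 := by
        intro i' hi'
        by_cases h : i = i'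
        · rw [if_pos h, if_pos h]
          subst h
          have hne := (hp_pos n i hi).ne'
          field_simp
        · rw [if_neg h, if_neg h]
          simp
      rw [Finset.sum_congr rfl step, Finset.sum_ite_eq, if_pos hi,
        div_self (hp_pos n i hi).ne']
    rw [Finset.sum_congr rfl inner]
    simp
  -- integrability helpers
  have hint_u : ∀ k l : ℕ, Integrable (fun ω =>
      if k ≠ l then (if X n k ω = X n l ω then (1:ℝ) else 0) / p n (X n k ω) else 0) μ := by
    intro k l
    by_cases hkl : k = l
    · have e : (fun ω => if k ≠ l then (if X n k ω = X n l ω then (1:ℝ) else 0) / p n (X n k ω)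
          else 0) = fun _ => (0:ℝ) := funext fun ω => if_neg (not_not_intro hkl)
      rw [e]; exact integrable_const 0
    · have e : (fun ω => if k ≠ l then (if X n k ω = X n l ω then (1:ℝ) else 0) / p n (X n k ω)
          else 0) = fun ω => (if X n k ω = X n l ω then (1:ℝ) else 0) / p n (X n k ω) :=
        funext fun ω => if_pos hkl
      rw [e]
      exact master_intg k l k (fun i i' _ => (if i = i' then (1:ℝ) else 0) / p n i)
  have hint_us : ∀ k l j : ℕ, Integrable (fun ω =>
      (if k ≠ l then (if X n k ω = X n l ω then (1:ℝ) else 0) / p n (X n k ω) else 0) *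
        (p n (X n j ω))⁻¹) μ := by
    intro k l j
    by_cases hkl : k = l
    · have e : (fun ω => (if k ≠ l then (if X n k ω = X n l ω then (1:ℝ) else 0) / p n (X n k ω)
          else 0) * (p n (X n j ω))⁻¹) = fun _ => (0:ℝ) := by
        funext ω; rw [if_neg (not_not_intro hkl), zero_mul]
      rw [e]; exact integrable_const 0
    · have e : (fun ω => (if k ≠ l then (if X n k ω = X n l ω then (1:ℝ) else 0) / p n (X n k ω)
          else 0) * (p n (X n j ω))⁻¹) =
          fun ω => (if X n k ω = X n l ω then (1:ℝ) else 0) / p n (X n k ω) *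
            (p n (X n j ω))⁻¹ := by
        funext ω; rw [if_pos hkl]
      rw [e]
      exact master_intg k l j (fun i i' r => (if i = i' then (1:ℝ) else 0) / p n i * (p n r)⁻¹)
  have eU : Ustat p X n = fun ω => ∑ k ∈ Finset.Icc 1 n, ∑ l ∈ Finset.Icc 1 n,
      (if k ≠ l then (if X n k ω = X n l ω then (1:ℝ) else 0) / p n (X n k ω) else 0) := rfl
  have eS : Sstat p X n = fun ω => ∑ k ∈ Finset.Icc 1 n, (p n (X n k ω))⁻¹ := rfl
  have hIntU : Integrable (Ustat p X n) μ := by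
    rw [eU]
    exact integrable_finset_sum _ fun k _ => integrable_finset_sum _ fun l _ => hint_u k l
  have hIntS : Integrable (Sstat p X n) μ := by
    rw [eS]
    exact integrable_finset_sum _ fun k _ => master_intg k k k (fun i _ _ => (p n i)⁻¹)
  have hrepr : (fun ω => Ustat p X n ω * Sstat p X n ω) =
      fun ω => ∑ k ∈ Finset.Icc 1 n, ∑ l ∈ Finset.Icc 1 n, ∑ j ∈ Finset.Icc 1 n,
        (if k ≠ l then (if X n k ω = X n l ω then (1:ℝ) else 0) / p n (X n k ω) else 0) *
          (p n (X n j ω))⁻¹ := by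
    funext ω
    simp only [Ustat, Sstat]
    rw [Finset.sum_mul]
    refine Finset.sum_congr rfl fun k _ => ?_
    rw [Finset.sum_mul]
    refine Finset.sum_congr rfl fun l _ => ?_
    rw [Finset.mul_sum]
  have hIntUS : Integrable (fun ω => Ustat p X n ω * Sstat p X n ω) μ := by
    rw [hrepr]
    exact integrable_finset_sum _ fun k _ => integrable_finset_sum _ fun l _ =>
      integrable_finset_sum _ fun j _ => hint_us k l j
  -- expectations
  have hEg : ∀ j : ℕ, ∫ ω, (p n (X n j ω))⁻¹ ∂μ = ((Finset.Icc 1 (m n)).card : ℝ) := by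
    intro j
    have h := master_int (j+1) (j+2) j (by omega) (by omega) (by omega)
      (fun _ _ => (1:ℝ)) (fun r => (p n r)⁻¹)
    simp only [one_mul] at h
    rw [h, w1, hsg, one_mul]
  have hEU : ∫ ω, Ustat p X n ω ∂μ =
      ∑ k ∈ Finset.Icc 1 n, ∑ l ∈ Finset.Icc 1 n, (if k ≠ l then (1:ℝ) else 0) := by
    simp only [Ustat]
    rw [integral_finset_sum _ fun k _ => integrable_finset_sum _ fun l _ => hint_u k l]
    refine Finset.sum_congr rfl fun k _ => ?_
    rw [integral_finset_sum _ fun l _ => hint_u k l]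
    refine Finset.sum_congr rfl fun l _ => ?_
    by_cases hkl : k = l
    · have e : (fun ω => if k ≠ l then (if X n k ω = X n l ω then (1:ℝ) else 0) / p n (X n k ω)
          else 0) = fun _ => (0:ℝ) := funext fun ω => if_neg (not_not_intro hkl)
      rw [e, if_neg (not_not_intro hkl)]
      exact integral_zero _ _
    · have e : (fun ω => if k ≠ l then (if X n k ω = X n l ω then (1:ℝ) else 0) / p n (X n k ω)
          else 0) = fun ω => (if X n k ω = X n l ω then (1:ℝ) else 0) / p n (X n k ω) :=
        funext fun ω => if_pos hkl
      rw [e, if_pos hkl]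
      have h := master_int k l (k+l+1) hkl (by omega) (by omega)
        (fun i i' => (if i = i' then (1:ℝ) else 0) / p n i) (fun _ => (1:ℝ))
      simp only [mul_one] at h
      rw [h, wf, hp_sum n, one_mul]
  have hES : ∫ ω, Sstat p X n ω ∂μ =
      ((Finset.Icc 1 n).card : ℝ) * ((Finset.Icc 1 (m n)).card : ℝ) := by
    simp only [Sstat]
    rw [integral_finset_sum _ fun k _ => master_intg k k k (fun i _ _ => (p n i)⁻¹)]
    rw [Finset.sum_congr rfl fun j _ => hEg j, Finset.sum_const, nsmul_eq_mul]
  have hterm : ∀ k l j : ℕ,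
      ∫ ω, (if k ≠ l then (if X n k ω = X n l ω then (1:ℝ) else 0) / p n (X n k ω) else 0) *
        (p n (X n j ω))⁻¹ ∂μ = if k ≠ l then ((Finset.Icc 1 (m n)).card : ℝ) else 0 := by
    intro k l j
    by_cases hkl : k = l
    · have e : (fun ω => (if k ≠ l then (if X n k ω = X n l ω then (1:ℝ) else 0) / p n (X n k ω)
          else 0) * (p n (X n j ω))⁻¹) = fun _ => (0:ℝ) := by
        funext ω; rw [if_neg (not_not_intro hkl), zero_mul]
      rw [e, if_neg (not_not_intro hkl)]
      exact integral_zero _ _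
    · have e : (fun ω => (if k ≠ l then (if X n k ω = X n l ω then (1:ℝ) else 0) / p n (X n k ω)
          else 0) * (p n (X n j ω))⁻¹) =
          fun ω => (if X n k ω = X n l ω then (1:ℝ) else 0) / p n (X n k ω) *
            (p n (X n j ω))⁻¹ := by
        funext ω; rw [if_pos hkl]
      rw [e, if_pos hkl]
      by_cases hjk : j = k
      · subst hjk
        have h := master_int j l (j+l+1) hkl (by omega) (by omega)
          (fun i i' => (if i = i' then (1:ℝ) else 0) / p n i * (p n i)⁻¹) (fun _ => (1:ℝ))
        simp only [mul_one] at h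
        rw [h, wfk, hp_sum n, mul_one]
      · by_cases hjl : j = l
        · subst hjl
          have h := master_int k j (k+j+1) hkl (by omega) (by omega)
            (fun i i' => (if i = i' then (1:ℝ) else 0) / p n i * (p n i')⁻¹) (fun _ => (1:ℝ))
          simp only [mul_one] at h
          rw [h, wfl, hp_sum n, mul_one]
        · have h := master_int k l j hkl (fun hh => hjk hh.symm) (fun hh => hjl hh.symm)
            (fun i i' => (if i = i' then (1:ℝ) else 0) / p n i) (fun r => (p n r)⁻¹)
          rw [h, wf, hsg, one_mul]
  have hEUS : ∫ ω, Ustat p X n ω * Sstat p X n ω ∂μ =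
      (∑ k ∈ Finset.Icc 1 n, ∑ l ∈ Finset.Icc 1 n, (if k ≠ l then (1:ℝ) else 0)) *
        (((Finset.Icc 1 n).card : ℝ) * ((Finset.Icc 1 (m n)).card : ℝ)) := by
    rw [hrepr]
    rw [integral_finset_sum _ fun k _ => integrable_finset_sum _ fun l _ =>
      integrable_finset_sum _ fun j _ => hint_us k l j]
    have step1 : ∀ k ∈ Finset.Icc 1 n,
        ∫ ω, ∑ l ∈ Finset.Icc 1 n, ∑ j ∈ Finset.Icc 1 n,
          (if k ≠ l then (if X n k ω = X n l ω then (1:ℝ) else 0) / p n (X n k ω) else 0) *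
            (p n (X n j ω))⁻¹ ∂μ =
        ∑ l ∈ Finset.Icc 1 n, (if k ≠ l then (1:ℝ) else 0) *
          (((Finset.Icc 1 n).card : ℝ) * ((Finset.Icc 1 (m n)).card : ℝ)) := by
      intro k _
      rw [integral_finset_sum _ fun l _ => integrable_finset_sum _ fun j _ => hint_us k l j]
      refine Finset.sum_congr rfl fun l _ => ?_
      rw [integral_finset_sum _ fun j _ => hint_us k l j]
      rw [Finset.sum_congr rfl fun j _ => hterm k l j, Finset.sum_const, nsmul_eq_mul]
      by_cases hkl : k ≠ l
      · rw [if_pos hkl, if_pos hkl, one_mul]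
      · rw [if_neg hkl, if_neg hkl]
        ring
    rw [Finset.sum_congr rfl step1]
    simp only [← Finset.sum_mul]
  -- conclusion
  set A := ∫ ω', Ustat p X n ω' ∂μ with hA
  set B := ∫ ω', Sstat p X n ω' ∂μ with hB
  have expand : (fun ω => (Ustat p X n ω - A) * (Sstat p X n ω - B)) =
      fun ω => Ustat p X n ω * Sstat p X n ω - A * Sstat p X n ω - B * Ustat p X n ω + A * B :=
    funext fun ω => by ring
  rw [expand]
  have h1 : Integrable (fun ω => Ustat p X n ω * Sstat p X n ω - A * Sstat p X n ω) μ :=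
    hIntUS.sub (hIntS.const_mul A)
  have h2 : Integrable (fun ω => Ustat p X n ω * Sstat p X n ω - A * Sstat p X n ω -
      B * Ustat p X n ω) μ := h1.sub (hIntU.const_mul B)
  rw [integral_add h2 (integrable_const (A*B)),
    integral_sub h1 (hIntU.const_mul B),
    integral_sub hIntUS (hIntS.const_mul A),
    integral_const_mul A, integral_const_mul B, integral_const]
  simp only [probReal_univ, measure_univ, ENNReal.toReal_one, one_smul]
  rw [← hA, ← hB, hEUS, hEU, hES]
  ring
end

section
/- The variance of the Pearson chi-square statistic satisfies Var(χ²_n) = n^{-1}[Var(p_n^{-1}(X_n)) + 2(n−1)(m_n−1)]. -/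
open MeasureTheory ProbabilityTheory Filter
open scoped BoundedContinuousFunction

set_option linter.unusedSectionVars false

section Aux

variable {Ω : Type*} [MeasurableSpace Ω] (μ : Measure Ω) [IsProbabilityMeasure μ]
variable (P : ℕ → ℝ) (Y : ℕ → Ω → ℕ) (M : Finset ℕ)

lemma int_prod_ind
    (hY : ∀ k, Measurable (Y k))
    (hlaw : ∀ k, ∀ i ∈ M, μ (Y k ⁻¹' {i}) = ENNReal.ofReal (P i))
    (hP : ∀ i ∈ M, 0 < P i)
    (hindep : iIndepFun Y μ)
    (s : Finset ℕ) (c : ℕ → ℕ) (hc : ∀ r ∈ s, c r ∈ M) :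
    ∫ ω, (∏ r ∈ s, if Y r ω = c r then (1 : ℝ) else 0) ∂μ = ∏ r ∈ s, P (c r) := by
  have hset : MeasurableSet (⋂ r ∈ s, Y r ⁻¹' {c r}) :=
    MeasurableSet.biInter s.countable_toSet (fun r _ => (hY r) (measurableSet_singleton _))
  have hptw : ∀ ω, (∏ r ∈ s, if Y r ω = c r then (1 : ℝ) else 0)
      = Set.indicator (⋂ r ∈ s, Y r ⁻¹' {c r}) (fun _ => (1:ℝ)) ω := by
    intro ω
    rw [Finset.prod_boole]
    by_cases h : ∀ r ∈ s, Y r ω = c r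
    · rw [if_pos h, Set.indicator_of_mem (by simpa [Set.mem_iInter] using h)]
    · rw [if_neg h, Set.indicator_of_notMem (by simpa [Set.mem_iInter] using h)]
  calc ∫ ω, (∏ r ∈ s, if Y r ω = c r then (1 : ℝ) else 0) ∂μ
      = ∫ ω, Set.indicator (⋂ r ∈ s, Y r ⁻¹' {c r}) (fun _ => (1:ℝ)) ω ∂μ :=
        integral_congr_ae (Filter.Eventually.of_forall hptw)
    _ = (μ (⋂ r ∈ s, Y r ⁻¹' {c r})).toReal := integral_indicator_one hset
    _ = (∏ r ∈ s, μ (Y r ⁻¹' {c r})).toReal := by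
        rw [hindep.measure_inter_preimage_eq_mul s (fun r hr => measurableSet_singleton _)]
    _ = ∏ r ∈ s, P (c r) := by
        rw [ENNReal.toReal_prod]
        refine Finset.prod_congr rfl (fun r hr => ?_)
        rw [hlaw r (c r) (hc r hr), ENNReal.toReal_ofReal (hP _ (hc r hr)).le]

variable (hY : ∀ k, Measurable (Y k))
    (hlaw : ∀ k, ∀ i ∈ M, μ (Y k ⁻¹' {i}) = ENNReal.ofReal (P i))
    (hP : ∀ i ∈ M, 0 < P i)
    (hindep : iIndepFun Y μ)

include hY hlaw hP hindep

lemma int1 {i : ℕ} (hi : i ∈ M) (k : ℕ) :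
    ∫ ω, (if Y k ω = i then (1:ℝ) else 0) ∂μ = P i := by
  have := int_prod_ind μ P Y M hY hlaw hP hindep {k} (fun _ => i) (fun _ _ => hi)
  simpa using this

lemma int2 {i j k l : ℕ} (hi : i ∈ M) (hj : j ∈ M) (hkl : k ≠ l) :
    ∫ ω, (if Y k ω = i then (1:ℝ) else 0) * (if Y l ω = j then (1:ℝ) else 0) ∂μ
      = P i * P j := by
  set c : ℕ → ℕ := fun r => if r = k then i else j with hcdef
  have hc : ∀ r ∈ ({k, l} : Finset ℕ), c r ∈ M := by
    intro r _; simp only [hcdef]; split_ifs <;> assumption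
  have key := int_prod_ind μ P Y M hY hlaw hP hindep {k, l} c hc
  have hck : c k = i := by simp [hcdef]
  have hcl : c l = j := by simp [hcdef, Ne.symm hkl]
  have hp : ∀ ω, (if Y k ω = i then (1:ℝ) else 0) * (if Y l ω = j then (1:ℝ) else 0)
      = ∏ r ∈ ({k, l} : Finset ℕ), if Y r ω = c r then (1:ℝ) else 0 := by
    intro ω; rw [Finset.prod_pair hkl, hck, hcl]
  calc ∫ ω, (if Y k ω = i then (1:ℝ) else 0) * (if Y l ω = j then (1:ℝ) else 0) ∂μ
      = ∫ ω, ∏ r ∈ ({k, l} : Finset ℕ), if Y r ω = c r then (1:ℝ) else 0 ∂μ :=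
        integral_congr_ae (Filter.Eventually.of_forall hp)
    _ = ∏ r ∈ ({k, l} : Finset ℕ), P (c r) := key
    _ = P i * P j := by rw [Finset.prod_pair hkl, hck, hcl]

lemma int3 {i j u k l r : ℕ} (hi : i ∈ M) (hj : j ∈ M) (hu : u ∈ M)
    (hkl : k ≠ l) (hkr : k ≠ r) (hlr : l ≠ r) :
    ∫ ω, (if Y k ω = i then (1:ℝ) else 0) * (if Y l ω = j then (1:ℝ) else 0)
        * (if Y r ω = u then (1:ℝ) else 0) ∂μ = P i * P j * P u := by
  set c : ℕ → ℕ := fun x => if x = k then i else if x = l then j else u with hcdef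
  have hc : ∀ x ∈ ({k, l, r} : Finset ℕ), c x ∈ M := by
    intro x _; simp only [hcdef]; split_ifs <;> assumption
  have key := int_prod_ind μ P Y M hY hlaw hP hindep {k, l, r} c hc
  have hkm : k ∉ ({l, r} : Finset ℕ) := by simp [hkl, hkr]
  have hlm : l ∉ ({r} : Finset ℕ) := by simp [hlr]
  have hck : c k = i := by simp [hcdef]
  have hcl : c l = j := by simp [hcdef, Ne.symm hkl]
  have hcr : c r = u := by simp [hcdef, Ne.symm hkr, Ne.symm hlr]
  have hp : ∀ ω, (if Y k ω = i then (1:ℝ) else 0) * (if Y l ω = j then (1:ℝ) else 0)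
      * (if Y r ω = u then (1:ℝ) else 0)
      = ∏ x ∈ ({k, l, r} : Finset ℕ), if Y x ω = c x then (1:ℝ) else 0 := by
    intro ω
    rw [Finset.prod_insert hkm, Finset.prod_insert hlm, Finset.prod_singleton, hck, hcl, hcr]
    ring
  calc ∫ ω, (if Y k ω = i then (1:ℝ) else 0) * (if Y l ω = j then (1:ℝ) else 0)
      * (if Y r ω = u then (1:ℝ) else 0) ∂μ
      = ∫ ω, ∏ x ∈ ({k, l, r} : Finset ℕ), if Y x ω = c x then (1:ℝ) else 0 ∂μ :=
        integral_congr_ae (Filter.Eventually.of_forall hp)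
    _ = ∏ x ∈ ({k, l, r} : Finset ℕ), P (c x) := key
    _ = P i * P j * P u := by
        rw [Finset.prod_insert hkm, Finset.prod_insert hlm, Finset.prod_singleton,
          hck, hcl, hcr]
        ring

lemma int4 {i j u v k l r t : ℕ} (hi : i ∈ M) (hj : j ∈ M) (hu : u ∈ M) (hv : v ∈ M)
    (hkl : k ≠ l) (hkr : k ≠ r) (hkt : k ≠ t) (hlr : l ≠ r) (hlt : l ≠ t) (hrt : r ≠ t) :
    ∫ ω, (if Y k ω = i then (1:ℝ) else 0) * (if Y l ω = j then (1:ℝ) else 0)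
        * ((if Y r ω = u then (1:ℝ) else 0) * (if Y t ω = v then (1:ℝ) else 0)) ∂μ
      = P i * P j * (P u * P v) := by
  set c : ℕ → ℕ := fun x => if x = k then i else if x = l then j else if x = r then u else v
    with hcdef
  have hc : ∀ x ∈ ({k, l, r, t} : Finset ℕ), c x ∈ M := by
    intro x _; simp only [hcdef]; split_ifs <;> assumption
  have key := int_prod_ind μ P Y M hY hlaw hP hindep {k, l, r, t} c hc
  have hkm : k ∉ ({l, r, t} : Finset ℕ) := by simp [hkl, hkr, hkt]
  have hlm : l ∉ ({r, t} : Finset ℕ) := by simp [hlr, hlt]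
  have hrm : r ∉ ({t} : Finset ℕ) := by simp [hrt]
  have hck : c k = i := by simp [hcdef]
  have hcl : c l = j := by simp [hcdef, Ne.symm hkl]
  have hcr : c r = u := by simp [hcdef, Ne.symm hkr, Ne.symm hlr]
  have hct : c t = v := by simp [hcdef, Ne.symm hkt, Ne.symm hlt, Ne.symm hrt]
  have hp : ∀ ω, (if Y k ω = i then (1:ℝ) else 0) * (if Y l ω = j then (1:ℝ) else 0)
      * ((if Y r ω = u then (1:ℝ) else 0) * (if Y t ω = v then (1:ℝ) else 0))
      = ∏ x ∈ ({k, l, r, t} : Finset ℕ), if Y x ω = c x then (1:ℝ) else 0 := by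
    intro ω
    rw [Finset.prod_insert hkm, Finset.prod_insert hlm, Finset.prod_insert hrm,
      Finset.prod_singleton, hck, hcl, hcr, hct]
    ring
  calc ∫ ω, (if Y k ω = i then (1:ℝ) else 0) * (if Y l ω = j then (1:ℝ) else 0)
      * ((if Y r ω = u then (1:ℝ) else 0) * (if Y t ω = v then (1:ℝ) else 0)) ∂μ
      = ∫ ω, ∏ x ∈ ({k, l, r, t} : Finset ℕ), if Y x ω = c x then (1:ℝ) else 0 ∂μ :=
        integral_congr_ae (Filter.Eventually.of_forall hp)
    _ = ∏ x ∈ ({k, l, r, t} : Finset ℕ), P (c x) := key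
    _ = P i * P j * (P u * P v) := by
        rw [Finset.prod_insert hkm, Finset.prod_insert hlm, Finset.prod_insert hrm,
          Finset.prod_singleton, hck, hcl, hcr, hct]
        ring

/-- The building-block random variable `T k l`. -/
noncomputable def Tfun (P : ℕ → ℝ) {Ω : Type*} (Y : ℕ → Ω → ℕ) (M : Finset ℕ)
    (k l : ℕ) (ω : Ω) : ℝ :=
  ∑ i ∈ M, (if Y k ω = i then (1:ℝ) else 0) * (if Y l ω = i then (1:ℝ) else 0) / P i

omit hY hlaw hP hindep

lemma meas_ind (k i : ℕ) (hYk : Measurable (Y k)) :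
    Measurable (fun ω => if Y k ω = i then (1:ℝ) else 0) :=
  Measurable.ite (hYk (measurableSet_singleton i)) measurable_const measurable_const

lemma ind_mul_ind (k i j : ℕ) (ω : Ω) :
    (if Y k ω = i then (1:ℝ) else 0) * (if Y k ω = j then (1:ℝ) else 0)
      = if i = j then (if Y k ω = i then (1:ℝ) else 0) else 0 := by
  by_cases h : Y k ω = i <;> by_cases h' : Y k ω = j <;> by_cases hij : i = j <;>
    simp_all

lemma integrable_bdd {f : Ω → ℝ} (hf : Measurable f) {C : ℝ} (h : ∀ ω, |f ω| ≤ C) :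
    Integrable f μ :=
  (integrable_const C).mono' hf.aestronglyMeasurable (Filter.Eventually.of_forall h)

lemma ind_bdd (k i : ℕ) (ω : Ω) : |if Y k ω = i then (1:ℝ) else 0| ≤ 1 := by
  split_ifs <;> norm_num

lemma integrable4 (k l k' l' i j : ℕ) (hY : ∀ k, Measurable (Y k)) :
    Integrable (fun ω => (if Y k ω = i then (1:ℝ) else 0) * (if Y l ω = i then (1:ℝ) else 0)
      * ((if Y k' ω = j then (1:ℝ) else 0) * (if Y l' ω = j then (1:ℝ) else 0))) μ := by
  refine integrable_bdd μ ?_ (C := 1) ?_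
  · exact (((meas_ind Y k i (hY k)).mul (meas_ind Y l i (hY l))).mul
      ((meas_ind Y k' j (hY k')).mul (meas_ind Y l' j (hY l'))))
  · intro ω
    rw [abs_mul, abs_mul, abs_mul]
    have e1 := ind_bdd Y k i ω
    have e2 := ind_bdd Y l i ω
    have e3 := ind_bdd Y k' j ω
    have e4 := ind_bdd Y l' j ω
    have h2 : (0:ℝ) ≤ |if Y l ω = i then (1:ℝ) else 0| := abs_nonneg _
    have h3 : (0:ℝ) ≤ |if Y k' ω = j then (1:ℝ) else 0| := abs_nonneg _
    have h4 : (0:ℝ) ≤ |if Y l' ω = j then (1:ℝ) else 0| := abs_nonneg _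
    exact mul_le_one₀ (mul_le_one₀ e1 h2 e2) (mul_nonneg h3 h4) (mul_le_one₀ e3 h4 e4)

lemma integrable2 (k l i : ℕ) (hY : ∀ k, Measurable (Y k)) :
    Integrable (fun ω => (if Y k ω = i then (1:ℝ) else 0)
      * (if Y l ω = i then (1:ℝ) else 0)) μ := by
  refine integrable_bdd μ ((meas_ind Y k i (hY k)).mul (meas_ind Y l i (hY l))) (C := 1) ?_
  intro ω
  rw [abs_mul]
  have h1 := ind_bdd Y k i ω
  have h2 := ind_bdd Y l i ω
  have h3 : (0:ℝ) ≤ |if Y l ω = i then (1:ℝ) else 0| := abs_nonneg _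
  exact mul_le_one₀ h1 h3 h2

include hY hlaw hP hindep

lemma int_T (hPsum : ∑ i ∈ M, P i = 1) (k l : ℕ) :
    ∫ ω, Tfun P Y M k l ω ∂μ = if k = l then (M.card : ℝ) else 1 := by
  unfold Tfun
  rw [integral_finset_sum]
  swap
  · exact fun i _ => ((integrable2 μ Y k l i hY).div_const (P i))
  by_cases hkl : k = l
  · subst hkl
    rw [if_pos rfl]
    calc ∑ i ∈ M, ∫ ω, (if Y k ω = i then (1:ℝ) else 0) * (if Y k ω = i then (1:ℝ) else 0)
          / P i ∂μ
        = ∑ i ∈ M, (1:ℝ) := by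
          refine Finset.sum_congr rfl fun i hi => ?_
          rw [integral_div]
          have hpt : ∀ ω, (if Y k ω = i then (1:ℝ) else 0) * (if Y k ω = i then (1:ℝ) else 0)
              = (if Y k ω = i then (1:ℝ) else 0) := by
            intro ω; rw [ind_mul_ind, if_pos rfl]
          rw [integral_congr_ae (Filter.Eventually.of_forall hpt),
            int1 μ P Y M hY hlaw hP hindep hi k, div_self (hP i hi).ne']
      _ = (M.card : ℝ) := by simp
  · rw [if_neg hkl]
    calc ∑ i ∈ M, ∫ ω, (if Y k ω = i then (1:ℝ) else 0) * (if Y l ω = i then (1:ℝ) else 0)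
          / P i ∂μ
        = ∑ i ∈ M, P i := by
          refine Finset.sum_congr rfl fun i hi => ?_
          rw [integral_div, int2 μ P Y M hY hlaw hP hindep hi hi hkl]
          field_simp
      _ = 1 := hPsum

lemma int_TT_expand (k l k' l' : ℕ) :
    ∫ ω, Tfun P Y M k l ω * Tfun P Y M k' l' ω ∂μ
      = ∑ i ∈ M, ∑ j ∈ M,
          (∫ ω, (if Y k ω = i then (1:ℝ) else 0) * (if Y l ω = i then (1:ℝ) else 0)
            * ((if Y k' ω = j then (1:ℝ) else 0) * (if Y l' ω = j then (1:ℝ) else 0)) ∂μ)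
          / (P i * P j) := by
  have hpt : ∀ ω, Tfun P Y M k l ω * Tfun P Y M k' l' ω
      = ∑ i ∈ M, ∑ j ∈ M,
          ((if Y k ω = i then (1:ℝ) else 0) * (if Y l ω = i then (1:ℝ) else 0)
            * ((if Y k' ω = j then (1:ℝ) else 0) * (if Y l' ω = j then (1:ℝ) else 0)))
          / (P i * P j) := by
    intro ω
    unfold Tfun
    rw [Finset.sum_mul_sum]
    refine Finset.sum_congr rfl fun i _ => Finset.sum_congr rfl fun j _ => ?_
    rw [div_mul_div_comm]
  rw [integral_congr_ae (Filter.Eventually.of_forall hpt), integral_finset_sum]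
  swap
  · intro i _
    exact integrable_finset_sum _ (fun j _ =>
      (integrable4 μ Y k l k' l' i j hY).div_const (P i * P j))
  refine Finset.sum_congr rfl fun i _ => ?_
  rw [integral_finset_sum _ (fun j _ => (integrable4 μ Y k l k' l' i j hY).div_const _)]
  refine Finset.sum_congr rfl fun j _ => ?_
  rw [integral_div]

omit hY hlaw hP hindep

section Sums
variable (hP : ∀ i ∈ M, 0 < P i) (hPsum : ∑ i ∈ M, P i = 1)
include hP

lemma sum_diag (g : ℕ → ℝ) :
    ∑ i ∈ M, ∑ j ∈ M, (if i = j then g i else 0) / (P i * P j)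
      = ∑ i ∈ M, g i / (P i * P i) := by
  refine Finset.sum_congr rfl fun i hi => ?_
  calc ∑ j ∈ M, (if i = j then g i else 0) / (P i * P j)
      = ∑ j ∈ M, (if i = j then g i / (P i * P j) else 0) :=
        Finset.sum_congr rfl fun j _ => by split_ifs <;> simp
    _ = g i / (P i * P i) := by rw [Finset.sum_ite_eq M i]; simp [hi]

lemma sumS1 : ∑ i ∈ M, ∑ j ∈ M, (if i = j then P i else 0) / (P i * P j)
    = ∑ i ∈ M, (P i)⁻¹ := by
  rw [sum_diag P M hP]
  refine Finset.sum_congr rfl fun i hi => ?_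
  have := (hP i hi).ne'
  field_simp

lemma sumS3 : ∑ i ∈ M, ∑ j ∈ M, (if i = j then P i * P i else 0) / (P i * P j)
    = (M.card : ℝ) := by
  rw [sum_diag P M hP]
  have : ∀ i ∈ M, P i * P i / (P i * P i) = 1 := fun i hi => by
    have := (hP i hi).ne'; field_simp
  rw [Finset.sum_congr rfl this]
  simp

include hPsum

lemma sumS6 : ∑ i ∈ M, ∑ j ∈ M, (if i = j then P i * P i * P i else 0) / (P i * P j)
    = 1 := by
  rw [sum_diag P M hP]
  have : ∀ i ∈ M, P i * P i * P i / (P i * P i) = P i := fun i hi => by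
    have := (hP i hi).ne'; field_simp
  rw [Finset.sum_congr rfl this, hPsum]

lemma sumS2 : ∑ i ∈ M, ∑ j ∈ M, (P i * P j) / (P i * P j) = (M.card : ℝ) * M.card := by
  have : ∀ i ∈ M, ∀ j ∈ M, P i * P j / (P i * P j) = 1 := fun i hi j hj => by
    have := (hP i hi).ne'; have := (hP j hj).ne'; field_simp
  rw [Finset.sum_congr rfl fun i hi => Finset.sum_congr rfl fun j hj => this i hi j hj]
  simp [mul_comm]

lemma sumS4 : ∑ i ∈ M, ∑ j ∈ M, (P i * P j * P j) / (P i * P j) = (M.card : ℝ) := by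
  have : ∀ i ∈ M, ∀ j ∈ M, P i * P j * P j / (P i * P j) = P j := fun i hi j hj => by
    have := (hP i hi).ne'; have := (hP j hj).ne'; field_simp
  rw [Finset.sum_congr rfl fun i hi => Finset.sum_congr rfl fun j hj => this i hi j hj]
  simp [hPsum]

lemma sumS5 : ∑ i ∈ M, ∑ j ∈ M, (P i * P i * P j) / (P i * P j) = (M.card : ℝ) := by
  have : ∀ i ∈ M, ∀ j ∈ M, P i * P i * P j / (P i * P j) = P i := fun i hi j hj => by
    have := (hP i hi).ne'; have := (hP j hj).ne'; field_simp
  rw [Finset.sum_congr rfl fun i hi => Finset.sum_congr rfl fun j hj => this i hi j hj,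
    Finset.sum_comm]
  simp [hPsum]

lemma sumS7 : ∑ i ∈ M, ∑ j ∈ M, (P i * P i * (P j * P j)) / (P i * P j) = 1 := by
  have : ∀ i ∈ M, ∀ j ∈ M, P i * P i * (P j * P j) / (P i * P j) = P i * P j :=
    fun i hi j hj => by
      have := (hP i hi).ne'; have := (hP j hj).ne'; field_simp
  rw [Finset.sum_congr rfl fun i hi => Finset.sum_congr rfl fun j hj => this i hi j hj]
  rw [← Finset.sum_mul_sum, hPsum]
  simp [hPsum]

end Sums

include hY hlaw hP hindep in
lemma covT (hPsum : ∑ i ∈ M, P i = 1) (k l k' l' : ℕ) :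
    (∫ ω, Tfun P Y M k l ω * Tfun P Y M k' l' ω ∂μ)
      - (∫ ω, Tfun P Y M k l ω ∂μ) * ∫ ω, Tfun P Y M k' l' ω ∂μ
    = (if l = k ∧ k' = k ∧ l' = k then (∑ i ∈ M, (P i)⁻¹) - (M.card:ℝ) * M.card else 0)
      + (if l ≠ k ∧ ((k' = k ∧ l' = l) ∨ (k' = l ∧ l' = k)) then (M.card:ℝ) - 1 else 0) := by
  rw [int_TT_expand μ P Y M hY hlaw hP hindep k l k' l',
    int_T μ P Y M hY hlaw hP hindep hPsum k l,
    int_T μ P Y M hY hlaw hP hindep hPsum k' l']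
  by_cases hlk : k = l
  · subst hlk
    by_cases hl'k' : k' = l'
    · subst hl'k'
      by_cases hk'k : k = k'
      · subst hk'k
        have hval : ∀ i ∈ M, ∀ j ∈ M,
            (∫ ω, (if Y k ω = i then (1:ℝ) else 0) * (if Y k ω = i then (1:ℝ) else 0)
            * ((if Y k ω = j then (1:ℝ) else 0) * (if Y k ω = j then (1:ℝ) else 0)) ∂μ)
            = if i = j then P i else 0 := by
          intro i hi j hj
          by_cases hij : i = j
          · subst hij
            rw [if_pos rfl]
            have hpt : ∀ ω, (if Y k ω = i then (1:ℝ) else 0) * (if Y k ω = i then (1:ℝ) else 0)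
            * ((if Y k ω = i then (1:ℝ) else 0) * (if Y k ω = i then (1:ℝ) else 0))
                = (if Y k ω = i then (1:ℝ) else 0) := by
              intro ω; by_cases h0 : Y k ω = i <;> simp [h0]
            rw [integral_congr_ae (Filter.Eventually.of_forall hpt)]
            exact int1 μ P Y M hY hlaw hP hindep hi k
          · rw [if_neg hij]
            have hpt : ∀ ω, (if Y k ω = i then (1:ℝ) else 0) * (if Y k ω = i then (1:ℝ) else 0)
            * ((if Y k ω = j then (1:ℝ) else 0) * (if Y k ω = j then (1:ℝ) else 0))
                = 0 := by
              intro ω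
              by_cases h1 : Y k ω = i <;> by_cases h2 : Y k ω = j <;> simp_all
            rw [integral_congr_ae (Filter.Eventually.of_forall hpt), integral_zero]
        rw [Finset.sum_congr rfl fun i hi => Finset.sum_congr rfl fun j hj => by
          rw [hval i hi j hj]]
        rw [sumS1 P M hP]
        simp
      ·
        have hval : ∀ i ∈ M, ∀ j ∈ M,
            (∫ ω, (if Y k ω = i then (1:ℝ) else 0) * (if Y k ω = i then (1:ℝ) else 0)
            * ((if Y k' ω = j then (1:ℝ) else 0) * (if Y k' ω = j then (1:ℝ) else 0)) ∂μ)
            = P i * P j := by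
          intro i hi j hj
          have hpt : ∀ ω, (if Y k ω = i then (1:ℝ) else 0) * (if Y k ω = i then (1:ℝ) else 0)
            * ((if Y k' ω = j then (1:ℝ) else 0) * (if Y k' ω = j then (1:ℝ) else 0))
              = (if Y k ω = i then (1:ℝ) else 0) * (if Y k' ω = j then (1:ℝ) else 0) := by
            intro ω; by_cases h0 : Y k ω = i <;> by_cases h1 : Y k' ω = j <;> simp [h0, h1]
          rw [integral_congr_ae (Filter.Eventually.of_forall hpt)]
          exact int2 μ P Y M hY hlaw hP hindep hi hj hk'k
        rw [Finset.sum_congr rfl fun i hi => Finset.sum_congr rfl fun j hj => by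
          rw [hval i hi j hj]]
        rw [sumS2 P M hP hPsum]
        simp [hk'k, Ne.symm hk'k]
    · by_cases hk'k : k = k'
      · subst hk'k
        have hval : ∀ i ∈ M, ∀ j ∈ M,
            (∫ ω, (if Y k ω = i then (1:ℝ) else 0) * (if Y k ω = i then (1:ℝ) else 0)
            * ((if Y k ω = j then (1:ℝ) else 0) * (if Y l' ω = j then (1:ℝ) else 0)) ∂μ)
            = if i = j then P i * P i else 0 := by
          intro i hi j hj
          by_cases hij : i = j
          · subst hij
            rw [if_pos rfl]
            have hpt : ∀ ω, (if Y k ω = i then (1:ℝ) else 0) * (if Y k ω = i then (1:ℝ) else 0)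
            * ((if Y k ω = i then (1:ℝ) else 0) * (if Y l' ω = i then (1:ℝ) else 0))
                = (if Y k ω = i then (1:ℝ) else 0) * (if Y l' ω = i then (1:ℝ) else 0) := by
              intro ω; by_cases h0 : Y k ω = i <;> by_cases h1 : Y l' ω = i <;> simp [h0, h1]
            rw [integral_congr_ae (Filter.Eventually.of_forall hpt)]
            exact int2 μ P Y M hY hlaw hP hindep hi hi hl'k'
          · rw [if_neg hij]
            have hpt : ∀ ω, (if Y k ω = i then (1:ℝ) else 0) * (if Y k ω = i then (1:ℝ) else 0)
            * ((if Y k ω = j then (1:ℝ) else 0) * (if Y l' ω = j then (1:ℝ) else 0))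
                = 0 := by
              intro ω
              by_cases h1 : Y k ω = i <;> by_cases h2 : Y k ω = j <;> simp_all
            rw [integral_congr_ae (Filter.Eventually.of_forall hpt), integral_zero]
        rw [Finset.sum_congr rfl fun i hi => Finset.sum_congr rfl fun j hj => by
          rw [hval i hi j hj]]
        rw [sumS3 P M hP]
        simp [hl'k', Ne.symm hl'k']
      · by_cases hl'k : k = l'
        · subst hl'k
          have hval : ∀ i ∈ M, ∀ j ∈ M,
              (∫ ω, (if Y k ω = i then (1:ℝ) else 0) * (if Y k ω = i then (1:ℝ) else 0)
              * ((if Y k' ω = j then (1:ℝ) else 0) * (if Y k ω = j then (1:ℝ) else 0)) ∂μ)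
              = if i = j then P i * P i else 0 := by
            intro i hi j hj
            by_cases hij : i = j
            · subst hij
              rw [if_pos rfl]
              have hpt : ∀ ω, (if Y k ω = i then (1:ℝ) else 0) * (if Y k ω = i then (1:ℝ) else 0)
              * ((if Y k' ω = i then (1:ℝ) else 0) * (if Y k ω = i then (1:ℝ) else 0))
                  = (if Y k ω = i then (1:ℝ) else 0) * (if Y k' ω = i then (1:ℝ) else 0) := by
                intro ω; by_cases h0 : Y k ω = i <;> by_cases h1 : Y k' ω = i <;> simp [h0, h1]
              rw [integral_congr_ae (Filter.Eventually.of_forall hpt)]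
              exact int2 μ P Y M hY hlaw hP hindep hi hi hk'k
            · rw [if_neg hij]
              have hpt : ∀ ω, (if Y k ω = i then (1:ℝ) else 0) * (if Y k ω = i then (1:ℝ) else 0)
              * ((if Y k' ω = j then (1:ℝ) else 0) * (if Y k ω = j then (1:ℝ) else 0))
                  = 0 := by
                intro ω
                by_cases h1 : Y k ω = i <;> by_cases h2 : Y k ω = j <;> simp_all
              rw [integral_congr_ae (Filter.Eventually.of_forall hpt), integral_zero]
          rw [Finset.sum_congr rfl fun i hi => Finset.sum_congr rfl fun j hj => by
            rw [hval i hi j hj]]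
          rw [sumS3 P M hP]
          simp [hk'k, Ne.symm hk'k, hl'k', Ne.symm hl'k']
        ·
          have hval : ∀ i ∈ M, ∀ j ∈ M,
              (∫ ω, (if Y k ω = i then (1:ℝ) else 0) * (if Y k ω = i then (1:ℝ) else 0)
              * ((if Y k' ω = j then (1:ℝ) else 0) * (if Y l' ω = j then (1:ℝ) else 0)) ∂μ)
              = P i * P j * P j := by
            intro i hi j hj
            have hpt : ∀ ω, (if Y k ω = i then (1:ℝ) else 0) * (if Y k ω = i then (1:ℝ) else 0)
              * ((if Y k' ω = j then (1:ℝ) else 0) * (if Y l' ω = j then (1:ℝ) else 0))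
                = (if Y k ω = i then (1:ℝ) else 0) * (if Y k' ω = j then (1:ℝ) else 0) * (if Y l' ω = j then (1:ℝ) else 0) := by
              intro ω; by_cases h0 : Y k ω = i <;> by_cases h1 : Y k' ω = j <;> by_cases h2 : Y l' ω = j <;> simp [h0, h1, h2]
            rw [integral_congr_ae (Filter.Eventually.of_forall hpt)]
            exact int3 μ P Y M hY hlaw hP hindep hi hj hj hk'k hl'k hl'k'
          rw [Finset.sum_congr rfl fun i hi => Finset.sum_congr rfl fun j hj => by
            rw [hval i hi j hj]]
          rw [sumS4 P M hP hPsum]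
          simp [hk'k, Ne.symm hk'k, hl'k, Ne.symm hl'k, hl'k', Ne.symm hl'k']
  · by_cases hl'k' : k' = l'
    · subst hl'k'
      by_cases hk'k : k = k'
      · subst hk'k
        have hval : ∀ i ∈ M, ∀ j ∈ M,
            (∫ ω, (if Y k ω = i then (1:ℝ) else 0) * (if Y l ω = i then (1:ℝ) else 0)
            * ((if Y k ω = j then (1:ℝ) else 0) * (if Y k ω = j then (1:ℝ) else 0)) ∂μ)
            = if i = j then P i * P i else 0 := by
          intro i hi j hj
          by_cases hij : i = j
          · subst hij
            rw [if_pos rfl]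
            have hpt : ∀ ω, (if Y k ω = i then (1:ℝ) else 0) * (if Y l ω = i then (1:ℝ) else 0)
            * ((if Y k ω = i then (1:ℝ) else 0) * (if Y k ω = i then (1:ℝ) else 0))
                = (if Y k ω = i then (1:ℝ) else 0) * (if Y l ω = i then (1:ℝ) else 0) := by
              intro ω; by_cases h0 : Y k ω = i <;> by_cases h1 : Y l ω = i <;> simp [h0, h1]
            rw [integral_congr_ae (Filter.Eventually.of_forall hpt)]
            exact int2 μ P Y M hY hlaw hP hindep hi hi hlk
          · rw [if_neg hij]
            have hpt : ∀ ω, (if Y k ω = i then (1:ℝ) else 0) * (if Y l ω = i then (1:ℝ) else 0)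
            * ((if Y k ω = j then (1:ℝ) else 0) * (if Y k ω = j then (1:ℝ) else 0))
                = 0 := by
              intro ω
              by_cases h1 : Y k ω = i <;> by_cases h2 : Y k ω = j <;> simp_all
            rw [integral_congr_ae (Filter.Eventually.of_forall hpt), integral_zero]
        rw [Finset.sum_congr rfl fun i hi => Finset.sum_congr rfl fun j hj => by
          rw [hval i hi j hj]]
        rw [sumS3 P M hP]
        simp [hlk, Ne.symm hlk]
      · by_cases hk'l : l = k'
        · subst hk'l
          have hval : ∀ i ∈ M, ∀ j ∈ M,
              (∫ ω, (if Y k ω = i then (1:ℝ) else 0) * (if Y l ω = i then (1:ℝ) else 0)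
              * ((if Y l ω = j then (1:ℝ) else 0) * (if Y l ω = j then (1:ℝ) else 0)) ∂μ)
              = if i = j then P i * P i else 0 := by
            intro i hi j hj
            by_cases hij : i = j
            · subst hij
              rw [if_pos rfl]
              have hpt : ∀ ω, (if Y k ω = i then (1:ℝ) else 0) * (if Y l ω = i then (1:ℝ) else 0)
              * ((if Y l ω = i then (1:ℝ) else 0) * (if Y l ω = i then (1:ℝ) else 0))
                  = (if Y k ω = i then (1:ℝ) else 0) * (if Y l ω = i then (1:ℝ) else 0) := by
                intro ω; by_cases h0 : Y k ω = i <;> by_cases h1 : Y l ω = i <;> simp [h0, h1]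
              rw [integral_congr_ae (Filter.Eventually.of_forall hpt)]
              exact int2 μ P Y M hY hlaw hP hindep hi hi hlk
            · rw [if_neg hij]
              have hpt : ∀ ω, (if Y k ω = i then (1:ℝ) else 0) * (if Y l ω = i then (1:ℝ) else 0)
              * ((if Y l ω = j then (1:ℝ) else 0) * (if Y l ω = j then (1:ℝ) else 0))
                  = 0 := by
                intro ω
                by_cases h1 : Y l ω = i <;> by_cases h2 : Y l ω = j <;> simp_all
              rw [integral_congr_ae (Filter.Eventually.of_forall hpt), integral_zero]
          rw [Finset.sum_congr rfl fun i hi => Finset.sum_congr rfl fun j hj => by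
            rw [hval i hi j hj]]
          rw [sumS3 P M hP]
          simp [hlk, Ne.symm hlk, hk'k, Ne.symm hk'k]
        ·
          have hval : ∀ i ∈ M, ∀ j ∈ M,
              (∫ ω, (if Y k ω = i then (1:ℝ) else 0) * (if Y l ω = i then (1:ℝ) else 0)
              * ((if Y k' ω = j then (1:ℝ) else 0) * (if Y k' ω = j then (1:ℝ) else 0)) ∂μ)
              = P i * P i * P j := by
            intro i hi j hj
            have hpt : ∀ ω, (if Y k ω = i then (1:ℝ) else 0) * (if Y l ω = i then (1:ℝ) else 0)
              * ((if Y k' ω = j then (1:ℝ) else 0) * (if Y k' ω = j then (1:ℝ) else 0))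
                = (if Y k ω = i then (1:ℝ) else 0) * (if Y l ω = i then (1:ℝ) else 0) * (if Y k' ω = j then (1:ℝ) else 0) := by
              intro ω; by_cases h0 : Y k ω = i <;> by_cases h1 : Y l ω = i <;> by_cases h2 : Y k' ω = j <;> simp [h0, h1, h2]
            rw [integral_congr_ae (Filter.Eventually.of_forall hpt)]
            exact int3 μ P Y M hY hlaw hP hindep hi hi hj hlk hk'k hk'l
          rw [Finset.sum_congr rfl fun i hi => Finset.sum_congr rfl fun j hj => by
            rw [hval i hi j hj]]
          rw [sumS5 P M hP hPsum]
          simp [hlk, Ne.symm hlk, hk'k, Ne.symm hk'k, hk'l, Ne.symm hk'l]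
    · by_cases hk'k : k = k'
      · subst hk'k
        by_cases hl'l : l = l'
        · subst hl'l
          have hval : ∀ i ∈ M, ∀ j ∈ M,
              (∫ ω, (if Y k ω = i then (1:ℝ) else 0) * (if Y l ω = i then (1:ℝ) else 0)
              * ((if Y k ω = j then (1:ℝ) else 0) * (if Y l ω = j then (1:ℝ) else 0)) ∂μ)
              = if i = j then P i * P i else 0 := by
            intro i hi j hj
            by_cases hij : i = j
            · subst hij
              rw [if_pos rfl]
              have hpt : ∀ ω, (if Y k ω = i then (1:ℝ) else 0) * (if Y l ω = i then (1:ℝ) else 0)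
              * ((if Y k ω = i then (1:ℝ) else 0) * (if Y l ω = i then (1:ℝ) else 0))
                  = (if Y k ω = i then (1:ℝ) else 0) * (if Y l ω = i then (1:ℝ) else 0) := by
                intro ω; by_cases h0 : Y k ω = i <;> by_cases h1 : Y l ω = i <;> simp [h0, h1]
              rw [integral_congr_ae (Filter.Eventually.of_forall hpt)]
              exact int2 μ P Y M hY hlaw hP hindep hi hi hlk
            · rw [if_neg hij]
              have hpt : ∀ ω, (if Y k ω = i then (1:ℝ) else 0) * (if Y l ω = i then (1:ℝ) else 0)
              * ((if Y k ω = j then (1:ℝ) else 0) * (if Y l ω = j then (1:ℝ) else 0))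
                  = 0 := by
                intro ω
                by_cases h1 : Y k ω = i <;> by_cases h2 : Y k ω = j <;> simp_all
              rw [integral_congr_ae (Filter.Eventually.of_forall hpt), integral_zero]
          rw [Finset.sum_congr rfl fun i hi => Finset.sum_congr rfl fun j hj => by
            rw [hval i hi j hj]]
          rw [sumS3 P M hP]
          simp [hlk, Ne.symm hlk]
        ·
          have hval : ∀ i ∈ M, ∀ j ∈ M,
              (∫ ω, (if Y k ω = i then (1:ℝ) else 0) * (if Y l ω = i then (1:ℝ) else 0)
              * ((if Y k ω = j then (1:ℝ) else 0) * (if Y l' ω = j then (1:ℝ) else 0)) ∂μ)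
              = if i = j then P i * P i * P i else 0 := by
            intro i hi j hj
            by_cases hij : i = j
            · subst hij
              rw [if_pos rfl]
              have hpt : ∀ ω, (if Y k ω = i then (1:ℝ) else 0) * (if Y l ω = i then (1:ℝ) else 0)
              * ((if Y k ω = i then (1:ℝ) else 0) * (if Y l' ω = i then (1:ℝ) else 0))
                  = (if Y k ω = i then (1:ℝ) else 0) * (if Y l ω = i then (1:ℝ) else 0) * (if Y l' ω = i then (1:ℝ) else 0) := by
                intro ω; by_cases h0 : Y k ω = i <;> by_cases h1 : Y l ω = i <;> by_cases h2 : Y l' ω = i <;> simp [h0, h1, h2]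
              rw [integral_congr_ae (Filter.Eventually.of_forall hpt)]
              exact int3 μ P Y M hY hlaw hP hindep hi hi hi hlk hl'k' hl'l
            · rw [if_neg hij]
              have hpt : ∀ ω, (if Y k ω = i then (1:ℝ) else 0) * (if Y l ω = i then (1:ℝ) else 0)
              * ((if Y k ω = j then (1:ℝ) else 0) * (if Y l' ω = j then (1:ℝ) else 0))
                  = 0 := by
                intro ω
                by_cases h1 : Y k ω = i <;> by_cases h2 : Y k ω = j <;> simp_all
              rw [integral_congr_ae (Filter.Eventually.of_forall hpt), integral_zero]
          rw [Finset.sum_congr rfl fun i hi => Finset.sum_congr rfl fun j hj => by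
            rw [hval i hi j hj]]
          rw [sumS6 P M hP hPsum]
          simp [hlk, Ne.symm hlk, hl'l, Ne.symm hl'l, hl'k', Ne.symm hl'k']
      · by_cases hk'l : l = k'
        · subst hk'l
          by_cases hl'k : k = l'
          · subst hl'k
            have hval : ∀ i ∈ M, ∀ j ∈ M,
                (∫ ω, (if Y k ω = i then (1:ℝ) else 0) * (if Y l ω = i then (1:ℝ) else 0)
                * ((if Y l ω = j then (1:ℝ) else 0) * (if Y k ω = j then (1:ℝ) else 0)) ∂μ)
                = if i = j then P i * P i else 0 := by
              intro i hi j hj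
              by_cases hij : i = j
              · subst hij
                rw [if_pos rfl]
                have hpt : ∀ ω, (if Y k ω = i then (1:ℝ) else 0) * (if Y l ω = i then (1:ℝ) else 0)
                * ((if Y l ω = i then (1:ℝ) else 0) * (if Y k ω = i then (1:ℝ) else 0))
                    = (if Y k ω = i then (1:ℝ) else 0) * (if Y l ω = i then (1:ℝ) else 0) := by
                  intro ω; by_cases h0 : Y k ω = i <;> by_cases h1 : Y l ω = i <;> simp [h0, h1]
                rw [integral_congr_ae (Filter.Eventually.of_forall hpt)]
                exact int2 μ P Y M hY hlaw hP hindep hi hi hlk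
              · rw [if_neg hij]
                have hpt : ∀ ω, (if Y k ω = i then (1:ℝ) else 0) * (if Y l ω = i then (1:ℝ) else 0)
                * ((if Y l ω = j then (1:ℝ) else 0) * (if Y k ω = j then (1:ℝ) else 0))
                    = 0 := by
                  intro ω
                  by_cases h1 : Y k ω = i <;> by_cases h2 : Y k ω = j <;> simp_all
                rw [integral_congr_ae (Filter.Eventually.of_forall hpt), integral_zero]
            rw [Finset.sum_congr rfl fun i hi => Finset.sum_congr rfl fun j hj => by
              rw [hval i hi j hj]]
            rw [sumS3 P M hP]
            simp [hlk, Ne.symm hlk]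
          ·
            have hval : ∀ i ∈ M, ∀ j ∈ M,
                (∫ ω, (if Y k ω = i then (1:ℝ) else 0) * (if Y l ω = i then (1:ℝ) else 0)
                * ((if Y l ω = j then (1:ℝ) else 0) * (if Y l' ω = j then (1:ℝ) else 0)) ∂μ)
                = if i = j then P i * P i * P i else 0 := by
              intro i hi j hj
              by_cases hij : i = j
              · subst hij
                rw [if_pos rfl]
                have hpt : ∀ ω, (if Y k ω = i then (1:ℝ) else 0) * (if Y l ω = i then (1:ℝ) else 0)
                * ((if Y l ω = i then (1:ℝ) else 0) * (if Y l' ω = i then (1:ℝ) else 0))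
                    = (if Y k ω = i then (1:ℝ) else 0) * (if Y l ω = i then (1:ℝ) else 0) * (if Y l' ω = i then (1:ℝ) else 0) := by
                  intro ω; by_cases h0 : Y k ω = i <;> by_cases h1 : Y l ω = i <;> by_cases h2 : Y l' ω = i <;> simp [h0, h1, h2]
                rw [integral_congr_ae (Filter.Eventually.of_forall hpt)]
                exact int3 μ P Y M hY hlaw hP hindep hi hi hi hlk hl'k hl'k'
              · rw [if_neg hij]
                have hpt : ∀ ω, (if Y k ω = i then (1:ℝ) else 0) * (if Y l ω = i then (1:ℝ) else 0)
                * ((if Y l ω = j then (1:ℝ) else 0) * (if Y l' ω = j then (1:ℝ) else 0))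
                    = 0 := by
                  intro ω
                  by_cases h1 : Y l ω = i <;> by_cases h2 : Y l ω = j <;> simp_all
                rw [integral_congr_ae (Filter.Eventually.of_forall hpt), integral_zero]
            rw [Finset.sum_congr rfl fun i hi => Finset.sum_congr rfl fun j hj => by
              rw [hval i hi j hj]]
            rw [sumS6 P M hP hPsum]
            simp [hlk, Ne.symm hlk, hl'k, Ne.symm hl'k, hl'k', Ne.symm hl'k']
        · by_cases hl'k : k = l'
          · subst hl'k
            have hval : ∀ i ∈ M, ∀ j ∈ M,
                (∫ ω, (if Y k ω = i then (1:ℝ) else 0) * (if Y l ω = i then (1:ℝ) else 0)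
                * ((if Y k' ω = j then (1:ℝ) else 0) * (if Y k ω = j then (1:ℝ) else 0)) ∂μ)
                = if i = j then P i * P i * P i else 0 := by
              intro i hi j hj
              by_cases hij : i = j
              · subst hij
                rw [if_pos rfl]
                have hpt : ∀ ω, (if Y k ω = i then (1:ℝ) else 0) * (if Y l ω = i then (1:ℝ) else 0)
                * ((if Y k' ω = i then (1:ℝ) else 0) * (if Y k ω = i then (1:ℝ) else 0))
                    = (if Y k ω = i then (1:ℝ) else 0) * (if Y l ω = i then (1:ℝ) else 0) * (if Y k' ω = i then (1:ℝ) else 0) := by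
                  intro ω; by_cases h0 : Y k ω = i <;> by_cases h1 : Y l ω = i <;> by_cases h2 : Y k' ω = i <;> simp [h0, h1, h2]
                rw [integral_congr_ae (Filter.Eventually.of_forall hpt)]
                exact int3 μ P Y M hY hlaw hP hindep hi hi hi hlk hk'k hk'l
              · rw [if_neg hij]
                have hpt : ∀ ω, (if Y k ω = i then (1:ℝ) else 0) * (if Y l ω = i then (1:ℝ) else 0)
                * ((if Y k' ω = j then (1:ℝ) else 0) * (if Y k ω = j then (1:ℝ) else 0))
                    = 0 := by
                  intro ω
                  by_cases h1 : Y k ω = i <;> by_cases h2 : Y k ω = j <;> simp_all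
                rw [integral_congr_ae (Filter.Eventually.of_forall hpt), integral_zero]
            rw [Finset.sum_congr rfl fun i hi => Finset.sum_congr rfl fun j hj => by
              rw [hval i hi j hj]]
            rw [sumS6 P M hP hPsum]
            simp [hlk, Ne.symm hlk, hk'k, Ne.symm hk'k, hk'l, Ne.symm hk'l]
          · by_cases hl'l : l = l'
            · subst hl'l
              have hval : ∀ i ∈ M, ∀ j ∈ M,
                  (∫ ω, (if Y k ω = i then (1:ℝ) else 0) * (if Y l ω = i then (1:ℝ) else 0)
                  * ((if Y k' ω = j then (1:ℝ) else 0) * (if Y l ω = j then (1:ℝ) else 0)) ∂μ)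
                  = if i = j then P i * P i * P i else 0 := by
                intro i hi j hj
                by_cases hij : i = j
                · subst hij
                  rw [if_pos rfl]
                  have hpt : ∀ ω, (if Y k ω = i then (1:ℝ) else 0) * (if Y l ω = i then (1:ℝ) else 0)
                  * ((if Y k' ω = i then (1:ℝ) else 0) * (if Y l ω = i then (1:ℝ) else 0))
                      = (if Y k ω = i then (1:ℝ) else 0) * (if Y l ω = i then (1:ℝ) else 0) * (if Y k' ω = i then (1:ℝ) else 0) := by
                    intro ω; by_cases h0 : Y k ω = i <;> by_cases h1 : Y l ω = i <;> by_cases h2 : Y k' ω = i <;> simp [h0, h1, h2]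
                  rw [integral_congr_ae (Filter.Eventually.of_forall hpt)]
                  exact int3 μ P Y M hY hlaw hP hindep hi hi hi hlk hk'k hk'l
                · rw [if_neg hij]
                  have hpt : ∀ ω, (if Y k ω = i then (1:ℝ) else 0) * (if Y l ω = i then (1:ℝ) else 0)
                  * ((if Y k' ω = j then (1:ℝ) else 0) * (if Y l ω = j then (1:ℝ) else 0))
                      = 0 := by
                    intro ω
                    by_cases h1 : Y l ω = i <;> by_cases h2 : Y l ω = j <;> simp_all
                  rw [integral_congr_ae (Filter.Eventually.of_forall hpt), integral_zero]
              rw [Finset.sum_congr rfl fun i hi => Finset.sum_congr rfl fun j hj => by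
                rw [hval i hi j hj]]
              rw [sumS6 P M hP hPsum]
              simp [hlk, Ne.symm hlk, hk'k, Ne.symm hk'k, hk'l, Ne.symm hk'l]
            ·
              have hval : ∀ i ∈ M, ∀ j ∈ M,
                  (∫ ω, (if Y k ω = i then (1:ℝ) else 0) * (if Y l ω = i then (1:ℝ) else 0)
                  * ((if Y k' ω = j then (1:ℝ) else 0) * (if Y l' ω = j then (1:ℝ) else 0)) ∂μ)
                  = P i * P i * (P j * P j) := fun i hi j hj =>
                int4 μ P Y M hY hlaw hP hindep hi hi hj hj hlk hk'k hl'k hk'l hl'l hl'k'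
              rw [Finset.sum_congr rfl fun i hi => Finset.sum_congr rfl fun j hj => by
                rw [hval i hi j hj]]
              rw [sumS7 P M hP hPsum]
              simp [hlk, Ne.symm hlk, hk'k, Ne.symm hk'k, hk'l, Ne.symm hk'l, hl'k, Ne.symm hl'k, hl'l, Ne.symm hl'l, hl'k', Ne.symm hl'k']


omit hY hlaw hP hindep

lemma measT (hY : ∀ k, Measurable (Y k)) (k l : ℕ) : Measurable (Tfun P Y M k l) :=
  Finset.measurable_sum _ fun i _ =>
    ((meas_ind Y k i (hY k)).mul (meas_ind Y l i (hY l))).div_const (P i)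

lemma bddT (hP : ∀ i ∈ M, 0 < P i) (k l : ℕ) (ω : Ω) :
    |Tfun P Y M k l ω| ≤ ∑ i ∈ M, (P i)⁻¹ := by
  refine (Finset.abs_sum_le_sum_abs _ _).trans (Finset.sum_le_sum fun i hi => ?_)
  have hpi := hP i hi
  have h0 : (0:ℝ) ≤ (P i)⁻¹ := inv_nonneg.mpr hpi.le
  by_cases h1 : Y k ω = i <;> by_cases h2 : Y l ω = i <;>
    simp [h1, h2, abs_of_nonneg h0, one_div, h0]

lemma integrableT (hY : ∀ k, Measurable (Y k)) (hP : ∀ i ∈ M, 0 < P i) (k l : ℕ) :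
    Integrable (Tfun P Y M k l) μ :=
  integrable_bdd μ (measT P Y M hY k l) (bddT P Y M hP k l)

lemma integrableTT (hY : ∀ k, Measurable (Y k)) (hP : ∀ i ∈ M, 0 < P i) (k l k' l' : ℕ) :
    Integrable (fun ω => Tfun P Y M k l ω * Tfun P Y M k' l' ω) μ := by
  refine integrable_bdd μ ((measT P Y M hY k l).mul (measT P Y M hY k' l'))
    (C := (∑ i ∈ M, (P i)⁻¹) * (∑ i ∈ M, (P i)⁻¹)) fun ω => ?_
  rw [abs_mul]
  exact mul_le_mul (bddT P Y M hP k l ω) (bddT P Y M hP k' l' ω) (abs_nonneg _)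
    ((abs_nonneg _).trans (bddT P Y M hP k l ω))

lemma memLp2T (hY : ∀ k, Measurable (Y k)) (hP : ∀ i ∈ M, 0 < P i) (k l : ℕ) :
    MemLp (Tfun P Y M k l) 2 μ :=
  MemLp.of_bound (measT P Y M hY k l).aestronglyMeasurable _
    (Filter.Eventually.of_forall (bddT P Y M hP k l))

include hY hlaw hP hindep in
lemma var_inv_p (hPsum : ∑ i ∈ M, P i = 1) (k : ℕ) (hrange : ∀ ω, Y k ω ∈ M) :
    variance (fun ω => (P (Y k ω))⁻¹) μ
      = (∑ i ∈ M, (P i)⁻¹) - (M.card : ℝ) * M.card := by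
  have hTeq : (fun ω => (P (Y k ω))⁻¹) = Tfun P Y M k k := by
    funext ω
    unfold Tfun
    have : ∀ i ∈ M, (if Y k ω = i then (1:ℝ) else 0) * (if Y k ω = i then (1:ℝ) else 0) / P i
        = if Y k ω = i then (P i)⁻¹ else 0 := by
      intro i _
      by_cases h : Y k ω = i <;> simp [h, one_div]
    rw [Finset.sum_congr rfl this, Finset.sum_ite_eq M (Y k ω) (fun i => (P i)⁻¹),
      if_pos (hrange ω)]
  rw [hTeq, variance_eq_sub (memLp2T μ P Y M hY hP k k)]
  have hsq : (Tfun P Y M k k) ^ 2 = fun ω => Tfun P Y M k k ω * Tfun P Y M k k ω := by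
    funext ω; simp [pow_two]
  have hcov := covT μ P Y M hY hlaw hP hindep hPsum k k k k
  have hcov' : (∫ ω, Tfun P Y M k k ω * Tfun P Y M k k ω ∂μ)
      - (∫ ω, Tfun P Y M k k ω ∂μ) * ∫ ω, Tfun P Y M k k ω ∂μ
      = (∑ i ∈ M, (P i)⁻¹) - (M.card : ℝ) * M.card := by
    rw [hcov]; simp
  rw [hsq, pow_two]
  have hbeta : ∫ ω, (fun ω => Tfun P Y M k k ω * Tfun P Y M k k ω) ω ∂μ
      = ∫ ω, Tfun P Y M k k ω * Tfun P Y M k k ω ∂μ := rfl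
  rw [hbeta]
  linarith [hcov']

omit hY hlaw hP hindep in
lemma quad_sum (F : Finset ℕ) (V w : ℝ) :
    (∑ k ∈ F, ∑ l ∈ F, ∑ k' ∈ F, ∑ l' ∈ F,
      ((if l = k ∧ k' = k ∧ l' = k then V else 0) +
       (if l ≠ k ∧ ((k' = k ∧ l' = l) ∨ (k' = l ∧ l' = k)) then w else 0)))
    = (F.card : ℝ) * V + (F.card : ℝ) * ((F.card : ℝ) - 1) * (2 * w) := by
  simp only [Finset.sum_add_distrib]
  have part1 : ∑ k ∈ F, ∑ l ∈ F, ∑ k' ∈ F, ∑ l' ∈ F,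
      (if l = k ∧ k' = k ∧ l' = k then V else 0) = (F.card : ℝ) * V := by
    have step : ∀ k ∈ F, (∑ l ∈ F, ∑ k' ∈ F, ∑ l' ∈ F,
        (if l = k ∧ k' = k ∧ l' = k then V else 0)) = V := by
      intro k hk
      have h1 : ∀ l ∈ F, ∀ k' ∈ F, (∑ l' ∈ F, (if l = k ∧ k' = k ∧ l' = k then V else 0))
          = if l = k ∧ k' = k then V else 0 := by
        intro l _ k' _
        by_cases h : l = k ∧ k' = k
        · rw [if_pos h]
          have : ∀ l' ∈ F, (if l = k ∧ k' = k ∧ l' = k then V else 0)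
              = if l' = k then V else 0 := by
            intro l' _
            by_cases h' : l' = k <;> simp [h', h.1, h.2]
          rw [Finset.sum_congr rfl this, Finset.sum_ite_eq' F k (fun _ => V), if_pos hk]
        · rw [if_neg h]
          refine Finset.sum_eq_zero fun l' _ => ?_
          rw [if_neg (by tauto)]
      have h2 : ∀ l ∈ F, (∑ k' ∈ F, if l = k ∧ k' = k then V else 0)
          = if l = k then V else 0 := by
        intro l _
        by_cases h : l = k
        · rw [if_pos h]
          have : ∀ k' ∈ F, (if l = k ∧ k' = k then V else 0) = if k' = k then V else 0 := by
            intro k' _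
            by_cases h' : k' = k <;> simp [h', h]
          rw [Finset.sum_congr rfl this, Finset.sum_ite_eq' F k (fun _ => V), if_pos hk]
        · rw [if_neg h]
          refine Finset.sum_eq_zero fun k' _ => ?_
          rw [if_neg (by tauto)]
      rw [Finset.sum_congr rfl fun l hl => by
          rw [Finset.sum_congr rfl fun k' hk' => h1 l hl k' hk', h2 l hl]]
      rw [Finset.sum_ite_eq' F k (fun _ => V), if_pos hk]
    rw [Finset.sum_congr rfl step, Finset.sum_const, nsmul_eq_mul]
  have part2 : ∑ k ∈ F, ∑ l ∈ F, ∑ k' ∈ F, ∑ l' ∈ F,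
      (if l ≠ k ∧ ((k' = k ∧ l' = l) ∨ (k' = l ∧ l' = k)) then w else 0)
      = (F.card : ℝ) * ((F.card : ℝ) - 1) * (2 * w) := by
    have step2 : ∀ k ∈ F, ∀ l ∈ F, (∑ k' ∈ F, ∑ l' ∈ F,
        (if l ≠ k ∧ ((k' = k ∧ l' = l) ∨ (k' = l ∧ l' = k)) then w else 0))
        = if l = k then 0 else 2 * w := by
      intro k hk l hl
      by_cases hlk : l = k
      · rw [if_pos hlk]
        refine Finset.sum_eq_zero fun k' _ => Finset.sum_eq_zero fun l' _ => ?_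
        rw [if_neg (by tauto)]
      · rw [if_neg hlk]
        have hsplit : ∀ k' ∈ F, ∀ l' ∈ F,
            (if l ≠ k ∧ ((k' = k ∧ l' = l) ∨ (k' = l ∧ l' = k)) then w else 0)
            = (if k' = k then (if l' = l then w else 0) else 0)
              + (if k' = l then (if l' = k then w else 0) else 0) := by
          intro k' _ l' _
          by_cases h1 : k' = k <;> by_cases h2 : l' = l <;> by_cases h3 : k' = l <;>
            by_cases h4 : l' = k <;> simp_all
        rw [Finset.sum_congr rfl fun k' hk' => by
            rw [Finset.sum_congr rfl fun l' hl' => hsplit k' hk' l' hl',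
              Finset.sum_add_distrib]]
        rw [Finset.sum_add_distrib]
        have hA : ∑ k' ∈ F, ∑ l' ∈ F, (if k' = k then (if l' = l then w else 0) else 0)
            = w := by
          have : ∀ k' ∈ F, (∑ l' ∈ F, if k' = k then (if l' = l then w else 0) else 0)
              = if k' = k then w else 0 := by
            intro k' _
            by_cases h : k' = k
            · rw [if_pos h]
              simp only [if_pos h]
              rw [Finset.sum_ite_eq' F l (fun _ => w), if_pos hl]
            · simp [h]
          rw [Finset.sum_congr rfl this, Finset.sum_ite_eq' F k (fun _ => w), if_pos hk]
        have hB : ∑ k' ∈ F, ∑ l' ∈ F, (if k' = l then (if l' = k then w else 0) else 0)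
            = w := by
          have : ∀ k' ∈ F, (∑ l' ∈ F, if k' = l then (if l' = k then w else 0) else 0)
              = if k' = l then w else 0 := by
            intro k' _
            by_cases h : k' = l
            · rw [if_pos h]
              simp only [if_pos h]
              rw [Finset.sum_ite_eq' F k (fun _ => w), if_pos hk]
            · simp [h]
          rw [Finset.sum_congr rfl this, Finset.sum_ite_eq' F l (fun _ => w), if_pos hl]
        rw [hA, hB]
        ring
    rw [Finset.sum_congr rfl fun k hk => Finset.sum_congr rfl fun l hl => step2 k hk l hl]
    have hinner : ∀ k ∈ F, (∑ l ∈ F, if l = k then (0:ℝ) else 2 * w)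
        = (F.card : ℝ) * (2 * w) - 2 * w := by
      intro k hk
      have : ∀ l ∈ F, (if l = k then (0:ℝ) else 2 * w)
          = 2 * w - (if l = k then 2 * w else 0) := by
        intro l _; by_cases h : l = k <;> simp [h]
      rw [Finset.sum_congr rfl this, Finset.sum_sub_distrib, Finset.sum_const,
        Finset.sum_ite_eq' F k (fun _ => 2 * w), if_pos hk, nsmul_eq_mul]
    rw [Finset.sum_congr rfl hinner, Finset.sum_const, nsmul_eq_mul]
    ring
  rw [part1, part2]


lemma sum2_mul_sum2 {α : Type*} (F G : Finset α) (f g : α → α → ℝ) :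
    (∑ k ∈ F, ∑ l ∈ G, f k l) * (∑ k' ∈ F, ∑ l' ∈ G, g k' l')
      = ∑ k ∈ F, ∑ l ∈ G, ∑ k' ∈ F, ∑ l' ∈ G, f k l * g k' l' := by
  rw [Finset.sum_mul]
  refine Finset.sum_congr rfl fun k _ => ?_
  rw [Finset.sum_mul]
  refine Finset.sum_congr rfl fun l _ => ?_
  rw [Finset.mul_sum]
  refine Finset.sum_congr rfl fun k' _ => ?_
  rw [Finset.mul_sum]

end Aux

lemma chiSq_rewrite {Ω : Type*} (m : ℕ → ℕ) (p : ℕ → ℕ → ℝ) (X : ℕ → ℕ → Ω → ℕ) (n : ℕ)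
    (hn : 1 ≤ n)
    (hp_pos : ∀ i ∈ Finset.Icc 1 (m n), 0 < p n i)
    (hp_sum : ∑ i ∈ Finset.Icc 1 (m n), p n i = 1)
    (hX_range : ∀ k ω, X n k ω ∈ Finset.Icc 1 (m n)) (ω : Ω) :
    chiSq m p X n ω
      = (n : ℝ)⁻¹ * (∑ k ∈ Finset.Icc 1 n, ∑ l ∈ Finset.Icc 1 n,
          Tfun (p n) (X n) (Finset.Icc 1 (m n)) k l ω) - n := by
  set M := Finset.Icc 1 (m n) with hM
  set F := Finset.Icc 1 n with hF
  have hn0 : (n : ℝ) ≠ 0 := Nat.cast_ne_zero.mpr (by omega)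
  have hFcard : (F.card : ℝ) = (n : ℝ) := by simp [hF, Nat.card_Icc]
  have hsum_ind : ∀ k, ∑ i ∈ M, (if X n k ω = i then (1:ℝ) else 0) = 1 := by
    intro k
    rw [Finset.sum_ite_eq M (X n k ω) (fun _ => (1:ℝ)), if_pos (hX_range k ω)]
  have hq1 : ∑ i ∈ M, empFreq X n i ω = 1 := by
    unfold empFreq
    rw [← Finset.mul_sum, Finset.sum_comm]
    rw [Finset.sum_congr rfl fun k (_ : k ∈ F) => hsum_ind k, Finset.sum_const,
      nsmul_eq_mul, mul_one]
    rw [hFcard, inv_mul_cancel₀ hn0]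
  have hS : ∀ i, ∑ k ∈ F, (if X n k ω = i then (1:ℝ) else 0) = (n : ℝ) * empFreq X n i ω := by
    intro i
    unfold empFreq
    rw [← mul_assoc, mul_inv_cancel₀ hn0, one_mul]
  have hkey : ∑ k ∈ F, ∑ l ∈ F, Tfun (p n) (X n) M k l ω
      = (n : ℝ) * (n : ℝ) * ∑ i ∈ M, (empFreq X n i ω) ^ 2 / p n i := by
    unfold Tfun
    rw [Finset.sum_congr rfl fun k (_ : k ∈ F) => Finset.sum_comm, Finset.sum_comm]
    have h2 : ∀ i ∈ M, (∑ k ∈ F, ∑ l ∈ F,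
        (if X n k ω = i then (1:ℝ) else 0) * (if X n l ω = i then (1:ℝ) else 0) / p n i)
        = (n : ℝ) * (n : ℝ) * ((empFreq X n i ω) ^ 2 / p n i) := by
      intro i _
      rw [Finset.sum_congr rfl fun k (_ : k ∈ F) => (Finset.sum_div F _ (p n i)).symm,
        ← Finset.sum_div, ← Finset.sum_mul_sum, hS i, pow_two]
      ring
    rw [Finset.sum_congr rfl h2, ← Finset.mul_sum]
  unfold chiSq
  have hterm : ∀ i ∈ M, (empFreq X n i ω - p n i) ^ 2 / p n i
      = (empFreq X n i ω) ^ 2 / p n i - 2 * empFreq X n i ω + p n i := by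
    intro i hi
    have hne := (hp_pos i hi).ne'
    field_simp
    ring
  rw [Finset.sum_congr rfl hterm, Finset.sum_add_distrib, Finset.sum_sub_distrib,
    ← Finset.mul_sum, hq1, hp_sum]
  have hQ : ∑ i ∈ M, (empFreq X n i ω) ^ 2 / p n i
      = (∑ k ∈ F, ∑ l ∈ F, Tfun (p n) (X n) M k l ω) / ((n:ℝ) * (n:ℝ)) := by
    rw [hkey]
    field_simp
  rw [hQ]
  field_simp
  ring

theorem chisq_variance
    {Ω : Type*} [MeasurableSpace Ω] (μ : Measure Ω) [IsProbabilityMeasure μ]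
    (m : ℕ → ℕ) (p : ℕ → ℕ → ℝ) (X : ℕ → ℕ → Ω → ℕ)
    (hp_pos : ∀ n : ℕ, ∀ i ∈ Finset.Icc 1 (m n), 0 < p n i)
    (hp_sum : ∀ n : ℕ, ∑ i ∈ Finset.Icc 1 (m n), p n i = 1)
    (hX_meas : ∀ n k, Measurable (X n k))
    (hX_range : ∀ n k ω, X n k ω ∈ Finset.Icc 1 (m n))
    (hX_law : ∀ n k, ∀ i ∈ Finset.Icc 1 (m n), μ (X n k ⁻¹' {i}) = ENNReal.ofReal (p n i))
    (hX_indep : ∀ n : ℕ, iIndepFun (X n) μ)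
    :
    ∀ n : ℕ, 1 ≤ n →
      ProbabilityTheory.variance (fun ω => chiSq m p X n ω) μ =
        (n : ℝ)⁻¹ * (ProbabilityTheory.variance (fun ω => (p n (X n 1 ω))⁻¹) μ +
          2 * ((n : ℝ) - 1) * ((m n : ℝ) - 1)) := by
  intro n hn
  set M := Finset.Icc 1 (m n) with hM
  set F := Finset.Icc 1 n with hF
  set P : ℕ → ℝ := p n with hPdef
  set Y : ℕ → Ω → ℕ := X n with hYdef
  have hprob : ∀ i ∈ M, 0 < P i := hp_pos n
  have hsum : ∑ i ∈ M, P i = 1 := hp_sum n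
  have hmeas : ∀ k, Measurable (Y k) := hX_meas n
  have hrange : ∀ k ω, Y k ω ∈ M := hX_range n
  have hlawn : ∀ k, ∀ i ∈ M, μ (Y k ⁻¹' {i}) = ENNReal.ofReal (P i) := hX_law n
  have hind : iIndepFun Y μ := hX_indep n
  have hn0 : (n : ℝ) ≠ 0 := Nat.cast_ne_zero.mpr (by omega)
  have hcardM : (M.card : ℝ) = (m n : ℝ) := by simp [hM, Nat.card_Icc]
  have hcardF : (F.card : ℝ) = (n : ℝ) := by simp [hF, Nat.card_Icc]
  set Q : ℝ := ∑ i ∈ M, (P i)⁻¹ with hQdef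
  set W : Ω → ℝ := fun ω => ∑ k ∈ F, ∑ l ∈ F, Tfun P Y M k l ω with hWdef
  have hWmeas : Measurable W :=
    Finset.measurable_sum _ fun k _ => Finset.measurable_sum _ fun l _ => measT P Y M hmeas k l
  have hWbdd : ∀ ω, |W ω| ≤ ∑ _k ∈ F, ∑ _l ∈ F, Q := by
    intro ω
    refine (Finset.abs_sum_le_sum_abs _ _).trans (Finset.sum_le_sum fun k _ => ?_)
    refine (Finset.abs_sum_le_sum_abs _ _).trans (Finset.sum_le_sum fun l _ => ?_)
    exact bddT P Y M hprob k l ω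
  have hWint : Integrable W μ :=
    integrable_finset_sum _ fun k _ => integrable_finset_sum _ fun l _ =>
      integrableT μ P Y M hmeas hprob k l
  have hWWint : Integrable (fun ω => W ω * W ω) μ := by
    refine integrable_bdd μ (hWmeas.mul hWmeas)
      (C := (∑ _k ∈ F, ∑ _l ∈ F, Q) * (∑ _k ∈ F, ∑ _l ∈ F, Q)) fun ω => ?_
    rw [abs_mul]
    exact mul_le_mul (hWbdd ω) (hWbdd ω) (abs_nonneg _) ((abs_nonneg _).trans (hWbdd ω))
  have hmemW : MemLp W 2 μ :=
    MemLp.of_bound hWmeas.aestronglyMeasurable _ (Filter.Eventually.of_forall hWbdd)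
  -- the integrals of W and W * W
  have hIW : ∫ ω, W ω ∂μ = ∑ k ∈ F, ∑ l ∈ F, ∫ ω, Tfun P Y M k l ω ∂μ := by
    rw [hWdef]
    rw [integral_finset_sum _ fun k _ => integrable_finset_sum _ fun l _ =>
      integrableT μ P Y M hmeas hprob k l]
    exact Finset.sum_congr rfl fun k _ =>
      integral_finset_sum _ fun l _ => integrableT μ P Y M hmeas hprob k l
  have hIWW : ∫ ω, W ω * W ω ∂μ
      = ∑ k ∈ F, ∑ l ∈ F, ∑ k' ∈ F, ∑ l' ∈ F,
          ∫ ω, Tfun P Y M k l ω * Tfun P Y M k' l' ω ∂μ := by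
    have hpt : ∀ ω, W ω * W ω = ∑ k ∈ F, ∑ l ∈ F, ∑ k' ∈ F, ∑ l' ∈ F,
        Tfun P Y M k l ω * Tfun P Y M k' l' ω := by
      intro ω
      exact sum2_mul_sum2 F F _ _
    rw [integral_congr_ae (Filter.Eventually.of_forall hpt)]
    rw [integral_finset_sum _ fun k _ => integrable_finset_sum _ fun l _ =>
      integrable_finset_sum _ fun k' _ => integrable_finset_sum _ fun l' _ =>
        integrableTT μ P Y M hmeas hprob k l k' l']
    refine Finset.sum_congr rfl fun k _ => ?_
    rw [integral_finset_sum _ fun l _ => integrable_finset_sum _ fun k' _ =>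
      integrable_finset_sum _ fun l' _ => integrableTT μ P Y M hmeas hprob k l k' l']
    refine Finset.sum_congr rfl fun l _ => ?_
    rw [integral_finset_sum _ fun k' _ => integrable_finset_sum _ fun l' _ =>
      integrableTT μ P Y M hmeas hprob k l k' l']
    refine Finset.sum_congr rfl fun k' _ => ?_
    exact integral_finset_sum _ fun l' _ => integrableTT μ P Y M hmeas hprob k l k' l'
  -- the key second moment difference
  have hdiff : (∫ ω, W ω * W ω ∂μ) - (∫ ω, W ω ∂μ) * (∫ ω, W ω ∂μ)
      = (F.card : ℝ) * (Q - (M.card : ℝ) * M.card)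
        + (F.card : ℝ) * ((F.card : ℝ) - 1) * (2 * ((M.card : ℝ) - 1)) := by
    rw [hIWW, hIW, sum2_mul_sum2 F F _ _]
    rw [← Finset.sum_sub_distrib]
    rw [Finset.sum_congr rfl fun k _ => (Finset.sum_sub_distrib _ _).symm]
    rw [Finset.sum_congr rfl fun k _ => Finset.sum_congr rfl fun l _ =>
      (Finset.sum_sub_distrib _ _).symm]
    rw [Finset.sum_congr rfl fun k _ => Finset.sum_congr rfl fun l _ =>
      Finset.sum_congr rfl fun k' _ => (Finset.sum_sub_distrib _ _).symm]
    rw [Finset.sum_congr rfl fun k _ => Finset.sum_congr rfl fun l _ =>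
      Finset.sum_congr rfl fun k' _ => Finset.sum_congr rfl fun l' _ =>
        covT μ P Y M hmeas hlawn hprob hind hsum k l k' l']
    exact quad_sum F (Q - (M.card : ℝ) * M.card) ((M.card : ℝ) - 1)
  -- rewrite chi-square
  have hchi : (fun ω => chiSq m p X n ω) = fun ω => (n : ℝ)⁻¹ * W ω - (n : ℝ) := by
    funext ω
    exact chiSq_rewrite m p X n hn (hp_pos n) (hp_sum n) (hX_range n) ω
  rw [hchi]
  have hmemf : MemLp (fun ω => (n : ℝ)⁻¹ * W ω - (n : ℝ)) 2 μ :=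
    (hmemW.const_mul _).sub (memLp_const _)
  rw [variance_eq_sub hmemf]
  have hf2 : (fun ω => (n : ℝ)⁻¹ * W ω - (n : ℝ)) ^ 2
      = fun ω => ((n:ℝ)⁻¹ * (n:ℝ)⁻¹) * (W ω * W ω) - (2 * (n:ℝ)⁻¹ * (n:ℝ)) * W ω
          + (n:ℝ) * (n:ℝ) := by
    funext ω
    simp only [Pi.pow_apply]
    ring
  have hint2 : ∫ ω, (((n:ℝ)⁻¹ * (n:ℝ)⁻¹) * (W ω * W ω) - (2 * (n:ℝ)⁻¹ * (n:ℝ)) * W ω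
      + (n:ℝ) * (n:ℝ)) ∂μ
      = ((n:ℝ)⁻¹ * (n:ℝ)⁻¹) * (∫ ω, W ω * W ω ∂μ) - (2 * (n:ℝ)⁻¹ * (n:ℝ)) * (∫ ω, W ω ∂μ)
        + (n:ℝ) * (n:ℝ) := by
    have hA : Integrable (fun ω => ((n:ℝ)⁻¹ * (n:ℝ)⁻¹) * (W ω * W ω)) μ :=
      hWWint.const_mul _
    have hB : Integrable (fun ω => (2 * (n:ℝ)⁻¹ * (n:ℝ)) * W ω) μ := hWint.const_mul _
    have hAB : Integrable (fun ω => ((n:ℝ)⁻¹ * (n:ℝ)⁻¹) * (W ω * W ω)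
        - (2 * (n:ℝ)⁻¹ * (n:ℝ)) * W ω) μ := hA.sub hB
    rw [integral_add hAB (integrable_const _), integral_sub hA hB,
      integral_const_mul, integral_const_mul, integral_const]
    simp
  have hint1 : ∫ ω, ((n:ℝ)⁻¹ * W ω - (n:ℝ)) ∂μ
      = (n:ℝ)⁻¹ * (∫ ω, W ω ∂μ) - (n:ℝ) := by
    have hC : Integrable (fun ω => (n:ℝ)⁻¹ * W ω) μ := hWint.const_mul _
    rw [integral_sub hC (integrable_const _), integral_const_mul, integral_const]
    simp
  rw [hf2, hint2, hint1]
  have hvar1 : variance (fun ω => (p n (Y 1 ω))⁻¹) μ = Q - (M.card : ℝ) * M.card := by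
    have := var_inv_p μ P Y M hmeas hlawn hprob hind hsum 1 (fun ω => hrange 1 ω)
    exact this
  rw [show (fun ω => (p n (X n 1 ω))⁻¹) = (fun ω => (p n (Y 1 ω))⁻¹) from rfl, hvar1]
  rw [← hcardM]
  rw [hcardF] at hdiff
  have h1 : (∫ ω, W ω * W ω ∂μ)
      = (∫ ω, W ω ∂μ) * (∫ ω, W ω ∂μ) + (n:ℝ) * (Q - (M.card : ℝ) * M.card)
        + (n:ℝ) * ((n:ℝ) - 1) * (2 * ((M.card : ℝ) - 1)) := by linarith [hdiff]
  rw [h1]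
  field_simp
  ring
end

section
/- The sum of third moments satisfies Σ_{k=1}^n E[A³_{n,k}] = m_n^{-3} Σ_{k=1}^n [(k−1) E(p_n^{-2}(X_n)) + 3(k−1)(k−2) m_n + (k−1)(k−2)(k−3)]. -/
open MeasureTheory ProbabilityTheory Filter
open scoped BoundedContinuousFunction

noncomputable def Astat {Ω : Type*} (m : ℕ → ℕ) (p : ℕ → ℕ → ℝ) (X : ℕ → ℕ → Ω → ℕ)
    (n k : ℕ) (ω : Ω) : ℝ :=
  (m n : ℝ)⁻¹ * ∑ j ∈ Finset.Icc 1 (k - 1),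
    (if X n j ω = X n k ω then (1 : ℝ) else 0) / p n (X n j ω)

private lemma card_pair_ite (a b : ℕ) : ({a, b} : Finset ℕ).card = if b = a then 1 else 2 := by
  rcases eq_or_ne b a with h | h
  · subst h; simp
  · rw [if_neg h, Finset.card_pair (Ne.symm h)]

private lemma card_triple_ite (a b c : ℕ) (hab : a ≠ b) :
    ({a, b, c} : Finset ℕ).card = if c = a ∨ c = b then 2 else 3 := by
  by_cases h1 : c = a
  · subst h1
    rw [if_pos (Or.inl rfl)]
    have h : ({c, b, c} : Finset ℕ) = {c, b} := by
      ext x; simp [Finset.mem_insert] <;> tauto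
    rw [h, Finset.card_pair hab]
  · by_cases h2 : c = b
    · subst h2
      rw [if_pos (Or.inr rfl)]
      have h : ({a, c, c} : Finset ℕ) = {a, c} := by
        ext x; simp [Finset.mem_insert] <;> tauto
      rw [h, Finset.card_pair hab]
    · rw [if_neg (by tauto)]
      rw [Finset.card_insert_of_notMem (by simp [hab, Ne.symm h1]),
        Finset.card_insert_of_notMem (by simp [Ne.symm h2]), Finset.card_singleton]

private lemma tripleSum (T : Finset ℕ) (q : ℝ) :
    ∑ j1 ∈ T, ∑ j2 ∈ T, ∑ j3 ∈ T, q ^ (({j1, j2, j3} : Finset ℕ).card) =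
      (T.card : ℝ) * q + 3 * ((T.card : ℝ) * ((T.card : ℝ) - 1)) * q ^ 2 +
        (T.card : ℝ) * ((T.card : ℝ) - 1) * ((T.card : ℝ) - 2) * q ^ 3 := by
  have inner : ∀ j1 ∈ T, ∀ j2 ∈ T,
      ∑ j3 ∈ T, q ^ (({j1, j2, j3} : Finset ℕ).card) =
        if j2 = j1 then q + ((T.card : ℝ) - 1) * q ^ 2
        else 2 * q ^ 2 + ((T.card : ℝ) - 2) * q ^ 3 := by
    intro j1 h1 j2 h2
    by_cases h : j2 = j1
    · subst h
      rw [if_pos rfl]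
      have he : ∀ j3, q ^ (({j2, j2, j3} : Finset ℕ).card) =
          q ^ 2 + (if j3 = j2 then q - q ^ 2 else 0) := by
        intro j3
        have hc : ({j2, j2, j3} : Finset ℕ) = {j2, j3} := by
          ext x; simp [Finset.mem_insert] <;> tauto
        rw [hc, card_pair_ite]
        by_cases h3 : j3 = j2 <;> simp [h3] <;> ring
      rw [Finset.sum_congr rfl (fun j3 _ => he j3), Finset.sum_add_distrib,
        Finset.sum_const, Finset.sum_ite_eq' T j2 (fun _ => q - q ^ 2), if_pos h2]
      push_cast
      ring
    · rw [if_neg h]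
      have he : ∀ j3, q ^ (({j1, j2, j3} : Finset ℕ).card) =
          q ^ 3 + ((if j3 = j1 then q ^ 2 - q ^ 3 else 0) +
            (if j3 = j2 then q ^ 2 - q ^ 3 else 0)) := by
        intro j3
        rw [card_triple_ite j1 j2 j3 (Ne.symm h)]
        by_cases h3 : j3 = j1
        · subst h3
          rw [if_pos (Or.inl rfl), if_pos rfl, if_neg (fun e => h (e.symm.trans rfl) )]
          ring
        · by_cases h4 : j3 = j2
          · subst h4
            rw [if_pos (Or.inr rfl), if_neg h3, if_pos rfl]
            ring
          · rw [if_neg (by tauto), if_neg h3, if_neg h4]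
            ring
      rw [Finset.sum_congr rfl (fun j3 _ => he j3), Finset.sum_add_distrib,
        Finset.sum_add_distrib, Finset.sum_const,
        Finset.sum_ite_eq' T j1 (fun _ => q ^ 2 - q ^ 3), if_pos h1,
        Finset.sum_ite_eq' T j2 (fun _ => q ^ 2 - q ^ 3), if_pos h2]
      push_cast
      ring
  rw [Finset.sum_congr rfl (fun j1 h1 => Finset.sum_congr rfl (fun j2 h2 => inner j1 h1 j2 h2))]
  have outer : ∀ j1 ∈ T,
      ∑ j2 ∈ T, (if j2 = j1 then q + ((T.card : ℝ) - 1) * q ^ 2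
        else 2 * q ^ 2 + ((T.card : ℝ) - 2) * q ^ 3) =
      (q + ((T.card : ℝ) - 1) * q ^ 2) +
        ((T.card : ℝ) - 1) * (2 * q ^ 2 + ((T.card : ℝ) - 2) * q ^ 3) := by
    intro j1 h1
    have he : ∀ j2, (if j2 = j1 then q + ((T.card : ℝ) - 1) * q ^ 2
        else 2 * q ^ 2 + ((T.card : ℝ) - 2) * q ^ 3) =
        (2 * q ^ 2 + ((T.card : ℝ) - 2) * q ^ 3) +
          (if j2 = j1 then (q + ((T.card : ℝ) - 1) * q ^ 2) -
            (2 * q ^ 2 + ((T.card : ℝ) - 2) * q ^ 3) else 0) := by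
      intro j2; by_cases h3 : j2 = j1 <;> simp [h3] <;> ring
    rw [Finset.sum_congr rfl (fun j2 _ => he j2), Finset.sum_add_distrib,
      Finset.sum_const, Finset.sum_ite_eq' T j1, if_pos h1]
    push_cast
    ring
  rw [Finset.sum_congr rfl outer, Finset.sum_const]
  push_cast
  ring

theorem astat_third_moment_sum
    {Ω : Type*} [MeasurableSpace Ω] (μ : Measure Ω) [IsProbabilityMeasure μ]
    (m : ℕ → ℕ) (p : ℕ → ℕ → ℝ) (X : ℕ → ℕ → Ω → ℕ)
    (hp_pos : ∀ n : ℕ, ∀ i ∈ Finset.Icc 1 (m n), 0 < p n i)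
    (hp_sum : ∀ n : ℕ, ∑ i ∈ Finset.Icc 1 (m n), p n i = 1)
    (hX_meas : ∀ n k, Measurable (X n k))
    (hX_range : ∀ n k ω, X n k ω ∈ Finset.Icc 1 (m n))
    (hX_law : ∀ n k, ∀ i ∈ Finset.Icc 1 (m n), μ (X n k ⁻¹' {i}) = ENNReal.ofReal (p n i))
    (hX_indep : ∀ n : ℕ, iIndepFun (X n) μ)
    :
    ∀ n : ℕ, ∑ k ∈ Finset.Icc 1 n, ∫ ω, (Astat m p X n k ω) ^ 3 ∂μ =
      ((m n : ℝ) ^ 3)⁻¹ * ∑ k ∈ Finset.Icc 1 n,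
        (((k : ℝ) - 1) * (∫ ω, ((p n (X n 1 ω))⁻¹) ^ 2 ∂μ) +
          3 * ((k : ℝ) - 1) * ((k : ℝ) - 2) * (m n : ℝ) +
          ((k : ℝ) - 1) * ((k : ℝ) - 2) * ((k : ℝ) - 3)) := by
  intro n
  have hq0 : ∀ i ∈ Finset.Icc 1 (m n), p n i ≠ 0 := fun i hi => (hp_pos n i hi).ne'
  have hq_nonneg : ∀ i ∈ Finset.Icc 1 (m n), 0 ≤ p n i := fun i hi => (hp_pos n i hi).le
  -- measurability of the 4-fold events
  have hmeasE : ∀ (a b c d i : ℕ), MeasurableSet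
      {ω | X n a ω = i ∧ X n b ω = i ∧ X n c ω = i ∧ X n d ω = i} := by
    intro a b c d i
    have h : ∀ e : ℕ, MeasurableSet (X n e ⁻¹' {i}) :=
      fun e => hX_meas n e (measurableSet_singleton i)
    have he : {ω | X n a ω = i ∧ X n b ω = i ∧ X n c ω = i ∧ X n d ω = i} =
        (X n a ⁻¹' {i}) ∩ ((X n b ⁻¹' {i}) ∩ ((X n c ⁻¹' {i}) ∩ (X n d ⁻¹' {i}))) := by
      ext ω; simp [Set.mem_preimage, Set.mem_setOf_eq]
    rw [he]
    exact (h a).inter ((h b).inter ((h c).inter (h d)))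
  -- indicator functions as Set.indicator
  have hind_eq : ∀ (a b c d i : ℕ),
      (fun ω => if X n a ω = i ∧ X n b ω = i ∧ X n c ω = i ∧ X n d ω = i then (1 : ℝ) else 0) =
      Set.indicator {ω | X n a ω = i ∧ X n b ω = i ∧ X n c ω = i ∧ X n d ω = i}
        (fun _ => (1 : ℝ)) := by
    intro a b c d i
    funext ω
    by_cases h : X n a ω = i ∧ X n b ω = i ∧ X n c ω = i ∧ X n d ω = i <;>
      simp [Set.indicator_apply, Set.mem_setOf_eq, h]
  have hint_ind : ∀ (a b c d i : ℕ), Integrable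
      (fun ω => if X n a ω = i ∧ X n b ω = i ∧ X n c ω = i ∧ X n d ω = i then (1 : ℝ) else 0)
      μ := by
    intro a b c d i
    rw [hind_eq]
    exact (integrable_indicator_iff (hmeasE a b c d i)).2
      (integrableOn_const (measure_ne_top μ _))
  have hint_val : ∀ (a b c d i : ℕ),
      ∫ ω, (if X n a ω = i ∧ X n b ω = i ∧ X n c ω = i ∧ X n d ω = i then (1 : ℝ) else 0) ∂μ =
      (μ {ω | X n a ω = i ∧ X n b ω = i ∧ X n c ω = i ∧ X n d ω = i}).toReal := by
    intro a b c d i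
    rw [hind_eq, integral_indicator_const (1 : ℝ) (hmeasE a b c d i), smul_eq_mul, mul_one, measureReal_def]
  -- measure of the 4-fold event via independence
  have hmeasval : ∀ (k' j1 j2 j3 i : ℕ), i ∈ Finset.Icc 1 (m n) →
      k' ∉ ({j1, j2, j3} : Finset ℕ) →
      (μ {ω | X n k' ω = i ∧ X n j1 ω = i ∧ X n j2 ω = i ∧ X n j3 ω = i}).toReal =
        p n i * p n i ^ (({j1, j2, j3} : Finset ℕ).card) := by
    intro k' j1 j2 j3 i hi hk'
    have hsets : {ω | X n k' ω = i ∧ X n j1 ω = i ∧ X n j2 ω = i ∧ X n j3 ω = i} =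
        ⋂ j ∈ (insert k' ({j1, j2, j3} : Finset ℕ)), X n j ⁻¹' {i} := by
      ext ω
      simp only [Set.mem_iInter, Finset.mem_insert, Set.mem_preimage, Set.mem_singleton_iff,
        Set.mem_setOf_eq, Finset.mem_singleton]
      constructor
      · rintro ⟨h1, h2, h3, h4⟩ j hj
        rcases hj with rfl | rfl | rfl | rfl <;> assumption
      · intro h
        exact ⟨h k' (Or.inl rfl), h j1 (Or.inr (Or.inl rfl)), h j2 (Or.inr (Or.inr (Or.inl rfl))),
          h j3 (Or.inr (Or.inr (Or.inr rfl)))⟩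
    rw [hsets, (hX_indep n).measure_inter_preimage_eq_mul _
      (fun j _ => measurableSet_singleton i)]
    rw [Finset.prod_congr rfl (fun j _ => hX_law n j i hi), Finset.prod_const,
      Finset.card_insert_of_notMem hk', pow_succ, ENNReal.toReal_mul, ENNReal.toReal_pow,
      ENNReal.toReal_ofReal (hq_nonneg i hi)]
    ring
  -- pointwise expansion of Astat^3
  have hpt : ∀ (k : ℕ), 1 ≤ k → ∀ ω, (Astat m p X n k ω) ^ 3 =
      ((m n : ℝ)⁻¹) ^ 3 * ∑ i ∈ Finset.Icc 1 (m n), ((p n i)⁻¹) ^ 3 *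
        ∑ j1 ∈ Finset.Icc 1 (k - 1), ∑ j2 ∈ Finset.Icc 1 (k - 1), ∑ j3 ∈ Finset.Icc 1 (k - 1),
          (if X n k ω = i ∧ X n j1 ω = i ∧ X n j2 ω = i ∧ X n j3 ω = i then (1 : ℝ) else 0) := by
    intro k hk ω
    have hi₀ : X n k ω ∈ Finset.Icc 1 (m n) := hX_range n k ω
    set i₀ := X n k ω with hi₀def
    set B : ℝ := ∑ j ∈ Finset.Icc 1 (k - 1), (if X n j ω = i₀ then (1 : ℝ) else 0) with hB
    have h1 : Astat m p X n k ω = (m n : ℝ)⁻¹ * ((p n i₀)⁻¹ * B) := by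
      rw [Astat, ← hi₀def]
      congr 1
      rw [hB, Finset.mul_sum]
      refine Finset.sum_congr rfl fun j _ => ?_
      by_cases h : X n j ω = i₀
      · rw [if_pos h, h, one_div, mul_one]
      · rw [if_neg h, zero_div, mul_zero]
    have h2 : ∑ i ∈ Finset.Icc 1 (m n), ((p n i)⁻¹) ^ 3 *
        ∑ j1 ∈ Finset.Icc 1 (k - 1), ∑ j2 ∈ Finset.Icc 1 (k - 1), ∑ j3 ∈ Finset.Icc 1 (k - 1),
          (if X n k ω = i ∧ X n j1 ω = i ∧ X n j2 ω = i ∧ X n j3 ω = i then (1 : ℝ) else 0) =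
        ((p n i₀)⁻¹) ^ 3 * B ^ 3 := by
      rw [Finset.sum_eq_single i₀]
      · congr 1
        have e1 : B * B = ∑ j2 ∈ Finset.Icc 1 (k - 1), ∑ j3 ∈ Finset.Icc 1 (k - 1),
            (if X n j2 ω = i₀ then (1 : ℝ) else 0) * (if X n j3 ω = i₀ then (1 : ℝ) else 0) := by
          rw [hB]; exact Finset.sum_mul_sum _ _ _ _
        have hB3 : B ^ 3 = ∑ j1 ∈ Finset.Icc 1 (k - 1), ∑ j2 ∈ Finset.Icc 1 (k - 1),
            ∑ j3 ∈ Finset.Icc 1 (k - 1),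
            (if X n j1 ω = i₀ then (1 : ℝ) else 0) * ((if X n j2 ω = i₀ then (1 : ℝ) else 0) *
              (if X n j3 ω = i₀ then (1 : ℝ) else 0)) := by
          calc B ^ 3 = B * (B * B) := by ring
            _ = ∑ j1 ∈ Finset.Icc 1 (k - 1), (if X n j1 ω = i₀ then (1 : ℝ) else 0) *
                ∑ j2 ∈ Finset.Icc 1 (k - 1), ∑ j3 ∈ Finset.Icc 1 (k - 1),
                  (if X n j2 ω = i₀ then (1 : ℝ) else 0) *
                    (if X n j3 ω = i₀ then (1 : ℝ) else 0) := by
                rw [e1]; conv_lhs => rw [hB]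
                rw [Finset.sum_mul]
            _ = _ := by simp only [Finset.mul_sum]
        rw [hB3]
        refine Finset.sum_congr rfl fun j1 _ => Finset.sum_congr rfl fun j2 _ =>
          Finset.sum_congr rfl fun j3 _ => ?_
        by_cases e1 : X n j1 ω = i₀ <;> by_cases e2 : X n j2 ω = i₀ <;>
          by_cases e3 : X n j3 ω = i₀ <;> simp [e1, e2, e3, ← hi₀def]
      · intro i _ hne
        have h0 : ¬ (X n k ω = i) := by rw [← hi₀def]; exact Ne.symm hne
        simp [h0]
      · intro h
        exact absurd hi₀ h
    rw [h1, h2]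
    ring
  -- per-k integral value
  have hik : ∀ k ∈ Finset.Icc 1 n, ∫ ω, (Astat m p X n k ω) ^ 3 ∂μ =
      ((m n : ℝ) ^ 3)⁻¹ *
        (((k : ℝ) - 1) * (∑ i ∈ Finset.Icc 1 (m n), (p n i)⁻¹) +
          3 * ((k : ℝ) - 1) * ((k : ℝ) - 2) * (m n : ℝ) +
          ((k : ℝ) - 1) * ((k : ℝ) - 2) * ((k : ℝ) - 3)) := by
    intro k hkmem
    obtain ⟨hk1, hkn⟩ := Finset.mem_Icc.1 hkmem
    have hTcard : ((Finset.Icc 1 (k - 1)).card : ℝ) = (k : ℝ) - 1 := by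
      rw [Nat.card_Icc]
      have : k - 1 + 1 - 1 = k - 1 := by omega
      rw [this]
      push_cast [Nat.cast_sub hk1]
      ring
    have hkT : ∀ j1 ∈ Finset.Icc 1 (k - 1), ∀ j2 ∈ Finset.Icc 1 (k - 1),
        ∀ j3 ∈ Finset.Icc 1 (k - 1), k ∉ ({j1, j2, j3} : Finset ℕ) := by
      intro j1 hj1 j2 hj2 j3 hj3
      have e1 := (Finset.mem_Icc.1 hj1).2
      have e2 := (Finset.mem_Icc.1 hj2).2
      have e3 := (Finset.mem_Icc.1 hj3).2
      simp only [Finset.mem_insert, Finset.mem_singleton]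
      push_neg
      omega
    rw [integral_congr_ae (Filter.Eventually.of_forall (hpt k hk1)), integral_const_mul]
    have hint3 : ∀ i : ℕ, Integrable (fun ω =>
        ∑ j1 ∈ Finset.Icc 1 (k - 1), ∑ j2 ∈ Finset.Icc 1 (k - 1), ∑ j3 ∈ Finset.Icc 1 (k - 1),
          (if X n k ω = i ∧ X n j1 ω = i ∧ X n j2 ω = i ∧ X n j3 ω = i then (1 : ℝ) else 0)) μ :=
      fun i => integrable_finset_sum _ (fun j1 _ => integrable_finset_sum _
        (fun j2 _ => integrable_finset_sum _ (fun j3 _ => hint_ind k j1 j2 j3 i)))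
    rw [integral_finset_sum _ (fun i _ => ((hint3 i).const_mul _))]
    have hsum_i : ∀ i ∈ Finset.Icc 1 (m n),
        ∫ ω, ((p n i)⁻¹) ^ 3 *
          ∑ j1 ∈ Finset.Icc 1 (k - 1), ∑ j2 ∈ Finset.Icc 1 (k - 1), ∑ j3 ∈ Finset.Icc 1 (k - 1),
            (if X n k ω = i ∧ X n j1 ω = i ∧ X n j2 ω = i ∧ X n j3 ω = i then (1 : ℝ) else 0) ∂μ =
        ((k : ℝ) - 1) * (p n i)⁻¹ + 3 * ((k : ℝ) - 1) * ((k : ℝ) - 2) +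
          ((k : ℝ) - 1) * ((k : ℝ) - 2) * ((k : ℝ) - 3) * p n i := by
      intro i hi
      rw [integral_const_mul]
      rw [integral_finset_sum _ (fun j1 _ => integrable_finset_sum _
        (fun j2 _ => integrable_finset_sum _ (fun j3 _ => hint_ind k j1 j2 j3 i)))]
      have step1 : ∀ j1 ∈ Finset.Icc 1 (k - 1),
          ∫ ω, (∑ j2 ∈ Finset.Icc 1 (k - 1), ∑ j3 ∈ Finset.Icc 1 (k - 1),
            (if X n k ω = i ∧ X n j1 ω = i ∧ X n j2 ω = i ∧ X n j3 ω = i then (1 : ℝ) else 0)) ∂μ =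
          ∑ j2 ∈ Finset.Icc 1 (k - 1), ∑ j3 ∈ Finset.Icc 1 (k - 1),
            p n i * p n i ^ (({j1, j2, j3} : Finset ℕ).card) := by
        intro j1 hj1
        rw [integral_finset_sum _ (fun j2 _ => integrable_finset_sum _
          (fun j3 _ => hint_ind k j1 j2 j3 i))]
        refine Finset.sum_congr rfl fun j2 hj2 => ?_
        rw [integral_finset_sum _ (fun j3 _ => hint_ind k j1 j2 j3 i)]
        refine Finset.sum_congr rfl fun j3 hj3 => ?_
        rw [hint_val, hmeasval k j1 j2 j3 i hi (hkT j1 hj1 j2 hj2 j3 hj3)]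
      rw [Finset.sum_congr rfl step1]
      simp only [← Finset.mul_sum]
      rw [tripleSum (Finset.Icc 1 (k - 1)) (p n i), hTcard]
      have h0 := hq0 i hi
      field_simp
      ring
    rw [Finset.sum_congr rfl hsum_i]
    rw [Finset.sum_add_distrib, Finset.sum_add_distrib, Finset.sum_const, ← Finset.mul_sum,
      ← Finset.mul_sum, hp_sum n]
    have hMcard : ((Finset.Icc 1 (m n)).card : ℝ) = (m n : ℝ) := by
      rw [Nat.card_Icc]; simp
    rw [nsmul_eq_mul, hMcard, mul_one]
    rw [inv_pow]
    ring
  -- value of the second-moment integral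
  have hI : ∫ ω, ((p n (X n 1 ω))⁻¹) ^ 2 ∂μ = ∑ i ∈ Finset.Icc 1 (m n), (p n i)⁻¹ := by
    have hpt1 : ∀ ω, ((p n (X n 1 ω))⁻¹) ^ 2 =
        ∑ i ∈ Finset.Icc 1 (m n), (if X n 1 ω = i then ((p n i)⁻¹) ^ 2 else 0) := by
      intro ω
      rw [Finset.sum_ite_eq, if_pos (hX_range n 1 ω)]
    have hind1 : ∀ i : ℕ, (fun ω => if X n 1 ω = i then ((p n i)⁻¹) ^ 2 else 0) =
        Set.indicator (X n 1 ⁻¹' {i}) (fun _ => ((p n i)⁻¹) ^ 2) := by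
      intro i
      funext ω
      by_cases h : X n 1 ω = i <;> simp [Set.indicator_apply, h]
    rw [integral_congr_ae (Filter.Eventually.of_forall hpt1),
      integral_finset_sum _ (fun i _ => by
        rw [hind1 i]
        exact (integrable_indicator_iff (hX_meas n 1 (measurableSet_singleton i))).2
          (integrableOn_const (measure_ne_top μ _)))]
    refine Finset.sum_congr rfl fun i hi => ?_
    rw [hind1 i, integral_indicator_const _ (hX_meas n 1 (measurableSet_singleton i)),
      measureReal_def, hX_law n 1 i hi, ENNReal.toReal_ofReal (hq_nonneg i hi), smul_eq_mul]
    have h0 := hq0 i hi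
    rw [pow_two, ← mul_assoc, mul_inv_cancel₀ h0, one_mul]
  rw [hI, Finset.mul_sum]
  exact Finset.sum_congr rfl hik
end

section
/- For each n, E[(Σ_{1≤i<j≤n−1} (n−j)(I(X_{n,i} = X_{n,j})/p_n(X_{n,i}) − 1))²] = (m_n − 1) Σ_{1≤i<j≤n−1} (n−j)². -/
open MeasureTheory ProbabilityTheory Filter
open scoped BoundedContinuousFunction

noncomputable section WPSAux

variable {Ω : Type*} [MeasurableSpace Ω] {μ : Measure Ω} [IsProbabilityMeasure μ]

/-- The basic centered kernel. -/
def auxfWPS (P : ℕ → ℝ) (a b : ℕ) : ℝ := (if a = b then (1:ℝ) else 0) / P a - 1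

lemma csumWPS {M x : ℕ} (hx : x ∈ Finset.Icc 1 M) (g : ℕ → ℝ) :
    ∑ e ∈ Finset.Icc 1 M, (if x = e then (1:ℝ) else 0) * g e = g x := by
  have h : ∀ e ∈ Finset.Icc 1 M, (if x = e then (1:ℝ) else 0) * g e
      = if x = e then g e else 0 := fun e _ => by by_cases h : x = e <;> simp [h]
  rw [Finset.sum_congr rfl h, Finset.sum_ite_eq, if_pos hx]

lemma prodIndWPS {X : ℕ → Ω → ℕ} {P : ℕ → ℝ} {M : ℕ}
    (hX : ∀ k, Measurable (X k))
    (hind : iIndepFun X μ)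
    (hp : ∀ i ∈ Finset.Icc 1 M, 0 < P i)
    (hlaw : ∀ k, ∀ i ∈ Finset.Icc 1 M, μ (X k ⁻¹' {i}) = ENNReal.ofReal (P i))
    (t : Finset ℕ) (v : ℕ → ℕ) (hv : ∀ k ∈ t, v k ∈ Finset.Icc 1 M) :
    ∫ ω, ∏ k ∈ t, (if X k ω = v k then (1:ℝ) else 0) ∂μ = ∏ k ∈ t, P (v k) := by
  classical
  have hA : MeasurableSet (⋂ k ∈ t, X k ⁻¹' {v k}) :=
    MeasurableSet.biInter t.countable_toSet (fun k _ => (hX k) (measurableSet_singleton _))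
  have h1 : (fun ω => ∏ k ∈ t, (if X k ω = v k then (1:ℝ) else 0))
      = (⋂ k ∈ t, X k ⁻¹' {v k}).indicator (fun _ => (1:ℝ)) := by
    funext ω
    rw [Finset.prod_boole, Set.indicator_apply]
    refine if_congr ?_ rfl rfl
    simp [Set.mem_iInter]
  rw [h1, integral_indicator_const (1:ℝ) hA, measureReal_def,
    hind.measure_inter_preimage_eq_mul t (fun k _ => measurableSet_singleton _),
    smul_eq_mul, mul_one,
    Finset.prod_congr rfl (fun k hk => hlaw k (v k) (hv k hk)), ENNReal.toReal_prod]
  exact Finset.prod_congr rfl fun k hk => ENNReal.toReal_ofReal (hp _ (hv k hk)).le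

lemma collapse4WPS {X : ℕ → Ω → ℕ} {M : ℕ}
    (hrange : ∀ k ω, X k ω ∈ Finset.Icc 1 M)
    (i j k l : ℕ) (Φ : ℕ → ℕ → ℕ → ℕ → ℝ) :
    (fun ω : Ω => Φ (X i ω) (X j ω) (X k ω) (X l ω))
      = fun ω => ∑ a ∈ Finset.Icc 1 M, ∑ b ∈ Finset.Icc 1 M,
          ∑ c ∈ Finset.Icc 1 M, ∑ d ∈ Finset.Icc 1 M,
          (if X i ω = a then (1:ℝ) else 0) *
            ((if X j ω = b then (1:ℝ) else 0) *
              ((if X k ω = c then (1:ℝ) else 0) *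
                ((if X l ω = d then (1:ℝ) else 0) * Φ a b c d))) := by
  funext ω
  symm
  simp only [← Finset.mul_sum]
  simp only [csumWPS (hrange l ω), csumWPS (hrange k ω), csumWPS (hrange j ω),
    csumWPS (hrange i ω)]

lemma intIte4WPS {X : ℕ → Ω → ℕ} (hX : ∀ k, Measurable (X k))
    (i j k l a b c d : ℕ) (r : ℝ) :
    Integrable (fun ω =>
      (if X i ω = a then (1:ℝ) else 0) *
        ((if X j ω = b then (1:ℝ) else 0) *
          ((if X k ω = c then (1:ℝ) else 0) *
            ((if X l ω = d then (1:ℝ) else 0) * r)))) μ := by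
  have hs : MeasurableSet (X i ⁻¹' {a} ∩ (X j ⁻¹' {b} ∩ (X k ⁻¹' {c} ∩ X l ⁻¹' {d}))) :=
    ((hX i) (measurableSet_singleton a)).inter
      (((hX j) (measurableSet_singleton b)).inter
        (((hX k) (measurableSet_singleton c)).inter ((hX l) (measurableSet_singleton d))))
  refine ((integrable_const r).indicator hs).congr (Filter.Eventually.of_forall fun ω => ?_)
  by_cases hi : X i ω = a <;> by_cases hj : X j ω = b <;> by_cases hk : X k ω = c <;>
    by_cases hl : X l ω = d <;>
    simp [Set.indicator_apply, Set.mem_preimage, hi, hj, hk, hl]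

lemma integrableComp4WPS {X : ℕ → Ω → ℕ} {M : ℕ}
    (hX : ∀ k, Measurable (X k)) (hrange : ∀ k ω, X k ω ∈ Finset.Icc 1 M)
    (i j k l : ℕ) (Φ : ℕ → ℕ → ℕ → ℕ → ℝ) :
    Integrable (fun ω => Φ (X i ω) (X j ω) (X k ω) (X l ω)) μ := by
  rw [collapse4WPS hrange i j k l Φ]
  exact integrable_finset_sum _ fun a _ => integrable_finset_sum _ fun b _ =>
    integrable_finset_sum _ fun c _ => integrable_finset_sum _ fun d _ =>
      intIte4WPS hX i j k l a b c d (Φ a b c d)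

lemma E4WPS {X : ℕ → Ω → ℕ} {P : ℕ → ℝ} {M : ℕ}
    (hX : ∀ k, Measurable (X k))
    (hind : iIndepFun X μ)
    (hp : ∀ i ∈ Finset.Icc 1 M, 0 < P i)
    (hlaw : ∀ k, ∀ i ∈ Finset.Icc 1 M, μ (X k ⁻¹' {i}) = ENNReal.ofReal (P i))
    (hrange : ∀ k ω, X k ω ∈ Finset.Icc 1 M)
    {i j k l : ℕ} (hij : i ≠ j) (hik : i ≠ k) (hil : i ≠ l)
    (hjk : j ≠ k) (hjl : j ≠ l) (hkl : k ≠ l)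
    (Φ : ℕ → ℕ → ℕ → ℕ → ℝ) :
    ∫ ω, Φ (X i ω) (X j ω) (X k ω) (X l ω) ∂μ
      = ∑ a ∈ Finset.Icc 1 M, ∑ b ∈ Finset.Icc 1 M,
          ∑ c ∈ Finset.Icc 1 M, ∑ d ∈ Finset.Icc 1 M,
          P a * P b * P c * P d * Φ a b c d := by
  have hterm : ∀ a ∈ Finset.Icc 1 M, ∀ b ∈ Finset.Icc 1 M, ∀ c ∈ Finset.Icc 1 M,
      ∀ d ∈ Finset.Icc 1 M,
      ∫ ω, (if X i ω = a then (1:ℝ) else 0) *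
        ((if X j ω = b then (1:ℝ) else 0) *
          ((if X k ω = c then (1:ℝ) else 0) *
            ((if X l ω = d then (1:ℝ) else 0) * Φ a b c d))) ∂μ
      = P a * P b * P c * P d * Φ a b c d := by
    intro a ha b hb c hc d hd
    set v : ℕ → ℕ := fun x => if x = i then a else if x = j then b else if x = k then c else d
      with hv_def
    have hvi : v i = a := by simp [hv_def]
    have hvj : v j = b := by simp [hv_def, Ne.symm hij]
    have hvk : v k = c := by simp [hv_def, Ne.symm hik, Ne.symm hjk]
    have hvl : v l = d := by simp [hv_def, Ne.symm hil, Ne.symm hjl, Ne.symm hkl]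
    have hmem1 : i ∉ ({j, k, l} : Finset ℕ) := by simp [hij, hik, hil]
    have hmem2 : j ∉ ({k, l} : Finset ℕ) := by simp [hjk, hjl]
    have hv : ∀ x ∈ ({i, j, k, l} : Finset ℕ), v x ∈ Finset.Icc 1 M := by
      intro x hx
      simp only [Finset.mem_insert, Finset.mem_singleton] at hx
      rcases hx with rfl | rfl | rfl | rfl
      · rw [hvi]; exact ha
      · rw [hvj]; exact hb
      · rw [hvk]; exact hc
      · rw [hvl]; exact hd
    have hprod : (fun ω => (if X i ω = a then (1:ℝ) else 0) *
        ((if X j ω = b then (1:ℝ) else 0) *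
          ((if X k ω = c then (1:ℝ) else 0) *
            ((if X l ω = d then (1:ℝ) else 0) * Φ a b c d))))
        = fun ω => (∏ x ∈ ({i, j, k, l} : Finset ℕ),
            (if X x ω = v x then (1:ℝ) else 0)) * Φ a b c d := by
      funext ω
      rw [Finset.prod_insert hmem1, Finset.prod_insert hmem2, Finset.prod_pair hkl,
        hvi, hvj, hvk, hvl]
      ring
    rw [hprod, integral_mul_const, prodIndWPS hX hind hp hlaw _ v hv,
      Finset.prod_insert hmem1, Finset.prod_insert hmem2, Finset.prod_pair hkl,
      hvi, hvj, hvk, hvl]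
    ring
  rw [collapse4WPS hrange i j k l Φ,
    integral_finset_sum _ (fun a _ => integrable_finset_sum _ fun b _ =>
      integrable_finset_sum _ fun c _ => integrable_finset_sum _ fun d _ =>
        intIte4WPS hX i j k l a b c d (Φ a b c d))]
  refine Finset.sum_congr rfl fun a ha => ?_
  rw [integral_finset_sum _ (fun b _ => integrable_finset_sum _ fun c _ =>
    integrable_finset_sum _ fun d _ => intIte4WPS hX i j k l a b c d (Φ a b c d))]
  refine Finset.sum_congr rfl fun b hb => ?_
  rw [integral_finset_sum _ (fun c _ => integrable_finset_sum _ fun d _ =>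
    intIte4WPS hX i j k l a b c d (Φ a b c d))]
  refine Finset.sum_congr rfl fun c hc => ?_
  rw [integral_finset_sum _ (fun d _ => intIte4WPS hX i j k l a b c d (Φ a b c d))]
  exact Finset.sum_congr rfl fun d hd => hterm a ha b hb c hc d hd

lemma L1WPS {P : ℕ → ℝ} {M : ℕ} (hp : ∀ i ∈ Finset.Icc 1 M, 0 < P i)
    (hsum : ∑ i ∈ Finset.Icc 1 M, P i = 1) {a : ℕ} (ha : a ∈ Finset.Icc 1 M) :
    ∑ b ∈ Finset.Icc 1 M, P b * auxfWPS P a b = 0 := by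
  have h : ∀ b ∈ Finset.Icc 1 M, P b * auxfWPS P a b
      = (if a = b then P b / P a else 0) - P b := by
    intro b _
    unfold auxfWPS
    by_cases h : a = b <;> simp [h] <;> ring
  rw [Finset.sum_congr rfl h, Finset.sum_sub_distrib, Finset.sum_ite_eq, if_pos ha, hsum,
    div_self (hp a ha).ne', sub_self]

lemma L2WPS {P : ℕ → ℝ} {M : ℕ} (hp : ∀ i ∈ Finset.Icc 1 M, 0 < P i)
    (hsum : ∑ i ∈ Finset.Icc 1 M, P i = 1) {b : ℕ} (hb : b ∈ Finset.Icc 1 M) :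
    ∑ a ∈ Finset.Icc 1 M, P a * auxfWPS P a b = 0 := by
  have h : ∀ a ∈ Finset.Icc 1 M, P a * auxfWPS P a b
      = (if a = b then P a / P a else 0) - P a := by
    intro a _
    unfold auxfWPS
    by_cases h : a = b <;> simp [h] <;> ring
  rw [Finset.sum_congr rfl h, Finset.sum_sub_distrib, Finset.sum_ite_eq', if_pos hb, hsum,
    div_self (hp b hb).ne', sub_self]

lemma L3WPS {P : ℕ → ℝ} {M : ℕ} (hp : ∀ i ∈ Finset.Icc 1 M, 0 < P i)
    (hsum : ∑ i ∈ Finset.Icc 1 M, P i = 1) :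
    ∑ a ∈ Finset.Icc 1 M, ∑ b ∈ Finset.Icc 1 M, P a * P b * auxfWPS P a b ^ 2
      = (M : ℝ) - 1 := by
  have inner : ∀ a ∈ Finset.Icc 1 M,
      ∑ b ∈ Finset.Icc 1 M, P a * P b * auxfWPS P a b ^ 2 = 1 - P a := by
    intro a ha
    have hpa : P a ≠ 0 := (hp a ha).ne'
    have h1 : ∀ b ∈ Finset.Icc 1 M, P a * P b * auxfWPS P a b ^ 2
        = P a * P b + (if a = b then P a * P b * ((1 / P a - 1) ^ 2 - 1) else 0) := by
      intro b _
      unfold auxfWPS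
      by_cases h : a = b
      · simp only [h, if_pos rfl, if_true]
        ring
      · simp only [if_neg h]
        rw [zero_div]
        ring
    rw [Finset.sum_congr rfl h1, Finset.sum_add_distrib, Finset.sum_ite_eq, if_pos ha,
      ← Finset.mul_sum, hsum, mul_one]
    field_simp
    ring
  rw [Finset.sum_congr rfl inner, Finset.sum_sub_distrib, Finset.sum_const, hsum,
    Nat.card_Icc]
  simp

lemma keyWPS {X : ℕ → Ω → ℕ} {P : ℕ → ℝ} {M : ℕ}
    (hX : ∀ k, Measurable (X k))
    (hind : iIndepFun X μ)
    (hp : ∀ i ∈ Finset.Icc 1 M, 0 < P i)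
    (hsum : ∑ i ∈ Finset.Icc 1 M, P i = 1)
    (hlaw : ∀ k, ∀ i ∈ Finset.Icc 1 M, μ (X k ⁻¹' {i}) = ENNReal.ofReal (P i))
    (hrange : ∀ k ω, X k ω ∈ Finset.Icc 1 M)
    {i j k l : ℕ} (hij : i < j) (hkl : k < l) :
    ∫ ω, auxfWPS P (X i ω) (X j ω) * auxfWPS P (X k ω) (X l ω) ∂μ
      = if i = k ∧ j = l then (M : ℝ) - 1 else 0 := by
  set S := Finset.Icc 1 M with hS
  have hone : ∀ (A : ℝ), ∑ d ∈ S, A * P d = A := fun A => by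
    rw [← Finset.mul_sum, hsum, mul_one]
  by_cases hik : i = k
  · by_cases hjl : j = l
    · -- diagonal case
      subst hik; subst hjl
      rw [if_pos ⟨rfl, rfl⟩]
      have e : (fun ω => auxfWPS P (X i ω) (X j ω) * auxfWPS P (X i ω) (X j ω))
          = fun ω => (fun a b c d => auxfWPS P a b ^ 2) (X i ω) (X j ω) (X (i+j+1) ω)
              (X (i+j+2) ω) :=
        funext fun ω => by ring
      rw [e, E4WPS (i := i) (j := j) (k := i+j+1) (l := i+j+2)
        (Φ := fun a b c d => auxfWPS P a b ^ 2) hX hind hp hlaw hrange hij.ne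
        (by omega) (by omega) (by omega) (by omega) (by omega)]
      have step : ∀ a ∈ S, ∀ b ∈ S,
          ∑ c ∈ S, ∑ d ∈ S, P a * P b * P c * P d * auxfWPS P a b ^ 2
            = P a * P b * auxfWPS P a b ^ 2 := by
        intro a _ b _
        have hc : ∀ c ∈ S, ∑ d ∈ S, P a * P b * P c * P d * auxfWPS P a b ^ 2
            = (P a * P b * auxfWPS P a b ^ 2) * P c := by
          intro c _
          rw [show (∑ d ∈ S, P a * P b * P c * P d * auxfWPS P a b ^ 2)
              = ∑ d ∈ S, (P a * P b * P c * auxfWPS P a b ^ 2) * P d from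
            Finset.sum_congr rfl fun d _ => by ring, hone]
          ring
        rw [Finset.sum_congr rfl hc, hone]
      calc ∑ a ∈ S, ∑ b ∈ S, ∑ c ∈ S, ∑ d ∈ S,
              P a * P b * P c * P d * ((fun a b c d => auxfWPS P a b ^ 2) a b c d)
          = ∑ a ∈ S, ∑ b ∈ S, P a * P b * auxfWPS P a b ^ 2 := by
            refine Finset.sum_congr rfl fun a ha => Finset.sum_congr rfl fun b hb => ?_
            exact step a ha b hb
        _ = (M : ℝ) - 1 := L3WPS hp hsum
    · -- i = k, j ≠ l
      subst hik
      rw [if_neg (by tauto)]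
      have e : (fun ω => auxfWPS P (X i ω) (X j ω) * auxfWPS P (X i ω) (X l ω))
          = fun ω => (fun a b c d => auxfWPS P a b * auxfWPS P a c)
              (X i ω) (X j ω) (X l ω) (X (i+j+l+1) ω) := funext fun ω => rfl
      rw [e, E4WPS (i := i) (j := j) (k := l) (l := i+j+l+1)
        (Φ := fun a b c d => auxfWPS P a b * auxfWPS P a c) hX hind hp hlaw hrange hij.ne
        hkl.ne (by omega) hjl (by omega) (by omega)]
      refine Finset.sum_eq_zero fun a ha => Finset.sum_eq_zero fun b hb => ?_
      have hc : ∀ c ∈ S, ∑ d ∈ S,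
          P a * P b * P c * P d * (auxfWPS P a b * auxfWPS P a c)
          = (P a * P b * auxfWPS P a b) * (P c * auxfWPS P a c) := by
        intro c _
        rw [show (∑ d ∈ S, P a * P b * P c * P d * (auxfWPS P a b * auxfWPS P a c))
            = ∑ d ∈ S, ((P a * P b * P c) * (auxfWPS P a b * auxfWPS P a c)) * P d from
          Finset.sum_congr rfl fun d _ => by ring, hone]
        ring
      rw [Finset.sum_congr rfl hc, ← Finset.mul_sum, L1WPS hp hsum ha, mul_zero]
  · by_cases hjl : j = l
    · -- j = l, i ≠ k
      subst hjl
      rw [if_neg (by tauto)]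
      have e : (fun ω => auxfWPS P (X i ω) (X j ω) * auxfWPS P (X k ω) (X j ω))
          = fun ω => (fun a b c d => auxfWPS P b a * auxfWPS P c a)
              (X j ω) (X i ω) (X k ω) (X (i+j+k+1) ω) := funext fun ω => rfl
      rw [e, E4WPS (i := j) (j := i) (k := k) (l := i+j+k+1)
        (Φ := fun a b c d => auxfWPS P b a * auxfWPS P c a) hX hind hp hlaw hrange
        (Ne.symm hij.ne) (Ne.symm hkl.ne) (by omega) hik (by omega) (by omega)]
      refine Finset.sum_eq_zero fun a ha => Finset.sum_eq_zero fun b hb => ?_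
      have hc : ∀ c ∈ S, ∑ d ∈ S,
          P a * P b * P c * P d * (auxfWPS P b a * auxfWPS P c a)
          = (P a * P b * auxfWPS P b a) * (P c * auxfWPS P c a) := by
        intro c _
        rw [show (∑ d ∈ S, P a * P b * P c * P d * (auxfWPS P b a * auxfWPS P c a))
            = ∑ d ∈ S, ((P a * P b * P c) * (auxfWPS P b a * auxfWPS P c a)) * P d from
          Finset.sum_congr rfl fun d _ => by ring, hone]
        ring
      rw [Finset.sum_congr rfl hc, ← Finset.mul_sum, L2WPS hp hsum ha, mul_zero]
    · by_cases hjk : j = k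
      · -- j = k
        subst hjk
        rw [if_neg (by tauto)]
        have e : (fun ω => auxfWPS P (X i ω) (X j ω) * auxfWPS P (X j ω) (X l ω))
            = fun ω => (fun a b c d => auxfWPS P a b * auxfWPS P b c)
                (X i ω) (X j ω) (X l ω) (X (i+j+l+1) ω) := funext fun ω => rfl
        rw [e, E4WPS (i := i) (j := j) (k := l) (l := i+j+l+1)
          (Φ := fun a b c d => auxfWPS P a b * auxfWPS P b c) hX hind hp hlaw hrange hij.ne
          (by omega) (by omega) hkl.ne (by omega) (by omega)]
        refine Finset.sum_eq_zero fun a ha => Finset.sum_eq_zero fun b hb => ?_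
        have hc : ∀ c ∈ S, ∑ d ∈ S,
            P a * P b * P c * P d * (auxfWPS P a b * auxfWPS P b c)
            = (P a * P b * auxfWPS P a b) * (P c * auxfWPS P b c) := by
          intro c _
          rw [show (∑ d ∈ S, P a * P b * P c * P d * (auxfWPS P a b * auxfWPS P b c))
              = ∑ d ∈ S, ((P a * P b * P c) * (auxfWPS P a b * auxfWPS P b c)) * P d from
            Finset.sum_congr rfl fun d _ => by ring, hone]
          ring
        rw [Finset.sum_congr rfl hc, ← Finset.mul_sum, L1WPS hp hsum hb, mul_zero]
      · by_cases hil : i = l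
        · -- i = l
          subst hil
          rw [if_neg (by tauto)]
          have e : (fun ω => auxfWPS P (X i ω) (X j ω) * auxfWPS P (X k ω) (X i ω))
              = fun ω => (fun a b c d => auxfWPS P b c * auxfWPS P a b)
                  (X k ω) (X i ω) (X j ω) (X (i+j+k+1) ω) := funext fun ω => rfl
          rw [e, E4WPS (i := k) (j := i) (k := j) (l := i+j+k+1)
            (Φ := fun a b c d => auxfWPS P b c * auxfWPS P a b) hX hind hp hlaw hrange hkl.ne
            (by omega) (by omega) hij.ne (by omega) (by omega)]
          refine Finset.sum_eq_zero fun a ha => Finset.sum_eq_zero fun b hb => ?_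
          have hc : ∀ c ∈ S, ∑ d ∈ S,
              P a * P b * P c * P d * (auxfWPS P b c * auxfWPS P a b)
              = (P a * P b * auxfWPS P a b) * (P c * auxfWPS P b c) := by
            intro c _
            rw [show (∑ d ∈ S, P a * P b * P c * P d * (auxfWPS P b c * auxfWPS P a b))
                = ∑ d ∈ S, ((P a * P b * P c) * (auxfWPS P b c * auxfWPS P a b)) * P d from
              Finset.sum_congr rfl fun d _ => by ring, hone]
            ring
          rw [Finset.sum_congr rfl hc, ← Finset.mul_sum, L1WPS hp hsum hb, mul_zero]
        · -- all distinct
          rw [if_neg (by tauto)]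
          have e : (fun ω => auxfWPS P (X i ω) (X j ω) * auxfWPS P (X k ω) (X l ω))
              = fun ω => (fun a b c d => auxfWPS P a b * auxfWPS P c d)
                  (X i ω) (X j ω) (X k ω) (X l ω) := funext fun ω => rfl
          rw [e, E4WPS (i := i) (j := j) (k := k) (l := l)
            (Φ := fun a b c d => auxfWPS P a b * auxfWPS P c d) hX hind hp hlaw hrange hij.ne
            hik hil hjk hjl hkl.ne]
          refine Finset.sum_eq_zero fun a ha => Finset.sum_eq_zero fun b hb =>
            Finset.sum_eq_zero fun c hc => ?_
          rw [show (∑ d ∈ S, P a * P b * P c * P d * (auxfWPS P a b * auxfWPS P c d))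
              = ∑ d ∈ S, ((P a * P b * P c * auxfWPS P a b)) * (P d * auxfWPS P c d) from
            Finset.sum_congr rfl fun d _ => by ring, ← Finset.mul_sum, L1WPS hp hsum hc,
            mul_zero]

end WPSAux

theorem weighted_pair_sum_second_moment
    {Ω : Type*} [MeasurableSpace Ω] (μ : Measure Ω) [IsProbabilityMeasure μ]
    (m : ℕ → ℕ) (p : ℕ → ℕ → ℝ) (X : ℕ → ℕ → Ω → ℕ)
    (hp_pos : ∀ n : ℕ, ∀ i ∈ Finset.Icc 1 (m n), 0 < p n i)
    (hp_sum : ∀ n : ℕ, ∑ i ∈ Finset.Icc 1 (m n), p n i = 1)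
    (hX_meas : ∀ n k, Measurable (X n k))
    (hX_range : ∀ n k ω, X n k ω ∈ Finset.Icc 1 (m n))
    (hX_law : ∀ n k, ∀ i ∈ Finset.Icc 1 (m n), μ (X n k ⁻¹' {i}) = ENNReal.ofReal (p n i))
    (hX_indep : ∀ n : ℕ, iIndepFun (X n) μ)
    :
    ∀ n : ℕ, ∫ ω, (∑ j ∈ Finset.Icc 1 (n - 1), ∑ i ∈ Finset.Icc 1 (j - 1),
        ((n : ℝ) - (j : ℝ)) *
          ((if X n i ω = X n j ω then (1 : ℝ) else 0) / p n (X n i ω) - 1)) ^ 2 ∂μ =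
      ((m n : ℝ) - 1) * ∑ j ∈ Finset.Icc 1 (n - 1), ∑ i ∈ Finset.Icc 1 (j - 1),
        ((n : ℝ) - (j : ℝ)) ^ 2 := by
  intro n
  set T := (Finset.Icc 1 (n - 1)).sigma (fun j => Finset.Icc 1 (j - 1)) with hT
  have hmemT : ∀ q ∈ T, q.2 < q.1 := by
    intro q hq
    rw [hT, Finset.mem_sigma] at hq
    obtain ⟨h1, h2⟩ := hq
    rw [Finset.mem_Icc] at h1 h2
    omega
  -- rewrite integrand
  have hY : ∀ i j (ω : Ω), ((if X n i ω = X n j ω then (1:ℝ) else 0) / p n (X n i ω) - 1)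
      = auxfWPS (p n) (X n i ω) (X n j ω) := fun _ _ _ => rfl
  have hfun : (fun ω => (∑ j ∈ Finset.Icc 1 (n - 1), ∑ i ∈ Finset.Icc 1 (j - 1),
        ((n : ℝ) - (j : ℝ)) *
          ((if X n i ω = X n j ω then (1 : ℝ) else 0) / p n (X n i ω) - 1)) ^ 2)
      = fun ω => ∑ q ∈ T, ∑ r ∈ T,
          (((n : ℝ) - (q.1 : ℝ)) * ((n : ℝ) - (r.1 : ℝ))) *
            (auxfWPS (p n) (X n q.2 ω) (X n q.1 ω) * auxfWPS (p n) (X n r.2 ω) (X n r.1 ω)) := by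
    funext ω
    simp only [hY]
    rw [show (∑ j ∈ Finset.Icc 1 (n - 1), ∑ i ∈ Finset.Icc 1 (j - 1),
        ((n : ℝ) - (j : ℝ)) * auxfWPS (p n) (X n i ω) (X n j ω))
      = ∑ q ∈ T, ((n : ℝ) - (q.1 : ℝ)) * auxfWPS (p n) (X n q.2 ω) (X n q.1 ω) from
      Finset.sum_sigma' _ _ _]
    rw [pow_two, Finset.sum_mul_sum]
    exact Finset.sum_congr rfl fun q _ => Finset.sum_congr rfl fun r _ => by ring
  rw [hfun]
  have hintall : ∀ (q r : (_ : ℕ) × ℕ), Integrable (fun ω =>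
      (((n : ℝ) - (q.1 : ℝ)) * ((n : ℝ) - (r.1 : ℝ))) *
        (auxfWPS (p n) (X n q.2 ω) (X n q.1 ω) * auxfWPS (p n) (X n r.2 ω) (X n r.1 ω))) μ := by
    intro q r
    exact integrableComp4WPS (hX_meas n) (hX_range n) q.2 q.1 r.2 r.1
      (fun a b c d => (((n : ℝ) - (q.1 : ℝ)) * ((n : ℝ) - (r.1 : ℝ))) *
        (auxfWPS (p n) a b * auxfWPS (p n) c d))
  rw [integral_finset_sum _ (fun q _ => integrable_finset_sum _ fun r _ => hintall q r)]
  have hstep : ∀ q ∈ T, (∫ ω, ∑ r ∈ T,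
      (((n : ℝ) - (q.1 : ℝ)) * ((n : ℝ) - (r.1 : ℝ))) *
        (auxfWPS (p n) (X n q.2 ω) (X n q.1 ω) * auxfWPS (p n) (X n r.2 ω) (X n r.1 ω)) ∂μ)
      = ((n : ℝ) - (q.1 : ℝ)) * ((n : ℝ) - (q.1 : ℝ)) * ((m n : ℝ) - 1) := by
    intro q hq
    rw [integral_finset_sum _ (fun r _ => hintall q r)]
    have hval : ∀ r ∈ T, (∫ ω,
        (((n : ℝ) - (q.1 : ℝ)) * ((n : ℝ) - (r.1 : ℝ))) *
          (auxfWPS (p n) (X n q.2 ω) (X n q.1 ω) * auxfWPS (p n) (X n r.2 ω) (X n r.1 ω)) ∂μ)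
        = if r = q then ((n : ℝ) - (q.1 : ℝ)) * ((n : ℝ) - (q.1 : ℝ)) * ((m n : ℝ) - 1)
          else 0 := by
      intro r hr
      rw [integral_const_mul, keyWPS (hX_meas n) (hX_indep n) (hp_pos n) (hp_sum n) (hX_law n)
        (hX_range n) (hmemT q hq) (hmemT r hr)]
      by_cases hrq : r = q
      · subst hrq
        rw [if_pos ⟨rfl, rfl⟩, if_pos rfl]
      · have hcond : ¬(q.2 = r.2 ∧ q.1 = r.1) := by
          rintro ⟨h1, h2⟩
          exact hrq (Sigma.ext h2.symm (heq_of_eq h1.symm))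
        rw [if_neg hcond, if_neg hrq, mul_zero]
    rw [Finset.sum_congr rfl hval, Finset.sum_ite_eq', if_pos hq]
  rw [Finset.sum_congr rfl hstep]
  rw [show (∑ j ∈ Finset.Icc 1 (n - 1), ∑ i ∈ Finset.Icc 1 (j - 1),
      ((n : ℝ) - (j : ℝ)) ^ 2)
    = ∑ q ∈ T, ((n : ℝ) - (q.1 : ℝ)) ^ 2 from Finset.sum_sigma' _ _ _]
  rw [Finset.mul_sum]
  exact Finset.sum_congr rfl fun q _ => by ring
end
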